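/- arXiv:2305.14297 — 10 statements merged into one kernel-verified Lean document; each statement's English description precedes it below -/
import Mathlib

section
/- Let (a_{ij}), b_i, c_i = Σ_j a_{ij} be the coefficients of an explicit 4-stage Runge–Kutta method of order 4. If real numbers Γ₂, Γ₃, Γ₄ satisfy the seven equations: Σ_{i=2}^4 b_i c_i (Γ_i − 1) = 0; Σ_{i=2}^4 b_i c_i² (Γ_i² − 1) = 0; Σ_{i,j=2}^4 b_i a_{ij} c_j (Γ_i Γ_j − 1) = 0; Σ_{i,j=2}^4 b_i c_i a_{ij} c_j (Γ_i² Γ_j − 1) = 0; Σ_{i=2}^4 b_i c_i³ (Γ_i³ − 1) = 0; Γ₄ Γ₃ Γ₂ = 1; and Σ_{i,j=2}^4 b_i a_{ij} c_j² (Γ_i Γ_j² − 1) = 0, then Γ₂ = Γ₃ = Γ₄ = 1. -/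
open Finset

/-- The Gröbner-basis step in Lemma 6 (4th order): for an explicit 4-stage
Runge–Kutta method of order 4, the only solution of the reduced polynomial
system \eqref{eq:redPGS_cond4} is Γ₂ = Γ₃ = Γ₄ = 1.
Here `Γ : Fin 4 → ℝ` with `Γ i` for `i ≠ 0` playing the roles of Γ₂, Γ₃, Γ₄. -/
theorem stmt3
    (a : Fin 4 → Fin 4 → ℝ) (b c : Fin 4 → ℝ)
    (hexp : ∀ i j : Fin 4, i ≤ j → a i j = 0)
    (hc : ∀ i, c i = ∑ j, a i j)
    (hord1 : ∑ i, b i = 1)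
    (hord2 : ∑ i, b i * c i = 1 / 2)
    (hord3 : ∑ i, b i * c i ^ 2 = 1 / 3)
    (hord4 : ∑ i, ∑ j, b i * a i j * c j = 1 / 6)
    (hord5 : ∑ i, b i * c i ^ 3 = 1 / 4)
    (hord6 : ∑ i, ∑ j, b i * c i * a i j * c j = 1 / 8)
    (hord7 : ∑ i, ∑ j, b i * a i j * c j ^ 2 = 1 / 12)
    (hord8 : ∑ i, ∑ j, ∑ k, b i * a i j * a j k * c k = 1 / 24)
    (Γ : Fin 4 → ℝ)
    (e1 : ∑ i ∈ Finset.univ.filter (fun i : Fin 4 => i ≠ 0),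
      b i * c i * (Γ i - 1) = 0)
    (e2 : ∑ i ∈ Finset.univ.filter (fun i : Fin 4 => i ≠ 0),
      b i * c i ^ 2 * (Γ i ^ 2 - 1) = 0)
    (e3 : ∑ i ∈ Finset.univ.filter (fun i : Fin 4 => i ≠ 0),
      ∑ j ∈ Finset.univ.filter (fun j : Fin 4 => j ≠ 0),
      b i * a i j * c j * (Γ i * Γ j - 1) = 0)
    (e4 : ∑ i ∈ Finset.univ.filter (fun i : Fin 4 => i ≠ 0),
      ∑ j ∈ Finset.univ.filter (fun j : Fin 4 => j ≠ 0),
      b i * c i * a i j * c j * (Γ i ^ 2 * Γ j - 1) = 0)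
    (e5 : ∑ i ∈ Finset.univ.filter (fun i : Fin 4 => i ≠ 0),
      b i * c i ^ 3 * (Γ i ^ 3 - 1) = 0)
    (e6 : Γ 3 * Γ 2 * Γ 1 = 1)
    (e7 : ∑ i ∈ Finset.univ.filter (fun i : Fin 4 => i ≠ 0),
      ∑ j ∈ Finset.univ.filter (fun j : Fin 4 => j ≠ 0),
      b i * a i j * c j ^ 2 * (Γ i * Γ j ^ 2 - 1) = 0) :
    ∀ i : Fin 4, i ≠ 0 → Γ i = 1 := by
  
  -- zero entries of a
  have z00 : a 0 0 = 0 := hexp 0 0 (by decide)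
  have z01 : a 0 1 = 0 := hexp 0 1 (by decide)
  have z02 : a 0 2 = 0 := hexp 0 2 (by decide)
  have z03 : a 0 3 = 0 := hexp 0 3 (by decide)
  have z11 : a 1 1 = 0 := hexp 1 1 (by decide)
  have z12 : a 1 2 = 0 := hexp 1 2 (by decide)
  have z13 : a 1 3 = 0 := hexp 1 3 (by decide)
  have z22 : a 2 2 = 0 := hexp 2 2 (by decide)
  have z23 : a 2 3 = 0 := hexp 2 3 (by decide)
  have z33 : a 3 3 = 0 := hexp 3 3 (by decide)
  have hc0 : c 0 = 0 := by
    rw [hc 0, Fin.sum_univ_four, z00, z01, z02, z03]; ring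
  -- expand the filtered sums
  have hf : Finset.univ.filter (fun i : Fin 4 => i ≠ 0) = {1,2,3} := by decide
  have hs : ∀ f : Fin 4 → ℝ, ∑ i ∈ ({1,2,3} : Finset (Fin 4)), f i = f 1 + f 2 + f 3 := by
    intro f
    rw [show ({1,2,3} : Finset (Fin 4)) = insert 1 (insert 2 {3}) from rfl,
      Finset.sum_insert (by decide), Finset.sum_insert (by decide), Finset.sum_singleton]
    ring
  rw [hf] at e1 e2 e3 e4 e5 e7
  simp only [hs] at e1 e2 e3 e4 e5 e7
  simp only [Fin.sum_univ_four] at hord2 hord3 hord4 hord5 hord6 hord7 hord8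
  simp only [z00, z01, z02, z03, z11, z12, z13, z22, z23, z33, hc0, mul_zero, zero_mul,
    add_zero, zero_add] at hord2 hord3 hord4 hord5 hord6 hord7 hord8 e1 e2 e3 e4 e5 e7
  -- scalar order conditions
  have hM1 : b 1 * c 1 + b 2 * c 2 + b 3 * c 3 = 1/2 := by linear_combination hord2
  have hM2 : b 1 * c 1^2 + b 2 * c 2^2 + b 3 * c 3^2 = 1/3 := by linear_combination hord3
  have hM3 : b 1 * c 1^3 + b 2 * c 2^3 + b 3 * c 3^3 = 1/4 := by linear_combination hord5
  have hC1 : b 2 * (a 2 1) * c 1 + (b 3 * a 3 1) * c 1 + (b 3 * a 3 2) * c 2 = 1/6 := by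
    linear_combination hord4
  have hC2 : b 2 * (a 2 1) * c 1 * c 2 + (b 3 * a 3 1) * c 1 * c 3 + (b 3 * a 3 2) * c 2 * c 3 = 1/8 := by
    linear_combination hord6
  have hC3 : b 2 * (a 2 1) * c 1^2 + (b 3 * a 3 1) * c 1^2 + (b 3 * a 3 2) * c 2^2 = 1/12 := by
    linear_combination hord7
  have hC4 : (b 3 * a 3 2) * (a 2 1) * c 1 = 1/24 := by linear_combination hord8
  -- hatted (Γ-scaled) order conditions
  have hM1h : b 1 * (Γ 1 * c 1) + b 2 * (Γ 2 * c 2) + b 3 * (Γ 3 * c 3) = 1/2 := by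
    linear_combination e1 + hM1
  have hM2h : b 1 * (Γ 1 * c 1)^2 + b 2 * (Γ 2 * c 2)^2 + b 3 * (Γ 3 * c 3)^2 = 1/3 := by
    linear_combination e2 + hM2
  have hM3h : b 1 * (Γ 1 * c 1)^3 + b 2 * (Γ 2 * c 2)^3 + b 3 * (Γ 3 * c 3)^3 = 1/4 := by
    linear_combination e5 + hM3
  have hC1h : b 2 * (Γ 2 * a 2 1) * (Γ 1 * c 1) + (Γ 3 * (b 3 * a 3 1)) * (Γ 1 * c 1)
      + (Γ 3 * (b 3 * a 3 2)) * (Γ 2 * c 2) = 1/6 := by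
    linear_combination e3 + hC1
  have hC2h : b 2 * (Γ 2 * a 2 1) * (Γ 1 * c 1) * (Γ 2 * c 2)
      + (Γ 3 * (b 3 * a 3 1)) * (Γ 1 * c 1) * (Γ 3 * c 3)
      + (Γ 3 * (b 3 * a 3 2)) * (Γ 2 * c 2) * (Γ 3 * c 3) = 1/8 := by
    linear_combination e4 + hC2
  have hC3h : b 2 * (Γ 2 * a 2 1) * (Γ 1 * c 1)^2 + (Γ 3 * (b 3 * a 3 1)) * (Γ 1 * c 1)^2
      + (Γ 3 * (b 3 * a 3 2)) * (Γ 2 * c 2)^2 = 1/12 := by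
    linear_combination e7 + hC3
  have hC4h : (Γ 3 * (b 3 * a 3 2)) * (Γ 2 * a 2 1) * (Γ 1 * c 1) = 1/24 := by
    linear_combination (Γ 3 * Γ 2 * Γ 1) * hC4 + (1/24) * e6
  -- main certificates
  have hc4 : c 3 = 1 := by
    linear_combination (144 * c 1 * c 3 * a 2 1 * (b 3 * a 3 2)) * hM1 + ((-144) * c 1 * a 2 1 * (b 3 * a 3 2) + (-144) * c 3 * a 2 1 * (b 3 * a 3 2)) * hM2 + (144 * a 2 1 * (b 3 * a 3 2)) * hM3 + ((-3456) * c 1 * c 2 * c 3 * a 2 1 * (b 3 * a 3 2) * (b 3 * a 3 2) + 3456 * c 2 * c 2 * c 3 * a 2 1 * (b 3 * a 3 2) * (b 3 * a 3 2) + (-576) * c 1 * c 3 * a 2 1 * (b 3 * a 3 2) + 432 * c 1 * a 2 1 * (b 3 * a 3 2)) * hC1 + (3456 * c 1 * c 2 * a 2 1 * (b 3 * a 3 2) * (b 3 * a 3 2) + (-3456) * c 2 * c 2 * a 2 1 * (b 3 * a 3 2) * (b 3 * a 3 2)) * hC2 + (576 * c 3 * a 2 1 * (b 3 * a 3 2)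 + (-432) * a 2 1 * (b 3 * a 3 2)) * hC3 + ((-3456) * b 2 * c 1 * c 2 * c 2 * a 2 1 * (b 3 * a 3 2) + 3456 * b 2 * c 2 * c 2 * c 2 * a 2 1 * (b 3 * a 3 2) + 3456 * b 2 * c 1 * c 2 * c 3 * a 2 1 * (b 3 * a 3 2) + (-3456) * b 2 * c 2 * c 2 * c 3 * a 2 1 * (b 3 * a 3 2) + (-24) * c 3 + 24) * hC4
  have hg4 : Γ 3 * c 3 = 1 := by
    linear_combination (144 * (Γ 1 * c 1) * (Γ 3 * c 3) * (Γ 2 * a 2 1) * (Γ 3 * (b 3 * a 3 2))) * hM1h + ((-144) * (Γ 1 * c 1) * (Γ 2 * a 2 1) * (Γ 3 * (b 3 * a 3 2)) + (-144) * (Γ 3 * c 3) * (Γ 2 * a 2 1) * (Γ 3 * (b 3 * a 3 2))) * hM2h + (144 * (Γ 2 * a 2 1) * (Γ 3 * (b 3 * a 3 2))) * hM3h + ((-3456) * (Γ 1 * c 1) * (Γ 2 * c 2) * (Γ 3 * c 3) * (Γ 2 * a 2 1) * (Γ 3 * (b 3 * a 3 2)) * (Γ 3 * (b 3 * a 3 2))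 + 3456 * (Γ 2 * c 2) * (Γ 2 * c 2) * (Γ 3 * c 3) * (Γ 2 * a 2 1) * (Γ 3 * (b 3 * a 3 2)) * (Γ 3 * (b 3 * a 3 2)) + (-576) * (Γ 1 * c 1) * (Γ 3 * c 3) * (Γ 2 * a 2 1) * (Γ 3 * (b 3 * a 3 2)) + 432 * (Γ 1 * c 1) * (Γ 2 * a 2 1) * (Γ 3 * (b 3 * a 3 2))) * hC1h + (3456 * (Γ 1 * c 1) * (Γ 2 * c 2) * (Γ 2 * a 2 1) * (Γ 3 * (b 3 * a 3 2)) * (Γ 3 * (b 3 * a 3 2)) + (-3456) * (Γ 2 * c 2) * (Γ 2 * c 2) * (Γ 2 * a 2 1) * (Γ 3 * (b 3 * a 3 2)) * (Γ 3 * (b 3 * a 3 2))) * hC2h + (576 * (Γ 3 * c 3) * (Γ 2 * a 2 1) * (Γ 3 * (b 3 * a 3 2)) + (-432) * (Γ 2 * a 2 1) * (Γ 3 * (b 3 * a 3 2))) * hC3h + ((-3456) * b 2 * (Γ 1 * c 1) * (Γ 2 * c 2) * (Γ 2 * c 2) * (Γ 2 * a 2 1) * (Γ 3 * (b 3 * a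 3 2)) + 3456 * b 2 * (Γ 2 * c 2) * (Γ 2 * c 2) * (Γ 2 * c 2) * (Γ 2 * a 2 1) * (Γ 3 * (b 3 * a 3 2)) + 3456 * b 2 * (Γ 1 * c 1) * (Γ 2 * c 2) * (Γ 3 * c 3) * (Γ 2 * a 2 1) * (Γ 3 * (b 3 * a 3 2)) + (-3456) * b 2 * (Γ 2 * c 2) * (Γ 2 * c 2) * (Γ 3 * c 3) * (Γ 2 * a 2 1) * (Γ 3 * (b 3 * a 3 2)) + (-24) * (Γ 3 * c 3) + 24) * hC4h
  have hG4 : Γ 3 = 1 := by rw [hc4, mul_one] at hg4; exact hg4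
  have hP2 : b 2 * (c 3 - c 2) = (b 3 * a 3 2) * (4 * c 3 - 3) := by
    linear_combination (24 * c 3 * (b 3 * a 3 2)) * hC1 + ((-24) * (b 3 * a 3 2)) * hC2 + (24 * b 2 * c 2 + (-24) * b 2 * c 3) * hC4
  have hP2h : b 2 * (Γ 3 * c 3 - Γ 2 * c 2)
      = (Γ 3 * (b 3 * a 3 2)) * (4 * (Γ 3 * c 3) - 3) := by
    linear_combination (24 * (Γ 3 * c 3) * (Γ 3 * (b 3 * a 3 2))) * hC1h + ((-24) * (Γ 3 * (b 3 * a 3 2))) * hC2h + (24 * b 2 * (Γ 2 * c 2) + (-24) * b 2 * (Γ 3 * c 3)) * hC4h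
  have hkey : (b 2 * c 2) * (Γ 2 - 1) = 0 := by
    rw [hc4] at hP2
    rw [hg4, hG4] at hP2h
    linear_combination hP2 - hP2h
  have hW : b 3 * a 3 2 ≠ 0 := by
    intro h
    have : (0:ℝ) = 1/24 := by linear_combination hC4 - (a 2 1 * c 1) * h
    norm_num at this
  have hB2 : b 2 ≠ 0 := by
    intro h
    apply hW
    rw [hc4] at hP2
    linear_combination (1 - c 2) * h - hP2
  by_cases hc2z : c 2 = 0
  · -- c3 = 0 case
    have hc1half : c 1 = 1/2 := by
      rw [hc2z] at hC1 hC3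
      linear_combination 6 * hC3 - 6 * c 1 * hC1
    have hg2c : Γ 1 * c 1 = 1/2 := by
      rw [hc2z] at hC1h hC3h
      linear_combination 6 * hC3h - 6 * (Γ 1 * c 1) * hC1h
    have hG2 : Γ 1 = 1 := by
      rw [hc1half] at hg2c; linarith
    have hG3 : Γ 2 = 1 := by
      rw [hG4, hG2] at e6; linarith [e6]
    intro i hi
    fin_cases i
    · exact absurd rfl hi
    · exact hG2
    · exact hG3
    · exact hG4
  · have hG3 : Γ 2 = 1 := by
      have h2 := mul_ne_zero hB2 hc2z
      have := (mul_eq_zero.mp hkey).resolve_left h2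
      linarith [this]
    have hG2 : Γ 1 = 1 := by
      rw [hG4, hG3] at e6; linarith [e6]
    intro i hi
    fin_cases i
    · exact absurd rfl hi
    · exact hG2
    · exact hG3
    · exact hG4
end

section
/- Let d ≥ 1, let (a_{ij}, b_i) be the coefficients of an explicit s-stage Runge–Kutta method with Σ_i b_i = 1, let φ_2,…,φ_s, φ_{out} : ℝ^d × ℝ → ℝ, fix y ∈ ℝ^d, and assume φ_i(y,h) = O(1) as h → 0⁺ for i = 2,…,s. Then the following are equivalent: (i) for every globally Lipschitz F : ℝ^d → ℝ^d of class C², and for every function u : ℝ → ℝ^d with u(0) = y and u'(t) = F(u(t)) for all t, one has ‖G_F(y,h) − u(h)‖ = O(h²) as h → 0⁺; (ii) φ_{out}(y,h) = 1 + O(h) as h → 0⁺. -/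
open Topology Asymptotics Filter Finset

section Aux

variable {d : ℕ}

/-- Lipschitz composition preserves bigO. -/
lemma lip_bigO {α : Type*} {l : Filter α} {F : (Fin d → ℝ) → (Fin d → ℝ)} {K : NNReal}
    (hF : LipschitzWith K F) {y : Fin d → ℝ} {Y : α → Fin d → ℝ} {g : α → ℝ}
    (h : (fun h => Y h - y) =O[l] g) :
    (fun h => F (Y h) - F y) =O[l] g := by
  refine IsBigO.trans ?_ h
  refine isBigO_iff.2 ⟨K, Eventually.of_forall fun x => ?_⟩
  have := hF.dist_le_mul (Y x) y
  simpa [dist_eq_norm] using this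

lemma h_bigO_one : (fun h : ℝ => h) =O[𝓝[>] (0:ℝ)] fun _ => (1:ℝ) := by
  refine isBigO_iff.2 ⟨1, ?_⟩
  filter_upwards [Ioc_mem_nhdsGT_of_mem (Set.left_mem_Ico.2 zero_lt_one)] with x hx
  simp only [norm_one, mul_one, Real.norm_eq_abs]
  rw [abs_of_nonneg hx.1.le]
  exact hx.2

/-- First-order Taylor expansion of the flow of a Lipschitz vector field. -/
lemma ode_taylor {F : (Fin d → ℝ) → (Fin d → ℝ)} {K : NNReal}
    (hF : LipschitzWith K F) {u : ℝ → Fin d → ℝ} {y : Fin d → ℝ}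
    (hu0 : u 0 = y) (hu' : ∀ t, HasDerivAt u (F (u t)) t) :
    (fun h => u h - y - h • F y) =O[𝓝[>] (0:ℝ)] fun h => h ^ 2 := by
  have hucont : Continuous u :=
    continuous_iff_continuousAt.2 fun t => (hu' t).continuousAt
  obtain ⟨M, hM⟩ := isCompact_Icc.exists_bound_of_continuousOn
    ((hF.continuous.comp hucont).continuousOn :
      ContinuousOn (fun t => F (u t)) (Set.Icc (0:ℝ) 1))
  have hM0 : 0 ≤ M := le_trans (norm_nonneg _) (hM 0 ⟨le_refl _, zero_le_one⟩)
  -- first bound : ‖u t - y‖ ≤ M * t on [0,1]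
  have step1 : ∀ t ∈ Set.Icc (0:ℝ) 1, ‖u t - y‖ ≤ M * t := by
    intro t ht
    have := (convex_Icc (0:ℝ) 1).norm_image_sub_le_of_norm_hasDerivWithin_le
      (f := u) (f' := fun t => F (u t))
      (fun x _ => (hu' x).hasDerivWithinAt) hM ⟨le_refl _, zero_le_one⟩ ht
    rw [hu0] at this
    simpa [Real.norm_eq_abs, abs_of_nonneg ht.1] using this
  refine isBigO_iff.2 ⟨K * M, ?_⟩
  filter_upwards [Ioc_mem_nhdsGT_of_mem (Set.left_mem_Ico.2 zero_lt_one)] with h hh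
  set g : ℝ → Fin d → ℝ := fun t => u t - y - t • F y with hg
  have hg' : ∀ t, HasDerivAt g (F (u t) - F y) t := by
    intro t
    have h1 : HasDerivAt (fun t : ℝ => t • F y) ((1:ℝ) • F y) t :=
      (hasDerivAt_id t).smul_const (F y)
    rw [one_smul] at h1
    exact ((hu' t).sub_const y).sub h1
  have hbound : ∀ t ∈ Set.Icc (0:ℝ) h, ‖F (u t) - F y‖ ≤ (K : ℝ) * (M * h) := by
    intro t ht
    have ht1 : t ∈ Set.Icc (0:ℝ) 1 := ⟨ht.1, ht.2.trans hh.2⟩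
    have hlip : ‖F (u t) - F y‖ ≤ (K : ℝ) * ‖u t - y‖ := by
      have := hF.dist_le_mul (u t) y
      simpa [dist_eq_norm] using this
    refine hlip.trans (mul_le_mul_of_nonneg_left ?_ K.coe_nonneg)
    refine (step1 t ht1).trans ?_
    nlinarith [ht.2]
  have hmvt := (convex_Icc (0:ℝ) h).norm_image_sub_le_of_norm_hasDerivWithin_le
    (f := g) (f' := fun t => F (u t) - F y)
    (fun x _ => (hg' x).hasDerivWithinAt) hbound
    ⟨le_refl _, hh.1.le⟩ ⟨hh.1.le, le_refl _⟩
  have hg0 : g 0 = 0 := by simp [hg, hu0]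
  rw [hg0, sub_zero, sub_zero, Real.norm_eq_abs, abs_of_nonneg hh.1.le] at hmvt
  have : ‖(h:ℝ) ^ 2‖ = h ^ 2 := by
    rw [Real.norm_eq_abs, abs_of_nonneg (sq_nonneg h)]
  rw [this]
  calc ‖g h‖ ≤ (K : ℝ) * (M * h) * h := hmvt
    _ = (K : ℝ) * M * h ^ 2 := by ring

end Aux

/-- GeCo order-1 characterization: for an explicit s-stage RK method with
Σ bᵢ = 1, the GeCo scheme is of order (at least) 1 at the state y if and only
if φ_out(y,h) = 1 + O(h).  The stages Y are uniquely determined by the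
(explicit) stage equations, so we quantify universally over families of
stages satisfying them. -/
theorem stmt5 (d s : ℕ) (hd : 1 ≤ d)
    (a : Fin s → Fin s → ℝ) (b : Fin s → ℝ)
    (hexp : ∀ i j : Fin s, i ≤ j → a i j = 0)
    (hb : ∑ i, b i = 1)
    (φ : Fin s → (Fin d → ℝ) → ℝ → ℝ) (φout : (Fin d → ℝ) → ℝ → ℝ)
    (y : Fin d → ℝ)
    (hφ : ∀ i : Fin s, (i : ℕ) ≠ 0 →
      (fun h => φ i y h) =O[𝓝[>] (0 : ℝ)] fun _ => (1 : ℝ)) :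
    (∀ F : (Fin d → ℝ) → (Fin d → ℝ), (∃ K, LipschitzWith K F) → ContDiff ℝ 2 F →
      ∀ u : ℝ → (Fin d → ℝ), u 0 = y → (∀ t, HasDerivAt u (F (u t)) t) →
      ∀ Y : ℝ → Fin s → (Fin d → ℝ),
        (∀ h : ℝ, 0 < h → ∀ i, Y h i = y + (φ i y h * h) •
            ∑ j ∈ Finset.univ.filter (fun j => j < i), a i j • F (Y h j)) →
        (fun h => (y + (φout y h * h) • ∑ j, b j • F (Y h j)) - u h)
          =O[𝓝[>] (0 : ℝ)] fun h => h ^ 2)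
    ↔
    (fun h => φout y h - 1) =O[𝓝[>] (0 : ℝ)] fun h => h := by
  constructor
  · -- order 1 ⟹ consistency of φout
    intro H
    set c : Fin d → ℝ := fun _ => 1 with hc
    set F : (Fin d → ℝ) → (Fin d → ℝ) := fun _ => c with hF
    have hlip : ∃ K, LipschitzWith K F := ⟨0, LipschitzWith.const c⟩
    have hcd : ContDiff ℝ 2 F := contDiff_const
    set u : ℝ → Fin d → ℝ := fun t => y + t • c with hu
    have hu0 : u 0 = y := by simp [hu]
    have hu' : ∀ t, HasDerivAt u (F (u t)) t := by
      intro t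
      have h1 : HasDerivAt (fun t : ℝ => t • c) ((1:ℝ) • c) t :=
        (hasDerivAt_id t).smul_const c
      rw [one_smul] at h1
      exact h1.const_add y
    set Y : ℝ → Fin s → (Fin d → ℝ) := fun h i =>
      y + (φ i y h * h) • ∑ j ∈ Finset.univ.filter (fun j => j < i), a i j • c with hYdef
    have hYeq : ∀ h : ℝ, 0 < h → ∀ i, Y h i = y + (φ i y h * h) •
        ∑ j ∈ Finset.univ.filter (fun j => j < i), a i j • F (Y h j) := by
      intro h _ i; rfl
    have key := H F hlip hcd u hu0 hu' Y hYeq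
    have hsum : (∑ j, b j • F (Y (0:ℝ) j)) = c := by
      simp only [hF]
      rw [← Finset.sum_smul, hb, one_smul]
    have key2 : (fun h : ℝ => ((φout y h - 1) * h) • c) =O[𝓝[>] (0:ℝ)] fun h => h ^ 2 := by
      refine key.congr' (Eventually.of_forall fun h => ?_) EventuallyEq.rfl
      have : (∑ j, b j • F (Y h j)) = c := by
        simp only [hF]
        rw [← Finset.sum_smul, hb, one_smul]
      show y + (φout y h * h) • (∑ j, b j • F (Y h j)) - u h
        = ((φout y h - 1) * h) • c
      rw [this, hu]
      show y + (φout y h * h) • c - (y + h • c) = ((φout y h - 1) * h) • c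
      module
    -- extract the scalar estimate
    obtain ⟨C, hC⟩ := isBigO_iff.1 key2
    refine isBigO_iff.2 ⟨C, ?_⟩
    filter_upwards [hC, self_mem_nhdsWithin] with h hCh hh
    have hnorm : ‖((φout y h - 1) * h) • c‖ = |(φout y h - 1) * h| := by
      rw [norm_smul, Real.norm_eq_abs]
      have : ‖c‖ = 1 := by
        have : Nonempty (Fin d) := ⟨⟨0, hd⟩⟩
        rw [hc, pi_norm_const]
        simp
      rw [this, mul_one]
    rw [hnorm] at hCh
    rw [abs_mul] at hCh
    have hh' : (0:ℝ) < h := hh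
    have habs : |h| = h := abs_of_pos hh'
    rw [habs] at hCh
    have h2 : ‖(h:ℝ) ^ 2‖ = h * h := by
      rw [Real.norm_eq_abs, abs_of_nonneg (sq_nonneg h), sq]
    rw [h2] at hCh
    have : |φout y h - 1| ≤ C * h := by
      have := hCh
      nlinarith [abs_nonneg (φout y h - 1)]
    simpa [Real.norm_eq_abs, abs_of_pos hh'] using this
  · -- consistency of φout ⟹ order 1
    intro hφout F hFlip hFC2 u hu0 hu' Y hY
    obtain ⟨K, hK⟩ := hFlip
    -- Stage asymptotics : Y h i - y = O(h)
    have hstage : ∀ i : Fin s, (fun h => Y h i - y) =O[𝓝[>] (0:ℝ)] fun h => h := by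
      have key : ∀ n : ℕ, ∀ i : Fin s, (i : ℕ) < n →
          (fun h => Y h i - y) =O[𝓝[>] (0:ℝ)] fun h => h := by
        intro n
        induction n with
        | zero => intro i hi; omega
        | succ n ih =>
          intro i hi
          have hsum : (fun h => ∑ j ∈ Finset.univ.filter (fun j => j < i),
              a i j • F (Y h j)) =O[𝓝[>] (0:ℝ)] fun _ => (1:ℝ) := by
            refine IsBigO.fun_sum fun j hj => ?_
            have hj' : j < i := (Finset.mem_filter.1 hj).2
            have hjn : (j : ℕ) < n := by
              have : (j : ℕ) < (i : ℕ) := hj'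
              omega
            have hFj : (fun h => F (Y h j) - F y) =O[𝓝[>] (0:ℝ)] fun h => h :=
              lip_bigO hK (ih j hjn)
            have hFj1 : (fun h => F (Y h j)) =O[𝓝[>] (0:ℝ)] fun _ => (1:ℝ) := by
              have := (hFj.trans h_bigO_one).add
                (isBigO_const_const (F y) one_ne_zero (𝓝[>] (0:ℝ)))
              simpa using this
            exact hFj1.const_smul_left (a i j)
          by_cases hi0 : (i : ℕ) = 0
          · have hfe : Finset.univ.filter (fun j => j < i) = ∅ := by
              ext j
              simp only [Finset.mem_filter, Finset.mem_univ, true_and,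
                Finset.notMem_empty, iff_false]
              intro hji
              have : (j : ℕ) < (i : ℕ) := hji
              omega
            have heq : ∀ᶠ h in 𝓝[>] (0:ℝ), Y h i - y = 0 := by
              filter_upwards [self_mem_nhdsWithin] with h hh
              rw [hY h hh i, hfe]
              simp
            exact (isBigO_zero _ _).congr' (heq.mono fun x hx => hx.symm) EventuallyEq.rfl
          · have hmul : (fun h => φ i y h * h) =O[𝓝[>] (0:ℝ)] fun h => h := by
              have := (hφ i hi0).mul (isBigO_refl (fun h : ℝ => h) (𝓝[>] (0:ℝ)))
              simpa using this
            have hsm := hmul.smul hsum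
            have hsm' : (fun h => (φ i y h * h) •
                ∑ j ∈ Finset.univ.filter (fun j => j < i), a i j • F (Y h j))
                =O[𝓝[>] (0:ℝ)] fun h => h := by
              simpa [smul_eq_mul] using hsm
            refine hsm'.congr' ?_ EventuallyEq.rfl
            filter_upwards [self_mem_nhdsWithin] with h hh
            rw [hY h hh i]
            abel
      intro i
      exact key s i i.isLt
    -- F at stages : O(1) and F(Y) - F(y) = O(h)
    have hFst : ∀ i : Fin s, (fun h => F (Y h i) - F y) =O[𝓝[>] (0:ℝ)] fun h => h :=
      fun i => lip_bigO hK (hstage i)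
    have hS1 : (fun h => ∑ j, b j • F (Y h j)) =O[𝓝[>] (0:ℝ)] fun _ => (1:ℝ) := by
      refine IsBigO.fun_sum fun j _ => ?_
      have : (fun h => F (Y h j)) =O[𝓝[>] (0:ℝ)] fun _ => (1:ℝ) := by
        have := ((hFst j).trans h_bigO_one).add
          (isBigO_const_const (F y) one_ne_zero (𝓝[>] (0:ℝ)))
        simpa using this
      exact this.const_smul_left (b j)
    have hS2 : (fun h => (∑ j, b j • F (Y h j)) - F y) =O[𝓝[>] (0:ℝ)] fun h => h := by
      have heq : ∀ h : ℝ, (∑ j, b j • F (Y h j)) - F y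
          = ∑ j, b j • (F (Y h j) - F y) := by
        intro h
        rw [Finset.sum_congr rfl (fun j _ => smul_sub (b j) (F (Y h j)) (F y))]
        rw [Finset.sum_sub_distrib, ← Finset.sum_smul, hb, one_smul]
      refine IsBigO.congr' ?_ (Eventually.of_forall fun h => (heq h).symm) EventuallyEq.rfl
      exact IsBigO.fun_sum fun j _ => (hFst j).const_smul_left (b j)
    -- Taylor for u
    have hTay := ode_taylor hK hu0 hu'
    -- Assemble
    have hdecomp : ∀ h : ℝ,
        (y + (φout y h * h) • ∑ j, b j • F (Y h j)) - u h
        = ((φout y h - 1) * h) • (∑ j, b j • F (Y h j))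
          + h • ((∑ j, b j • F (Y h j)) - F y)
          - (u h - y - h • F y) := by
      intro h
      have : φout y h * h = (φout y h - 1) * h + h := by ring
      rw [this, add_smul, smul_sub]
      abel
    have hT1 : (fun h => ((φout y h - 1) * h) • (∑ j, b j • F (Y h j)))
        =O[𝓝[>] (0:ℝ)] fun h => h ^ 2 := by
      have hm : (fun h => (φout y h - 1) * h) =O[𝓝[>] (0:ℝ)] fun h => h ^ 2 := by
        have := hφout.mul (isBigO_refl (fun h : ℝ => h) (𝓝[>] (0:ℝ)))
        simpa [sq] using this
      have := hm.smul hS1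
      simpa [smul_eq_mul] using this
    have hT2 : (fun h => h • ((∑ j, b j • F (Y h j)) - F y))
        =O[𝓝[>] (0:ℝ)] fun h => h ^ 2 := by
      have := (isBigO_refl (fun h : ℝ => h) (𝓝[>] (0:ℝ))).smul hS2
      simpa [smul_eq_mul, sq] using this
    have := (hT1.add hT2).sub hTay
    refine this.congr' (Eventually.of_forall fun h => (hdecomp h).symm) EventuallyEq.rfl
end

section
/- Let d ≥ 1, let (a_{ij}, b_i) be the coefficients of an explicit 2-stage Runge–Kutta method of order 2 (i.e. b₁ + b₂ = 1 and b₂c₂ = 1/2 with c₂ = a₂₁), let φ₂, φ_{out} : ℝ^d × ℝ → ℝ, fix y ∈ ℝ^d, and assume φ₂(y,h) = O(1) as h → 0⁺. Then the following are equivalent: (i) for every globally Lipschitz F : ℝ^d → ℝ^d of class C³, and for every function u : ℝ → ℝ^d with u(0) = y and u'(t) = F(u(t)) for all t, one has ‖G_F(y,h) − u(h)‖ = O(h³) as h → 0⁺; (ii) φ₂(y,h) = 1 + O(h) and φ_{out}(y,h) = 1 + O(h²) as h → 0⁺. -/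
open Topology Asymptotics Filter Finset Set Metric

-- h^n =O h^m for m ≤ n on 𝓝[>]0
lemma aux_pow_isBigO {m n : ℕ} (hmn : m ≤ n) :
    (fun t : ℝ => t ^ n) =O[𝓝[>] (0:ℝ)] fun t => t ^ m := by
  rw [isBigO_iff]
  refine ⟨1, Filter.eventually_of_mem (Ioc_mem_nhdsGT one_pos) fun t ht => ?_⟩
  have h0 : 0 < t := ht.1
  have h1 : t ≤ 1 := ht.2
  rw [one_mul, Real.norm_eq_abs, Real.norm_eq_abs, abs_of_pos (pow_pos h0 _),
    abs_of_pos (pow_pos h0 _)]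
  exact pow_le_pow_of_le_one h0.le h1 hmn

-- divide a big-O by t^k
lemma aux_div_pow {f : ℝ → ℝ} {m k : ℕ}
    (hf : (fun t => f t * t ^ k) =O[𝓝[>] (0:ℝ)] fun t => t ^ (m + k)) :
    f =O[𝓝[>] (0:ℝ)] fun t => t ^ m := by
  rw [isBigO_iff] at hf ⊢
  obtain ⟨C, hC⟩ := hf
  refine ⟨C, ?_⟩
  filter_upwards [hC, self_mem_nhdsWithin] with t ht (h0 : 0 < t)
  rw [Real.norm_eq_abs, Real.norm_eq_abs, abs_mul, abs_of_pos (pow_pos h0 _),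
    abs_of_pos (pow_pos h0 _), pow_add] at ht
  rw [Real.norm_eq_abs, Real.norm_eq_abs, abs_of_pos (pow_pos h0 _)]
  have hk : (0:ℝ) < t ^ k := pow_pos h0 _
  exact le_of_mul_le_mul_right (by linarith [ht]) hk

-- scalar • fixed vector
lemma aux_smul_const {E : Type*} [NormedAddCommGroup E] [NormedSpace ℝ E]
    {f g : ℝ → ℝ} {l : Filter ℝ} (h : f =O[l] g) (v : E) :
    (fun t => f t • v) =O[l] g := by
  rw [isBigO_iff] at h ⊢
  obtain ⟨C, hC⟩ := h
  refine ⟨C * ‖v‖, ?_⟩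
  filter_upwards [hC] with t ht
  rw [norm_smul]
  calc ‖f t‖ * ‖v‖ ≤ C * ‖g t‖ * ‖v‖ := by
        exact mul_le_mul_of_nonneg_right ht (norm_nonneg v)
    _ = C * ‖v‖ * ‖g t‖ := by ring

-- extract scalar from smul by unit vector
lemma aux_smul_unit {E : Type*} [NormedAddCommGroup E] [NormedSpace ℝ E]
    {f : ℝ → ℝ} {g : ℝ → ℝ} {l : Filter ℝ} {v : E} (hv : ‖v‖ = 1)
    (h : (fun t => f t • v) =O[l] g) : f =O[l] g := by
  rw [isBigO_iff] at h ⊢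
  obtain ⟨C, hC⟩ := h
  refine ⟨C, ?_⟩
  filter_upwards [hC] with t ht
  rwa [norm_smul, hv, mul_one] at ht

lemma aux_taylorF {E : Type*} [NormedAddCommGroup E] [NormedSpace ℝ E]
    {F : E → E} (hF : ContDiff ℝ 3 F) (y : E) :
    ∃ L r : ℝ, 0 ≤ L ∧ 0 < r ∧ ∀ v : E, ‖v‖ < r →
      ‖F (y + v) - F y - fderiv ℝ F y v‖ ≤ L * (‖v‖ * ‖v‖) := by
  have hd1 : ContDiff ℝ 2 (fderiv ℝ F) := hF.fderiv_right (by norm_num)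
  have hd1' : ContDiffAt ℝ 1 (fderiv ℝ F) y := (hd1.contDiffAt).of_le (by norm_num)
  obtain ⟨L, s, hs, hLs⟩ := hd1'.exists_lipschitzOnWith
  obtain ⟨r, hr, hball⟩ := Metric.mem_nhds_iff.1 hs
  have hFdiff : Differentiable ℝ F := hF.differentiable (by norm_num)
  refine ⟨L, r, L.coe_nonneg, hr, fun v hv => ?_⟩
  have hsub : Metric.closedBall y ‖v‖ ⊆ s := fun x hx =>
    hball (lt_of_le_of_lt (Metric.mem_closedBall.1 hx) hv)
  have hys : y ∈ Metric.closedBall y ‖v‖ := Metric.mem_closedBall_self (norm_nonneg v)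
  have hbound : ∀ x ∈ Metric.closedBall y ‖v‖,
      ‖fderiv ℝ F x - fderiv ℝ F y‖ ≤ L * ‖v‖ := by
    intro x hx
    have h1 := hLs.dist_le_mul x (hsub hx) y (hsub hys)
    rw [dist_eq_norm, dist_eq_norm] at h1
    have h2 : ‖x - y‖ ≤ ‖v‖ := by rw [← dist_eq_norm]; exact Metric.mem_closedBall.1 hx
    calc ‖fderiv ℝ F x - fderiv ℝ F y‖ ≤ L * ‖x - y‖ := h1
      _ ≤ L * ‖v‖ := mul_le_mul_of_nonneg_left h2 L.coe_nonneg
  have hyv : y + v ∈ Metric.closedBall y ‖v‖ := by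
    simp [Metric.mem_closedBall, dist_eq_norm]
  have key := (convex_closedBall y ‖v‖).norm_image_sub_le_of_norm_hasFDerivWithin_le'
    (x := y) (y := y + v)
    (fun x _ => (hFdiff x).hasFDerivAt.hasFDerivWithinAt) hbound
    hys hyv
  simpa [add_sub_cancel_left, mul_assoc] using key

lemma aux_taylorU {E : Type*} [NormedAddCommGroup E] [NormedSpace ℝ E]
    {F : E → E} {K : NNReal} (hLip : LipschitzWith K F) (hF : ContDiff ℝ 3 F)
    {u : ℝ → E} {y : E} (hu0 : u 0 = y) (hu' : ∀ t, HasDerivAt u (F (u t)) t) :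
    ∃ C δ : ℝ, 0 < δ ∧ ∀ h ∈ Set.Ioc (0:ℝ) δ,
      ‖u h - y - h • F y - (h^2/2) • (fderiv ℝ F y (F y))‖ ≤ C * h ^ 3 := by
  have hFdiff : Differentiable ℝ F := hF.differentiable (by norm_num)
  have hucont : Continuous u := by
    rw [continuous_iff_continuousAt]; exact fun t => (hu' t).continuousAt
  set g : ℝ → E := fun t => F (u t) with hg
  have hgcont : Continuous g := hF.continuous.comp hucont
  set w : ℝ → E := fun t => fderiv ℝ F (u t) (g t) with hw
  have hg' : ∀ t, HasDerivAt g (w t) t := fun t =>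
    (hFdiff (u t)).hasFDerivAt.comp_hasDerivAt t (hu' t)
  -- bound on g over [-1,1]
  obtain ⟨M, hM⟩ := (isCompact_Icc (a := (-1:ℝ)) (b := 1)).exists_bound_of_continuousOn
    hgcont.continuousOn
  have hM0 : 0 ≤ M := le_trans (norm_nonneg _) (hM 0 (by norm_num))
  -- u moves at speed ≤ M on [0,1]
  have huMVT : ∀ t ∈ Set.Icc (0:ℝ) 1, ‖u t - y‖ ≤ M * t := by
    intro t ht
    have := norm_image_sub_le_of_norm_deriv_le_segment' (a := 0) (b := 1)
      (f := u) (f' := g) (C := M)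
      (fun x hx => (hu' x).hasDerivWithinAt)
      (fun x hx => hM x ⟨by linarith [hx.1], hx.2.le⟩) t ht
    simpa [hu0] using this
  -- Lipschitz bound on fderiv F near y
  have hd1 : ContDiff ℝ 2 (fderiv ℝ F) := hF.fderiv_right (by norm_num)
  have hd1' : ContDiffAt ℝ 1 (fderiv ℝ F) y := (hd1.contDiffAt).of_le (by norm_num)
  obtain ⟨L, s, hs, hLs⟩ := hd1'.exists_lipschitzOnWith
  obtain ⟨r, hr, hball⟩ := Metric.mem_nhds_iff.1 hs
  have hys : y ∈ s := mem_of_mem_nhds hs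
  -- choose δ
  have hev : ∀ᶠ t in 𝓝 (0:ℝ), u t ∈ Metric.ball y r := by
    have : Metric.ball y r ∈ 𝓝 (u 0) := by rw [hu0]; exact Metric.ball_mem_nhds y hr
    exact hucont.continuousAt.preimage_mem_nhds this
  obtain ⟨ε, hε, hεball⟩ := Metric.eventually_nhds_iff.1 hev
  set δ : ℝ := min (ε/2) 1 with hδdef
  have hδpos : 0 < δ := lt_min (by linarith) one_pos
  have hδ1 : δ ≤ 1 := min_le_right _ _
  have hδε : δ < ε := lt_of_le_of_lt (min_le_left _ _) (by linarith)
  have hin : ∀ t ∈ Set.Icc (0:ℝ) δ, u t ∈ s := by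
    intro t ht
    apply hball
    apply hεball
    rw [Real.dist_eq, sub_zero, abs_of_nonneg ht.1]
    exact lt_of_le_of_lt ht.2 hδε
  set Ny : ℝ := ‖fderiv ℝ F y‖ with hNy
  set C₁ : ℝ := (L * M + Ny * K) * M with hC₁
  have hC₁0 : 0 ≤ C₁ := by positivity
  -- w is Lipschitz-type bounded near 0
  have hwb : ∀ t ∈ Set.Icc (0:ℝ) δ, ‖w t - w 0‖ ≤ C₁ * t := by
    intro t ht
    have htIcc1 : t ∈ Set.Icc (0:ℝ) 1 := ⟨ht.1, le_trans ht.2 hδ1⟩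
    have hut : ‖u t - y‖ ≤ M * t := huMVT t htIcc1
    have h1 : ‖fderiv ℝ F (u t) - fderiv ℝ F y‖ ≤ L * ‖u t - y‖ := by
      have := hLs.dist_le_mul (u t) (hin t ht) y hys
      rwa [dist_eq_norm, dist_eq_norm] at this
    have h2 : ‖g t‖ ≤ M := hM t ⟨by linarith [htIcc1.1], htIcc1.2⟩
    have h3 : ‖g t - g 0‖ ≤ K * ‖u t - y‖ := by
      have := hLip.dist_le_mul (u t) (u 0)
      rw [dist_eq_norm, dist_eq_norm, hu0] at this
      simpa [hg, hu0] using this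
    have key : w t - w 0 = (fderiv ℝ F (u t) - fderiv ℝ F y) (g t)
        + fderiv ℝ F y (g t - g 0) := by
      simp only [hw, ContinuousLinearMap.sub_apply, map_sub, hu0, hg]
      abel
    rw [key]
    calc ‖(fderiv ℝ F (u t) - fderiv ℝ F y) (g t) + fderiv ℝ F y (g t - g 0)‖
        ≤ ‖(fderiv ℝ F (u t) - fderiv ℝ F y) (g t)‖ + ‖fderiv ℝ F y (g t - g 0)‖ :=
          norm_add_le _ _
      _ ≤ ‖fderiv ℝ F (u t) - fderiv ℝ F y‖ * ‖g t‖ + Ny * ‖g t - g 0‖ :=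
          add_le_add (ContinuousLinearMap.le_opNorm _ _)
            (ContinuousLinearMap.le_opNorm _ _)
      _ ≤ (L * ‖u t - y‖) * M + Ny * (K * ‖u t - y‖) :=
          add_le_add (mul_le_mul h1 h2 (norm_nonneg _) (by positivity))
            (mul_le_mul_of_nonneg_left h3 (by positivity))
      _ ≤ (L * (M * t)) * M + Ny * (K * (M * t)) := by
          gcongr <;> positivity
      _ = C₁ * t := by rw [hC₁]; ring
  -- second MVT: g t - g 0 - t • w 0
  have hg2 : ∀ t ∈ Set.Icc (0:ℝ) δ, ‖g t - g 0 - t • w 0‖ ≤ C₁ * t * t := by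
    intro t ht
    have := norm_image_sub_le_of_norm_deriv_le_segment' (a := 0) (b := t)
      (f := fun s => g s - s • w 0) (f' := fun s => w s - w 0) (C := C₁ * t)
      (fun x hx => by
        have : HasDerivAt (fun s => g s - s • w 0) (w x - w 0) x := by
          convert (hg' x).sub ((hasDerivAt_id x).smul_const (w 0)) using 1 <;> simp <;> rfl
        exact this.hasDerivWithinAt)
      (fun x hx => by
        have hx1 : x ∈ Set.Icc (0:ℝ) δ := ⟨hx.1, le_trans hx.2.le ht.2⟩
        calc ‖w x - w 0‖ ≤ C₁ * x := hwb x hx1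
          _ ≤ C₁ * t := mul_le_mul_of_nonneg_left hx.2.le hC₁0)
      t (Set.right_mem_Icc.2 ht.1)
    rw [show g t - g 0 - t • w 0 = g t - t • w 0 - g 0 by abel]
    simpa using this
  -- final MVT
  refine ⟨C₁, δ, hδpos, fun h hh => ?_⟩
  have hhIcc : h ∈ Set.Icc (0:ℝ) δ := ⟨hh.1.le, hh.2⟩
  have key := norm_image_sub_le_of_norm_deriv_le_segment' (a := 0) (b := h)
    (f := fun t => u t - t • g 0 - (t^2/2) • w 0)
    (f' := fun t => g t - g 0 - t • w 0) (C := C₁ * h * h)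
    (fun x hx => by
      have hd2 : HasDerivAt (fun t : ℝ => (t^2/2) • w 0) (x • w 0) x := by
        have : HasDerivAt (fun t : ℝ => t^2/2) x x := by
          simpa using (hasDerivAt_pow 2 x).div_const 2
        exact this.smul_const (w 0)
      have hd0 : HasDerivAt (fun t : ℝ => t • g 0) (g 0) x := by
        simpa using (hasDerivAt_id x).smul_const (g 0)
      have hder : HasDerivAt (fun t => u t - t • g 0 - (t^2/2) • w 0)
          (g x - g 0 - x • w 0) x := by
        have := ((hu' x).sub hd0).sub hd2
        convert this using 1 <;> simp [hg] <;> rfl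
      exact hder.hasDerivWithinAt)
    (fun x hx => by
      have hx1 : x ∈ Set.Icc (0:ℝ) δ := ⟨hx.1, le_trans hx.2.le hhIcc.2⟩
      have := hg2 x hx1
      calc ‖g x - g 0 - x • w 0‖ ≤ C₁ * x * x := this
        _ ≤ C₁ * h * h :=
            mul_le_mul (mul_le_mul_of_nonneg_left hx.2.le hC₁0) hx.2.le hx.1
              (mul_nonneg hC₁0 hh.1.le))
    h (Set.right_mem_Icc.2 hh.1.le)
  have hg0 : g 0 = F y := by rw [hg]; simp [hu0]
  have hw0 : w 0 = fderiv ℝ F y (F y) := by rw [hw, hg]; simp [hu0]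
  have hrw : u h - y - h • F y - (h^2/2) • (fderiv ℝ F y (F y))
      = u h - h • g 0 - (h^2/2) • w 0
        - (u 0 - (0:ℝ) • g 0 - ((0:ℝ)^2/2) • w 0) := by
    rw [hg0, hw0, hu0]
    simp
    abel
  rw [hrw]
  calc ‖u h - h • g 0 - (h^2/2) • w 0 - (u 0 - (0:ℝ) • g 0 - ((0:ℝ)^2/2) • w 0)‖
      ≤ C₁ * h * h * (h - 0) := key
    _ = C₁ * h ^ 3 := by ring

/-- GeCo order-2 characterization: for an explicit 2-stage RK method of
order 2, the GeCo scheme is of order (at least) 2 at the state y if and only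
if φ₂(y,h) = 1 + O(h) and φ_out(y,h) = 1 + O(h²).  Here `φ 1` plays the role
of φ₂ (stage indices are 0-based). -/
theorem stmt6 (d : ℕ) (hd : 1 ≤ d)
    (a : Fin 2 → Fin 2 → ℝ) (b : Fin 2 → ℝ)
    (hexp : ∀ i j : Fin 2, i ≤ j → a i j = 0)
    (hb : b 0 + b 1 = 1)
    (hord2 : b 1 * a 1 0 = 1 / 2)
    (φ : Fin 2 → (Fin d → ℝ) → ℝ → ℝ) (φout : (Fin d → ℝ) → ℝ → ℝ)
    (y : Fin d → ℝ)
    (hφ : (fun h => φ 1 y h) =O[𝓝[>] (0 : ℝ)] fun _ => (1 : ℝ)) :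
    (∀ F : (Fin d → ℝ) → (Fin d → ℝ), (∃ K, LipschitzWith K F) → ContDiff ℝ 3 F →
      ∀ u : ℝ → (Fin d → ℝ), u 0 = y → (∀ t, HasDerivAt u (F (u t)) t) →
      ∀ Y : ℝ → Fin 2 → (Fin d → ℝ),
        (∀ h : ℝ, 0 < h → ∀ i, Y h i = y + (φ i y h * h) •
            ∑ j ∈ Finset.univ.filter (fun j => j < i), a i j • F (Y h j)) →
        (fun h => (y + (φout y h * h) • ∑ j, b j • F (Y h j)) - u h)
          =O[𝓝[>] (0 : ℝ)] fun h => h ^ 3)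
    ↔
    (((fun h => φ 1 y h - 1) =O[𝓝[>] (0 : ℝ)] fun h => h) ∧
     ((fun h => φout y h - 1) =O[𝓝[>] (0 : ℝ)] fun h => h ^ 2)) := by
  haveI : Nonempty (Fin d) := ⟨⟨0, hd⟩⟩
  have hfilt0 : Finset.univ.filter (fun j : Fin 2 => j < 0) = ∅ := by decide
  have hfilt1 : Finset.univ.filter (fun j : Fin 2 => j < 1) = {0} := by decide
  have hh2O1 : (fun h : ℝ => h ^ 2) =O[𝓝[>] (0:ℝ)] fun _ => (1:ℝ) := by
    have := aux_pow_isBigO (m := 0) (n := 2) (by norm_num)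
    simpa using this
  have hh2Oh : (fun h : ℝ => h ^ 2) =O[𝓝[>] (0:ℝ)] fun h => h := by
    have := aux_pow_isBigO (m := 1) (n := 2) (by norm_num)
    simpa using this
  constructor
  · -- order conditions are necessary
    intro H
    set v : Fin d → ℝ := fun _ => (1:ℝ) with hvdef
    have hv : ‖v‖ = 1 := by rw [hvdef, pi_norm_const]; norm_num
    -- common stage vector
    set Y0 : ℝ → Fin 2 → (Fin d → ℝ) :=
      fun h i => if i = 0 then y else y + (φ 1 y h * h) • (a 1 0 • v) with hY0def
    -- Step 1 : constant field
    have hφout : (fun h => φout y h - 1) =O[𝓝[>] (0 : ℝ)] fun h => h ^ 2 := by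
      set F1 : (Fin d → ℝ) → (Fin d → ℝ) := fun _ => v with hF1def
      have hstage1 : ∀ h : ℝ, 0 < h → ∀ i, Y0 h i = y + (φ i y h * h) •
          ∑ j ∈ Finset.univ.filter (fun j => j < i), a i j • F1 (Y0 h j) := by
        intro h hp i
        fin_cases i
        · simp [hY0def, hfilt0]
        · simp [hY0def, hfilt1, hF1def]
          rw [show (Finset.univ.filter (fun j : Fin 2 => j = 0)) = {0} by decide,
            Finset.sum_singleton]
      have hu1' : ∀ t : ℝ, HasDerivAt (fun t : ℝ => y + t • v) (F1 ((fun t : ℝ => y + t • v) t)) t := by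
        intro t
        have : HasDerivAt (fun t : ℝ => y + t • v) ((1:ℝ) • v) t :=
          ((hasDerivAt_id t).smul_const v).const_add y
        simpa [hF1def] using this
      have H1 := H F1 ⟨0, LipschitzWith.const v⟩ contDiff_const
        (fun t => y + t • v) (by simp) hu1' Y0 hstage1
      have key1 : (fun h => (y + (φout y h * h) • ∑ j, b j • F1 (Y0 h j))
          - (y + h • v)) = fun h => ((φout y h - 1) * h) • v := by
        funext h
        have hsum : ∑ j, b j • F1 (Y0 h j) = v := by
          rw [Fin.sum_univ_two]
          simp only [hF1def]
          rw [← add_smul, hb, one_smul]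
        rw [hsum]
        module
      rw [key1] at H1
      have := aux_smul_unit hv H1
      apply aux_div_pow (m := 2) (k := 1)
      simpa [pow_one] using this
    refine ⟨?_, hφout⟩
    -- Step 2 : affine field
    set F2 : (Fin d → ℝ) → (Fin d → ℝ) := fun x => x - y + v with hF2def
    have hLip2 : LipschitzWith 1 F2 := by
      apply LipschitzWith.of_dist_le_mul
      intro x1 x2
      rw [dist_eq_norm, dist_eq_norm, hF2def]
      rw [show x1 - y + v - (x2 - y + v) = x1 - x2 by abel, NNReal.coe_one, one_mul]
    have hCD2 : ContDiff ℝ 3 F2 := (contDiff_id.sub contDiff_const).add contDiff_const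
    have hF2y : F2 y = v := by rw [hF2def]; simp
    have hstage2 : ∀ h : ℝ, 0 < h → ∀ i, Y0 h i = y + (φ i y h * h) •
        ∑ j ∈ Finset.univ.filter (fun j => j < i), a i j • F2 (Y0 h j) := by
      intro h hp i
      fin_cases i
      · simp [hY0def, hfilt0]
      · simp [hY0def, hF2def]
        rw [show (Finset.univ.filter (fun j : Fin 2 => j = 0)) = {0} by decide,
          Finset.sum_singleton]
        simp
    set u2 : ℝ → (Fin d → ℝ) := fun t => y + (Real.exp t - 1) • v with hu2def
    have hu20 : u2 0 = y := by simp [hu2def]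
    have hu2' : ∀ t, HasDerivAt u2 (F2 (u2 t)) t := by
      intro t
      have h1 : HasDerivAt u2 (Real.exp t • v) t :=
        (((Real.hasDerivAt_exp t).sub_const 1).smul_const v).const_add y
      have h2 : F2 (u2 t) = Real.exp t • v := by
        rw [hF2def, hu2def]
        show y + (Real.exp t - 1) • v - y + v = _
        rw [sub_smul, one_smul]
        abel
      rw [h2]
      exact h1
    have H2 := H F2 ⟨1, hLip2⟩ hCD2 u2 hu20 hu2' Y0 hstage2
    have key2 : (fun h => (y + (φout y h * h) • ∑ j, b j • F2 (Y0 h j)) - u2 h)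
        = fun h => (φout y h * h + φout y h * φ 1 y h * (h^2/2) - (Real.exp h - 1)) • v := by
      funext h
      have hY01 : Y0 h 1 = y + (φ 1 y h * h) • (a 1 0 • v) := by simp [hY0def]
      have hFY1 : F2 (Y0 h 1) = (φ 1 y h * h * a 1 0) • v + v := by
        rw [hY01, hF2def]
        show y + (φ 1 y h * h) • (a 1 0 • v) - y + v = _
        rw [smul_smul]
        abel
      rw [Fin.sum_univ_two, show Y0 h 0 = y by simp [hY0def], hF2y, hFY1, hu2def]
      match_scalars
      · ring
      · linear_combination (φout y h * h) * hb + (φout y h * φ 1 y h * h^2) * hord2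
    rw [key2] at H2
    have hs2 := aux_smul_unit hv H2
    -- Taylor bound for exp
    have hexp3 : (fun h => Real.exp h - (1 + h + h^2/2)) =O[𝓝[>] (0:ℝ)] fun h => h^3 := by
      rw [isBigO_iff]
      refine ⟨1, ?_⟩
      filter_upwards [Ioc_mem_nhdsGT one_pos] with h hh
      have hb3 := Real.exp_bound (x := h) (by rw [abs_of_pos hh.1]; exact hh.2) (n := 3)
        (by norm_num)
      have hsum : ∑ m ∈ Finset.range 3, h ^ m / (Nat.factorial m) = 1 + h + h^2/2 := by
        simp [Finset.sum_range_succ, Nat.factorial]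
      rw [hsum] at hb3
      rw [Real.norm_eq_abs, Real.norm_eq_abs, one_mul, abs_of_pos (pow_pos hh.1 3)]
      calc |Real.exp h - (1 + h + h^2/2)| ≤ |h|^3 * (Nat.succ 3 / (Nat.factorial 3 * 3)) := hb3
        _ ≤ h^3 := by
            rw [abs_of_pos hh.1]
            have h1 : ((Nat.succ 3 : ℝ) / ((Nat.factorial 3 : ℝ) * 3)) ≤ 1 := by
              norm_num [Nat.factorial]
            nlinarith [pow_pos hh.1 3]
    -- (φout - 1) * h is O(h^3)
    have hT1 : (fun h => (φout y h - 1) * h) =O[𝓝[>] (0:ℝ)] fun h => h^3 := by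
      have := hφout.mul (isBigO_refl (fun h : ℝ => h) _)
      have e : (fun h : ℝ => h^2 * h) = fun h => h^3 := by funext h; ring
      rwa [e] at this
    have hmix2 : (fun h => (φout y h * φ 1 y h - 1) * (h^2/2)) =O[𝓝[>] (0:ℝ)] fun h => h^3 := by
      have e : (fun h => (φout y h * φ 1 y h - 1) * (h^2/2))
          = fun h => (φout y h * h + φout y h * φ 1 y h * (h^2/2) - (Real.exp h - 1))
            - (φout y h - 1) * h + (Real.exp h - (1 + h + h^2/2)) := by
        funext h; ring
      rw [e]
      exact (hs2.sub hT1).add hexp3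
    have hmix : (fun h => φout y h * φ 1 y h - 1) =O[𝓝[>] (0:ℝ)] fun h => h := by
      have h1 := hmix2.const_mul_left 2
      have e : (fun h => 2 * ((φout y h * φ 1 y h - 1) * (h^2/2)))
          = fun h => (φout y h * φ 1 y h - 1) * h^2 := by funext h; ring
      rw [e] at h1
      have h2 := aux_div_pow (m := 1) (k := 2) (by simpa using h1)
      simpa [pow_one] using h2
    -- conclude for φ 1
    have hφo1 : (fun h => φ 1 y h * (1 - φout y h)) =O[𝓝[>] (0:ℝ)] fun h => h := by
      have h1 : (fun h => (1:ℝ) - φout y h) =O[𝓝[>] (0:ℝ)] fun h => h^2 := by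
        have := hφout.neg_left
        simpa [neg_sub] using this
      have := hφ.mul h1
      have e : (fun h : ℝ => (1:ℝ) * h^2) = fun h => h^2 := by funext h; ring
      rw [e] at this
      exact this.trans hh2Oh
    have e : (fun h => φ 1 y h - 1)
        = fun h => φ 1 y h * (1 - φout y h) + (φout y h * φ 1 y h - 1) := by
      funext h; ring
    rw [e]
    exact hφo1.add hmix
  · -- order conditions are sufficient
    rintro ⟨hφ1O, hφoO⟩ F hLipE hF u hu0 hu' Y hY
    obtain ⟨K, hLip⟩ := hLipE
    obtain ⟨L, r, hL0, hr, hTF⟩ := aux_taylorF hF y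
    obtain ⟨C, δ, hδ, hTU⟩ := aux_taylorU hLip hF hu0 hu'
    set c : ℝ := a 1 0 with hcdef
    set R1 : ℝ → (Fin d → ℝ) := fun h =>
      F (y + ((φ 1 y h * h) * c) • F y) - F y - ((φ 1 y h * h) * c) • (fderiv ℝ F y (F y))
      with hR1def
    set R2 : ℝ → (Fin d → ℝ) := fun h =>
      u h - y - h • F y - (h^2/2) • (fderiv ℝ F y (F y)) with hR2def
    have hφoB : (fun h => φout y h) =O[𝓝[>] (0:ℝ)] fun _ => (1:ℝ) := by
      have h2 := (hφoO.trans hh2O1).add (isBigO_const_const (1:ℝ) one_ne_zero (𝓝[>] (0:ℝ)))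
      have e : (fun h => φout y h - 1 + 1) = fun h => φout y h := by funext h; ring
      rw [e] at h2
      simpa using h2
    -- bound for R1
    have hR1O : R1 =O[𝓝[>] (0:ℝ)] fun h => h^2 := by
      obtain ⟨Cφ, hCφ⟩ := hφ.bound
      set B : ℝ := |Cφ| with hBdef
      set D : ℝ := B * |c| * ‖F y‖ with hDdef
      have hD0 : 0 ≤ D := by positivity
      have hD1 : 0 < D + 1 := by positivity
      set ε : ℝ := r / (D + 1) with hεdef
      have hε : 0 < ε := by positivity
      rw [isBigO_iff]
      refine ⟨L * D^2, ?_⟩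
      filter_upwards [hCφ, Ioc_mem_nhdsGT hε] with h hb1 hb2
      have hp : 0 < h := hb2.1
      have hφb : |φ 1 y h| ≤ B := by
        rw [hBdef]
        calc |φ 1 y h| = ‖φ 1 y h‖ := rfl
          _ ≤ Cφ * ‖(1:ℝ)‖ := hb1
          _ = Cφ := by norm_num
          _ ≤ |Cφ| := le_abs_self Cφ
      set s : ℝ := (φ 1 y h * h) * c with hsdef
      have hnorm : ‖s • F y‖ ≤ D * h := by
        rw [norm_smul, Real.norm_eq_abs, hsdef, abs_mul, abs_mul, abs_of_pos hp, hDdef]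
        have h1 : |φ 1 y h| * h * |c| * ‖F y‖ ≤ B * h * |c| * ‖F y‖ := by
          gcongr
        calc |φ 1 y h| * h * |c| * ‖F y‖ ≤ B * h * |c| * ‖F y‖ := h1
          _ = B * |c| * ‖F y‖ * h := by ring
      have hlt : ‖s • F y‖ < r := by
        have h1 : D * h ≤ D * ε := mul_le_mul_of_nonneg_left hb2.2 hD0
        have h2 : D * ε < r := by
          rw [hεdef]
          calc D * (r / (D + 1)) = r * (D / (D + 1)) := by ring
            _ < r * 1 := by
                apply mul_lt_mul_of_pos_left _ hr
                rw [div_lt_one hD1]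
                linarith
            _ = r := mul_one r
        linarith [hnorm]
      have key := hTF (s • F y) hlt
      rw [map_smul] at key
      have hR1eq : R1 h = F (y + s • F y) - F y - s • (fderiv ℝ F y (F y)) := by
        simp only [hR1def, hsdef]
      rw [hR1eq]
      calc ‖F (y + s • F y) - F y - s • (fderiv ℝ F y (F y))‖
          ≤ L * (‖s • F y‖ * ‖s • F y‖) := key
        _ ≤ L * ((D * h) * (D * h)) := by
            apply mul_le_mul_of_nonneg_left _ hL0
            exact mul_le_mul hnorm hnorm (norm_nonneg _) (by positivity)
        _ = L * D^2 * h^2 := by ring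
        _ = L * D^2 * ‖h^2‖ := by
            rw [Real.norm_eq_abs, abs_of_pos (pow_pos hp 2)]
    have hR2O : R2 =O[𝓝[>] (0:ℝ)] fun h => h^3 := by
      rw [isBigO_iff]
      refine ⟨C, ?_⟩
      filter_upwards [Ioc_mem_nhdsGT hδ] with h hh
      rw [Real.norm_eq_abs (h^3), abs_of_pos (pow_pos hh.1 3)]
      exact hTU h hh
    -- the decomposition
    have hmain : ∀ h : ℝ, 0 < h →
        (y + (φout y h * h) • ∑ j, b j • F (Y h j)) - u h
        = ((φout y h - 1) * h) • F y
          + ((φout y h * φ 1 y h - 1) * (h^2/2)) • (fderiv ℝ F y (F y))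
          + ((φout y h * h) * b 1) • R1 h - R2 h := by
      intro h hp
      have hY0 : Y h 0 = y := by
        rw [hY h hp 0, hfilt0]
        simp
      have hY1 : Y h 1 = y + ((φ 1 y h * h) * c) • F y := by
        rw [hY h hp 1, hfilt1, Finset.sum_singleton, hY0, smul_smul]
      have hFY1 : F (Y h 1) = F y + ((φ 1 y h * h) * c) • (fderiv ℝ F y (F y)) + R1 h := by
        rw [hY1]
        simp only [hR1def]
        abel
      have hu : u h = y + h • F y + (h^2/2) • (fderiv ℝ F y (F y)) + R2 h := by
        simp only [hR2def]
        abel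
      rw [Fin.sum_univ_two, hY0, hFY1, hu]
      match_scalars <;>
        [ring; linear_combination (φout y h * h) * hb;
         linear_combination (φout y h * φ 1 y h * h^2) * hord2; ring; ring]
    -- big-O of each piece
    have hT1 : (fun h => ((φout y h - 1) * h) • F y) =O[𝓝[>] (0:ℝ)] fun h => h^3 := by
      apply aux_smul_const
      have := hφoO.mul (isBigO_refl (fun h : ℝ => h) _)
      have e : (fun h : ℝ => h^2 * h) = fun h => h^3 := by funext h; ring
      rwa [e] at this
    have hmixO : (fun h => φout y h * φ 1 y h - 1) =O[𝓝[>] (0:ℝ)] fun h => h := by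
      have h1 : (fun h => φout y h * (φ 1 y h - 1)) =O[𝓝[>] (0:ℝ)] fun h => h := by
        have := hφoB.mul hφ1O
        simpa using this
      have h2 : (fun h => φout y h - 1) =O[𝓝[>] (0:ℝ)] fun h => h := hφoO.trans hh2Oh
      have e : (fun h => φout y h * φ 1 y h - 1)
          = fun h => φout y h * (φ 1 y h - 1) + (φout y h - 1) := by funext h; ring
      rw [e]
      exact h1.add h2
    have hT2 : (fun h => ((φout y h * φ 1 y h - 1) * (h^2/2)) • (fderiv ℝ F y (F y)))
        =O[𝓝[>] (0:ℝ)] fun h => h^3 := by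
      apply aux_smul_const
      have hhalf : (fun h : ℝ => h^2/2) =O[𝓝[>] (0:ℝ)] fun h => h^2 := by
        have := (isBigO_refl (fun h : ℝ => h^2) (𝓝[>] (0:ℝ))).const_mul_left (1/2)
        have e : (fun h : ℝ => (1/2) * h^2) = fun h => h^2/2 := by funext h; ring
        rwa [e] at this
      have := hmixO.mul hhalf
      have e : (fun h : ℝ => h * h^2) = fun h => h^3 := by funext h; ring
      rwa [e] at this
    have hT3 : (fun h => ((φout y h * h) * b 1) • R1 h) =O[𝓝[>] (0:ℝ)] fun h => h^3 := by
      have hsc : (fun h => (φout y h * h) * b 1) =O[𝓝[>] (0:ℝ)] fun h => h := by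
        have h1 := hφoB.mul (isBigO_refl (fun h : ℝ => h) (𝓝[>] (0:ℝ)))
        have e1 : (fun h : ℝ => (1:ℝ) * h) = fun h => h := by funext h; ring
        rw [e1] at h1
        have h2 := h1.const_mul_left (b 1)
        have e2 : (fun h => b 1 * (φout y h * h)) = fun h => (φout y h * h) * b 1 := by
          funext h; ring
        rwa [e2] at h2
      have := hsc.smul hR1O
      have e : (fun h : ℝ => h • h^2) = fun h => h^3 := by
        funext h; rw [smul_eq_mul]; ring
      rwa [e] at this
    have hT : (fun h => ((φout y h - 1) * h) • F y
        + ((φout y h * φ 1 y h - 1) * (h^2/2)) • (fderiv ℝ F y (F y))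
        + ((φout y h * h) * b 1) • R1 h - R2 h) =O[𝓝[>] (0:ℝ)] fun h => h^3 :=
      ((hT1.add hT2).add hT3).sub hR2O
    have heq : (fun h => (y + (φout y h * h) • ∑ j, b j • F (Y h j)) - u h)
        =ᶠ[𝓝[>] (0:ℝ)] (fun h => ((φout y h - 1) * h) • F y
          + ((φout y h * φ 1 y h - 1) * (h^2/2)) • (fderiv ℝ F y (F y))
          + ((φout y h * h) * b 1) • R1 h - R2 h) := by
      filter_upwards [self_mem_nhdsWithin] with h hp
      exact hmain h hp
    exact hT.congr' heq.symm EventuallyEq.rfl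
end

section
/- Consider an absolutely conservative production–destruction system with continuous nonnegative functions p_{mν}, d_{mν}, an explicit s-stage Runge–Kutta scheme with nonnegative coefficients a_{ij} (a_{ij} = 0 for j ≥ i) and nonnegative weights b_j, a state y^n ∈ ℝ^N with all entries positive, and any step size h ≥ 0. Then: (1) for each i = 2,…,s, given any positive numbers ρ_{iν} (ν = 1,…,N) and any previously determined stage vectors y^{(1)},…,y^{(i−1)} with positive entries, the i-th MPRK stage equation has a unique solution y^{(i)} ∈ ℝ^N; this solution has positive entries and satisfies the conservation identity Σ_{m=1}^N y^{(i)}_m = Σ_{m=1}^N y^n_m; (2) likewise, given any positive numbers σ_ν and stage vectors with positive entries, the MPRK update equation has a unique solution y^{n+1} ∈ ℝ^N, which has positive entries and satisfies Σ_{m=1}^N y^{n+1}_m = Σ_{m=1}^N y^n_m. -/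
open Finset

lemma core_nonneg {N : ℕ} (P : Fin N → Fin N → ℝ) (Dg c z : Fin N → ℝ)
    (hP : ∀ m ν, 0 ≤ P m ν) (hcol : ∀ ν, ∑ m, P m ν = Dg ν)
    (hc : ∀ m, 0 ≤ c m)
    (hz : ∀ m, z m * (1 + Dg m) = c m + ∑ ν, P m ν * z ν) :
    ∀ m, 0 ≤ z m := by
  by_contra hcon
  push_neg at hcon
  obtain ⟨m0, hm0⟩ := hcon
  set S : Finset (Fin N) := Finset.univ.filter (fun m => z m < 0) with hSdef
  have hS : S.Nonempty := ⟨m0, by simp [hSdef, hm0]⟩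
  set Q : Fin N → ℝ := fun ν => ∑ m ∈ S, P m ν with hQdef
  have hQ0 : ∀ ν, 0 ≤ Q ν := fun ν => Finset.sum_nonneg fun m _ => hP m ν
  have hQDg : ∀ ν, Q ν ≤ Dg ν := by
    intro ν
    rw [← hcol ν]
    exact Finset.sum_le_sum_of_subset_of_nonneg (Finset.subset_univ S)
      (fun m _ _ => hP m ν)
  have hswap : ∑ m ∈ S, ∑ ν, P m ν * z ν = ∑ ν, Q ν * z ν := by
    rw [Finset.sum_comm]
    exact Finset.sum_congr rfl fun ν _ => (Finset.sum_mul ..).symm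
  have hsplit : ∑ ν, Q ν * z ν
      = ∑ ν ∈ S, Q ν * z ν
        + ∑ ν ∈ Finset.univ.filter (fun ν => ¬ z ν < 0), Q ν * z ν := by
    rw [hSdef]
    exact (Finset.sum_filter_add_sum_filter_not _ _ _).symm
  have h1 : ∑ m ∈ S, c m = ∑ m ∈ S, (z m + z m * Dg m) - ∑ ν, Q ν * z ν := by
    rw [← hswap, ← Finset.sum_sub_distrib]
    exact Finset.sum_congr rfl fun m _ => by linear_combination -hz m
  have haux : ∑ ν ∈ S, z ν * (Dg ν - Q ν)
      = ∑ ν ∈ S, (z ν + z ν * Dg ν) - (∑ ν ∈ S, z ν + ∑ ν ∈ S, Q ν * z ν) := by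
    rw [← Finset.sum_add_distrib, ← Finset.sum_sub_distrib]
    exact Finset.sum_congr rfl fun ν _ => by ring
  have hneg : ∑ m ∈ S, z m < 0 :=
    Finset.sum_neg (fun m hm => (Finset.mem_filter.mp hm).2) hS
  have h2 : ∑ ν ∈ S, z ν * (Dg ν - Q ν) ≤ 0 :=
    Finset.sum_nonpos fun ν hν =>
      mul_nonpos_iff.mpr (Or.inr ⟨le_of_lt (Finset.mem_filter.mp hν).2,
        sub_nonneg.mpr (hQDg ν)⟩)
  have h3 : 0 ≤ ∑ ν ∈ Finset.univ.filter (fun ν => ¬ z ν < 0), Q ν * z ν :=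
    Finset.sum_nonneg fun ν hν =>
      mul_nonneg (hQ0 ν) (not_lt.mp (Finset.mem_filter.mp hν).2)
  have h4 : 0 ≤ ∑ m ∈ S, c m := Finset.sum_nonneg fun m _ => hc m
  linarith

lemma core_homog {N : ℕ} (P : Fin N → Fin N → ℝ) (Dg w : Fin N → ℝ)
    (hP : ∀ m ν, 0 ≤ P m ν) (hcol : ∀ ν, ∑ m, P m ν = Dg ν)
    (hw : ∀ m, w m * (1 + Dg m) = ∑ ν, P m ν * w ν) :
    w = 0 := by
  have h1 : ∀ m, 0 ≤ w m := by
    refine core_nonneg P Dg (fun _ => 0) w hP hcol (fun _ => le_refl 0) fun m => ?_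
    rw [zero_add]; exact hw m
  have h2 : ∀ m, 0 ≤ -w m := by
    refine core_nonneg P Dg (fun _ => 0) (fun k => -w k) hP hcol (fun _ => le_refl 0)
      fun m => ?_
    have e : ∑ ν, P m ν * (-w ν) = -∑ ν, P m ν * w ν := by
      rw [← Finset.sum_neg_distrib]
      exact Finset.sum_congr rfl fun ν _ => by ring
    rw [zero_add, e]
    linear_combination -hw m
  funext m
  have := h1 m; have := h2 m
  simp only [Pi.zero_apply]
  linarith

lemma core_main {N : ℕ} (P : Fin N → Fin N → ℝ) (Dg yn : Fin N → ℝ)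
    (hP : ∀ m ν, 0 ≤ P m ν) (hcol : ∀ ν, ∑ m, P m ν = Dg ν)
    (hyn : ∀ m, 0 < yn m) :
    (∃! z : Fin N → ℝ, ∀ m, z m * (1 + Dg m) = yn m + ∑ ν, P m ν * z ν) ∧
    (∀ z : Fin N → ℝ, (∀ m, z m * (1 + Dg m) = yn m + ∑ ν, P m ν * z ν) →
      (∀ m, 0 < z m) ∧ ∑ m, z m = ∑ m, yn m) := by
  have hDg0 : ∀ m, 0 ≤ Dg m := fun m =>
    (hcol m) ▸ Finset.sum_nonneg fun μ _ => hP μ m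
  -- the matrix of the linear system
  set M : Matrix (Fin N) (Fin N) ℝ :=
    Matrix.of (fun m ν => (if ν = m then 1 + Dg m else 0) - P m ν) with hM
  have hmv : ∀ (z : Fin N → ℝ) (m : Fin N),
      M.mulVec z m = z m * (1 + Dg m) - ∑ ν, P m ν * z ν := by
    intro z m
    simp only [hM, Matrix.mulVec, dotProduct, Matrix.of_apply, sub_mul,
      ite_mul, zero_mul, Finset.sum_sub_distrib, Finset.sum_ite_eq' Finset.univ,
      Finset.mem_univ, if_true]
    ring
  have hinj : Function.Injective M.mulVecLin := by
    intro z z' hzz'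
    have hw : M.mulVecLin (z - z') = 0 := by rw [map_sub, hzz', sub_self]
    have hw0 : z - z' = 0 := by
      refine core_homog P Dg (z - z') hP hcol fun m => ?_
      have := congrFun hw m
      rw [Matrix.mulVecLin_apply, hmv (z - z') m] at this
      simp only [Pi.zero_apply] at this
      linarith
    exact sub_eq_zero.mp hw0
  have hsurj : Function.Surjective M.mulVecLin :=
    (LinearMap.injective_iff_surjective).mp hinj
  obtain ⟨z0, hz0⟩ := hsurj yn
  have hz0eq : ∀ m, z0 m * (1 + Dg m) = yn m + ∑ ν, P m ν * z0 ν := by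
    intro m
    have := congrFun hz0 m
    rw [Matrix.mulVecLin_apply, hmv z0 m] at this
    linarith
  constructor
  · refine ⟨z0, hz0eq, fun z hz => ?_⟩
    have : z - z0 = 0 := by
      refine core_homog P Dg (z - z0) hP hcol fun m => ?_
      have e : ∑ ν, P m ν * (z ν - z0 ν) = ∑ ν, P m ν * z ν - ∑ ν, P m ν * z0 ν := by
        rw [← Finset.sum_sub_distrib]
        exact Finset.sum_congr rfl fun ν _ => by ring
      simp only [Pi.sub_apply]
      rw [e]
      linear_combination hz m - hz0eq m
    exact sub_eq_zero.mp this
  · intro z hz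
    have hnn : ∀ m, 0 ≤ z m :=
      core_nonneg P Dg yn z hP hcol (fun m => (hyn m).le) hz
    constructor
    · intro m
      rcases (hnn m).lt_or_eq with hlt | heq
      · exact hlt
      · exfalso
        have h5 : 0 < z m * (1 + Dg m) := by
          rw [hz m]
          have : 0 ≤ ∑ ν, P m ν * z ν :=
            Finset.sum_nonneg fun ν _ => mul_nonneg (hP m ν) (hnn ν)
          linarith [hyn m]
        rw [← heq] at h5
        simp at h5
    · have e1 : ∑ m, z m * (1 + Dg m) = ∑ m, z m + ∑ m, Dg m * z m := by
        rw [← Finset.sum_add_distrib]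
        exact Finset.sum_congr rfl fun m _ => by ring
      have e2 : ∑ m, ∑ ν, P m ν * z ν = ∑ ν, Dg ν * z ν := by
        rw [Finset.sum_comm]
        exact Finset.sum_congr rfl fun ν _ => by
          rw [← Finset.sum_mul, hcol ν]
      have e3 : ∑ m, z m * (1 + Dg m) = ∑ m, yn m + ∑ m, ∑ ν, P m ν * z ν := by
        rw [← Finset.sum_add_distrib]
        exact Finset.sum_congr rfl fun m _ => hz m
      have e4 : ∑ m, Dg m * z m = ∑ ν, Dg ν * z ν := rfl
      linarith


lemma master {N s : ℕ} (p d : Fin N → Fin N → (Fin N → ℝ) → ℝ)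
    (hp0 : ∀ m ν y, 0 ≤ p m ν y)
    (hcons : ∀ m ν, p m ν = d ν m)
    (T : Finset (Fin s)) (lam : Fin s → ℝ) (hlam : ∀ j, 0 ≤ lam j)
    (Y : Fin s → Fin N → ℝ)
    (ρ : Fin N → ℝ) (hρ : ∀ ν, 0 < ρ ν)
    (yn : Fin N → ℝ) (hyn : ∀ m, 0 < yn m)
    (h : ℝ) (hh : 0 ≤ h) :
    (∃! z : Fin N → ℝ, ∀ m, z m = yn m +
        h * ∑ j ∈ T, lam j * ∑ ν, (p m ν (Y j) * z ν / ρ ν - d m ν (Y j) * z m / ρ m)) ∧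
    (∀ z : Fin N → ℝ, (∀ m, z m = yn m +
        h * ∑ j ∈ T, lam j * ∑ ν, (p m ν (Y j) * z ν / ρ ν - d m ν (Y j) * z m / ρ m)) →
      (∀ m, 0 < z m) ∧ ∑ m, z m = ∑ m, yn m) := by
  set P : Fin N → Fin N → ℝ := fun m ν => h * ∑ j ∈ T, lam j * p m ν (Y j) / ρ ν with hPdef
  set Dg : Fin N → ℝ := fun m => ∑ ν, h * ∑ j ∈ T, lam j * d m ν (Y j) / ρ m with hDdef
  have hP : ∀ m ν, 0 ≤ P m ν := fun m ν =>
    mul_nonneg hh (Finset.sum_nonneg fun j _ =>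
      div_nonneg (mul_nonneg (hlam j) (hp0 m ν (Y j))) (hρ ν).le)
  have hcol : ∀ ν, ∑ m, P m ν = Dg ν := by
    intro ν
    simp only [hPdef, hDdef]
    exact Finset.sum_congr rfl fun m _ => by simp only [hcons]
  have key : ∀ (z : Fin N → ℝ) (m : Fin N),
      h * ∑ j ∈ T, lam j * ∑ ν, (p m ν (Y j) * z ν / ρ ν - d m ν (Y j) * z m / ρ m)
        = (∑ ν, P m ν * z ν) - Dg m * z m := by
    intro z m
    have l1 : h * ∑ j ∈ T, lam j * ∑ ν, (p m ν (Y j) * z ν / ρ ν - d m ν (Y j) * z m / ρ m)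
        = ∑ j ∈ T, ∑ ν, (h * (lam j * (p m ν (Y j) * z ν / ρ ν))
            - h * (lam j * (d m ν (Y j) * z m / ρ m))) := by
      simp only [Finset.mul_sum]
      exact Finset.sum_congr rfl fun j _ => Finset.sum_congr rfl fun ν _ => by ring
    have r1 : (∑ ν, P m ν * z ν) - Dg m * z m
        = ∑ ν, ∑ j ∈ T, (h * (lam j * (p m ν (Y j) * z ν / ρ ν))
            - h * (lam j * (d m ν (Y j) * z m / ρ m))) := by
      simp only [hPdef, hDdef]
      rw [Finset.sum_mul, ← Finset.sum_sub_distrib]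
      refine Finset.sum_congr rfl fun ν _ => ?_
      rw [Finset.sum_sub_distrib]
      congr 1
      · rw [Finset.mul_sum, Finset.sum_mul]
        exact Finset.sum_congr rfl fun j _ => by ring
      · rw [Finset.mul_sum, Finset.sum_mul]
        exact Finset.sum_congr rfl fun j _ => by ring
    rw [l1, r1, Finset.sum_comm]
  have equiv : ∀ z : Fin N → ℝ,
      (∀ m, z m = yn m +
          h * ∑ j ∈ T, lam j * ∑ ν, (p m ν (Y j) * z ν / ρ ν - d m ν (Y j) * z m / ρ m))
        ↔ (∀ m, z m * (1 + Dg m) = yn m + ∑ ν, P m ν * z ν) := by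
    intro z
    constructor
    · intro hq m
      have hqm := hq m
      rw [key z m] at hqm
      linear_combination hqm
    · intro hq m
      have hqm := hq m
      rw [key z m]
      linear_combination hqm
  obtain ⟨⟨z0, hz0, hu⟩, hps⟩ := core_main P Dg yn hP hcol hyn
  exact ⟨⟨z0, (equiv z0).mpr hz0, fun y hy => hu y ((equiv y).mp hy)⟩,
    fun z hz => hps z ((equiv z).mp hz)⟩



/-- Unique solvability, unconditional positivity and conservativity of the
MPRK stage and update equations (cf. [MPRK2, Lemmas 2.8 and 3.1]). -/
theorem stmt9 (N s : ℕ)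
    (p d : Fin N → Fin N → (Fin N → ℝ) → ℝ)
    (hp0 : ∀ m ν y, 0 ≤ p m ν y) (hd0 : ∀ m ν y, 0 ≤ d m ν y)
    (hpc : ∀ m ν, Continuous (p m ν)) (hdc : ∀ m ν, Continuous (d m ν))
    (hcons : ∀ m ν, p m ν = d ν m)
    (hdiagp : ∀ m, p m m = 0) (hdiagd : ∀ m, d m m = 0)
    (a : Fin s → Fin s → ℝ) (b : Fin s → ℝ)
    (hexp : ∀ i j : Fin s, i ≤ j → a i j = 0)
    (ha : ∀ i j, 0 ≤ a i j) (hb : ∀ j, 0 ≤ b j)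
    (yn : Fin N → ℝ) (hyn : ∀ m, 0 < yn m)
    (h : ℝ) (hh : 0 ≤ h) :
    -- (1) stage equations
    (∀ i : Fin s, (i : ℕ) ≠ 0 →
      ∀ ρ : Fin N → ℝ, (∀ ν, 0 < ρ ν) →
      ∀ Yprev : Fin s → Fin N → ℝ, (∀ j, j < i → ∀ m, 0 < Yprev j m) →
      (∃! z : Fin N → ℝ, ∀ m, z m = yn m +
          h * ∑ j ∈ Finset.univ.filter (fun j => j < i), a i j *
            ∑ ν, (p m ν (Yprev j) * z ν / ρ ν - d m ν (Yprev j) * z m / ρ m)) ∧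
      (∀ z : Fin N → ℝ,
        (∀ m, z m = yn m +
          h * ∑ j ∈ Finset.univ.filter (fun j => j < i), a i j *
            ∑ ν, (p m ν (Yprev j) * z ν / ρ ν - d m ν (Yprev j) * z m / ρ m)) →
        (∀ m, 0 < z m) ∧ ∑ m, z m = ∑ m, yn m))
    ∧
    -- (2) update equation
    (∀ σ : Fin N → ℝ, (∀ ν, 0 < σ ν) →
      ∀ Y : Fin s → Fin N → ℝ, (∀ j m, 0 < Y j m) →
      (∃! z : Fin N → ℝ, ∀ m, z m = yn m +
          h * ∑ j, b j *
            ∑ ν, (p m ν (Y j) * z ν / σ ν - d m ν (Y j) * z m / σ m)) ∧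
      (∀ z : Fin N → ℝ,
        (∀ m, z m = yn m +
          h * ∑ j, b j *
            ∑ ν, (p m ν (Y j) * z ν / σ ν - d m ν (Y j) * z m / σ m)) →
        (∀ m, 0 < z m) ∧ ∑ m, z m = ∑ m, yn m)) := by
  constructor
  · intro i _ ρ hρ Yprev _
    exact master p d hp0 hcons (Finset.univ.filter (fun j => j < i)) (a i)
      (fun j => ha i j) Yprev ρ hρ yn hyn h hh
  · intro σ hσ Y _
    exact master p d hp0 hcons Finset.univ b hb Y σ hσ yn hyn h hh
end

section
/- Consider an absolutely conservative production–destruction system on ℝ^N whose functions p_{mν}, d_{mν} are nonnegative, twice continuously differentiable and Lipschitz continuous, an explicit s-stage Runge–Kutta scheme with nonnegative a_{ij}, b_j and nodes c_i = Σ_j a_{ij}, and a state y^n ∈ ℝ^N with positive entries. Suppose that for every h in some interval (0,h₀] there are positive denominators ρ_{iν}(h) and stage vectors y^{(i)}(h) with positive entries satisfying the MPRK stage equations, and that y^{(i)}_ν(h)/ρ_{iν}(h) = 1 + O(h) as h → 0⁺ for all i = 2,…,s and ν = 1,…,N. Then y^{(i)}_ν(h) = y^n_ν + h c_i F_ν(y^n)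 + O(h²) as h → 0⁺, for all i and ν, where F_m(y) = Σ_ν (p_{mν}(y) − d_{mν}(y)). -/
open Topology Asymptotics Filter Finset

private lemma mulO_aux {f g : ℝ → ℝ} {l : Filter ℝ}
    (hf : f =O[l] fun _ => (1:ℝ)) (hg : g =O[l] fun h => h) :
    (fun h => f h * g h) =O[l] fun h => h := by
  simpa using hf.mul hg

/-- Lemma 5.4 (Izgin–Ketcheson–Meister): Taylor expansion of the MPRK stages
to first order, assuming the Patankar weights satisfy
y⁽ⁱ⁾_ν/ρ_{iν} = 1 + O(h). -/
theorem stmt10 (N s : ℕ)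
    (p d : Fin N → Fin N → (Fin N → ℝ) → ℝ)
    (hp0 : ∀ m ν y, 0 ≤ p m ν y) (hd0 : ∀ m ν y, 0 ≤ d m ν y)
    (hpC : ∀ m ν, ContDiff ℝ 2 (p m ν)) (hdC : ∀ m ν, ContDiff ℝ 2 (d m ν))
    (hpL : ∀ m ν, ∃ K, LipschitzWith K (p m ν))
    (hdL : ∀ m ν, ∃ K, LipschitzWith K (d m ν))
    (hcons : ∀ m ν, p m ν = d ν m)
    (hdiagp : ∀ m, p m m = 0) (hdiagd : ∀ m, d m m = 0)
    (a : Fin s → Fin s → ℝ) (b c : Fin s → ℝ)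
    (hexp : ∀ i j : Fin s, i ≤ j → a i j = 0)
    (ha : ∀ i j, 0 ≤ a i j) (hb : ∀ j, 0 ≤ b j)
    (hc : ∀ i, c i = ∑ j, a i j)
    (yn : Fin N → ℝ) (hyn : ∀ m, 0 < yn m)
    (F : (Fin N → ℝ) → (Fin N → ℝ))
    (hF : ∀ y m, F y m = ∑ ν, (p m ν y - d m ν y))
    (ρ : ℝ → Fin s → Fin N → ℝ) (Y : ℝ → Fin s → Fin N → ℝ)
    (hstage : ∃ h₀ > (0 : ℝ), ∀ h ∈ Set.Ioc (0 : ℝ) h₀,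
      (∀ (i : Fin s) ν, (i : ℕ) ≠ 0 → 0 < ρ h i ν) ∧
      (∀ i m, 0 < Y h i m) ∧
      (∀ i m, Y h i m = yn m +
        h * ∑ j ∈ Finset.univ.filter (fun j => j < i), a i j *
          ∑ ν, (p m ν (Y h j) * Y h i ν / ρ h i ν - d m ν (Y h j) * Y h i m / ρ h i m)))
    (hratio : ∀ i : Fin s, (i : ℕ) ≠ 0 → ∀ ν,
      (fun h => Y h i ν / ρ h i ν - 1) =O[𝓝[>] (0 : ℝ)] fun h => h) :
    ∀ i ν, (fun h => Y h i ν - (yn ν + h * c i * F yn ν))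
      =O[𝓝[>] (0 : ℝ)] fun h => h ^ 2 := by
  classical
  obtain ⟨h₀, hh₀, hS⟩ := hstage
  set l : Filter ℝ := 𝓝[>] (0 : ℝ) with hl
  have hmem : Set.Ioc (0 : ℝ) h₀ ∈ l := Ioc_mem_nhdsGT_of_mem ⟨le_refl 0, hh₀⟩
  -- h = O(1) on l
  have hho : (fun h : ℝ => h) =O[l] fun _ => (1 : ℝ) := by
    have ht : Tendsto (fun h : ℝ => h) l (𝓝 0) :=
      (tendsto_id.mono_left nhdsWithin_le_nhds)
    exact ht.isBigO_one ℝ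
  -- h^2 = O(h)
  have hsq : (fun h : ℝ => h ^ 2) =O[l] fun h => h := by
    have := mulO_aux hho (isBigO_refl (fun h : ℝ => h) l)
    exact this.congr_left fun h => (sq h).symm
  have hid : (fun h : ℝ => h) =O[l] fun h => h := isBigO_refl _ _
  -- main claim by strong induction on the stage index
  have main : ∀ n : ℕ, ∀ i : Fin s, (i : ℕ) < n → ∀ ν,
      (fun h => Y h i ν - (yn ν + h * c i * F yn ν)) =O[l] fun h => h ^ 2 := by
    intro n
    induction n with
    | zero => intro i hi; omega
    | succ n IH =>
      intro i hi ν
      have IHj : ∀ j : Fin s, j < i → ∀ ν,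
          (fun h => Y h j ν - (yn ν + h * c j * F yn ν)) =O[l] fun h => h ^ 2 := by
        intro j hj
        exact IH j (by omega)
      by_cases hi0 : (i : ℕ) = 0
      · -- first stage: Y = yn, c i = 0
        have hfe : Finset.univ.filter (fun j : Fin s => j < i) = ∅ := by
          ext j
          simp only [Finset.mem_filter, Finset.mem_univ, true_and,
            Finset.notMem_empty, iff_false, Fin.lt_def, hi0]
          omega
        have hci : c i = 0 := by
          rw [hc]
          exact Finset.sum_eq_zero fun j _ => hexp i j (by rw [Fin.le_def, hi0]; exact Nat.zero_le _)
        have hev : ∀ h ∈ Set.Ioc (0 : ℝ) h₀,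
            Y h i ν - (yn ν + h * c i * F yn ν) = 0 := by
          intro h hh
          have := (hS h hh).2.2 i ν
          rw [hfe, Finset.sum_empty, mul_zero, add_zero] at this
          rw [this, hci]
          ring
        have : (fun h => Y h i ν - (yn ν + h * c i * F yn ν)) =ᶠ[l] fun _ => (0 : ℝ) :=
          eventually_of_mem hmem hev
        exact (isBigO_zero _ l).congr' this.symm (EventuallyEq.refl _ _)
      · -- later stage
        -- O(h) estimates for previous stages
        have yj_close : ∀ j : Fin s, j < i → ∀ μ,
            (fun h => Y h j μ - yn μ) =O[l] fun h => h := by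
          intro j hj μ
          have h1 := (IHj j hj μ).trans hsq
          have h2 : (fun h : ℝ => h * (c j * F yn μ)) =O[l] fun h => h := by
            have := (isBigO_refl (fun h : ℝ => h) l).const_mul_left (c j * F yn μ)
            exact this.congr_left fun h => by ring
          have := h1.add h2
          exact this.congr_left fun h => by ring
        have yj_pi : ∀ j : Fin s, j < i →
            (fun h => (fun μ => Y h j μ - yn μ : Fin N → ℝ)) =O[l] fun h => h := by
          intro j hj
          exact isBigO_pi.2 fun μ => yj_close j hj μ
        -- Lipschitz estimates
        have pdiff : ∀ (f : (Fin N → ℝ) → ℝ), (∃ K, LipschitzWith K f) →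
            ∀ j : Fin s, j < i →
            (fun h => f (Y h j) - f yn) =O[l] fun h => h := by
          intro f hf j hj
          obtain ⟨K, hK⟩ := hf
          have hb : ∀ h : ℝ, ‖f (Y h j) - f yn‖ ≤
              K * ‖(fun μ => Y h j μ - yn μ : Fin N → ℝ)‖ := by
            intro h
            have := hK.dist_le_mul (Y h j) yn
            simpa [dist_eq_norm, show (Y h j - yn) = (fun μ => Y h j μ - yn μ) from rfl]
              using this
          have h1 : (fun h => f (Y h j) - f yn) =O[l]
              fun h => (fun μ => Y h j μ - yn μ : Fin N → ℝ) :=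
            IsBigO.of_bound K (Eventually.of_forall hb)
          exact h1.trans (yj_pi j hj)
        have pbound : ∀ (f : (Fin N → ℝ) → ℝ), (∃ K, LipschitzWith K f) →
            ∀ j : Fin s, j < i →
            (fun h => f (Y h j)) =O[l] fun _ => (1 : ℝ) := by
          intro f hf j hj
          have h1 := (pdiff f hf j hj).trans hho
          have h2 : (fun _ : ℝ => f yn) =O[l] fun _ => (1 : ℝ) :=
            isBigO_const_const _ one_ne_zero l
          have := h1.add h2
          exact this.congr_left fun h => by ring
        -- ratio estimates
        have hr : ∀ μ, (fun h => Y h i μ / ρ h i μ - 1) =O[l] fun h => h :=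
          hratio i hi0
        -- the key remainder term
        set T : Fin s → Fin N → ℝ → ℝ := fun j μ h =>
          p ν μ (Y h j) * (Y h i μ / ρ h i μ) - d ν μ (Y h j) * (Y h i ν / ρ h i ν)
            - (p ν μ yn - d ν μ yn) with hT
        have hTO : ∀ j : Fin s, j < i → ∀ μ, T j μ =O[l] fun h => h := by
          intro j hj μ
          have e1 : T j μ = fun h =>
              p ν μ (Y h j) * (Y h i μ / ρ h i μ - 1)
              - d ν μ (Y h j) * (Y h i ν / ρ h i ν - 1)
              + (p ν μ (Y h j) - p ν μ yn) - (d ν μ (Y h j) - d ν μ yn) := by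
            funext h; simp only [hT]; ring
          rw [e1]
          have A := mulO_aux (pbound _ (hpL ν μ) j hj) (hr μ)
          have B := mulO_aux (pbound _ (hdL ν μ) j hj) (hr ν)
          have C := pdiff _ (hpL ν μ) j hj
          have D := pdiff _ (hdL ν μ) j hj
          exact ((A.sub B).add C).sub D
        -- the sum remainder
        have hGO : (fun h => ∑ j ∈ Finset.univ.filter (fun j => j < i),
            a i j * ∑ μ, T j μ h) =O[l] fun h => h := by
          apply IsBigO.fun_sum
          intro j hj
          rw [Finset.mem_filter] at hj
          have := IsBigO.fun_sum (fun μ (_ : μ ∈ Finset.univ) => hTO j hj.2 μ)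
          exact this.const_mul_left (a i j)
        -- eventual identity
        have hevq : ∀ h ∈ Set.Ioc (0 : ℝ) h₀,
            Y h i ν - (yn ν + h * c i * F yn ν) =
              h * ∑ j ∈ Finset.univ.filter (fun j => j < i),
                a i j * ∑ μ, T j μ h := by
          intro h hh
          have e1 := (hS h hh).2.2 i ν
          have hcf : c i = ∑ j ∈ Finset.univ.filter (fun j => j < i), a i j := by
            rw [hc]
            exact (Finset.sum_filter_of_ne fun j _ hne => by
              by_contra hlt
              exact hne (hexp i j (le_of_not_gt hlt))).symm
          rw [e1, hcf, hF]
          simp only [hT, Finset.sum_sub_distrib, mul_sub, Finset.sum_mul, div_eq_mul_inv, mul_assoc]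
          ring
        have heq : (fun h => Y h i ν - (yn ν + h * c i * F yn ν)) =ᶠ[l]
            fun h => h * ∑ j ∈ Finset.univ.filter (fun j => j < i),
              a i j * ∑ μ, T j μ h :=
          eventually_of_mem hmem hevq
        have := (isBigO_refl (fun h : ℝ => h) l).mul hGO
        refine (this.congr' heq.symm ?_).trans (isBigO_refl _ _)
        exact Eventually.of_forall fun h => (sq h).symm
  intro i ν
  exact main s i i.isLt ν
end

section
/- Consider an absolutely conservative production–destruction system on ℝ^N whose functions p_{mν}, d_{mν} are nonnegative, three times continuously differentiable and Lipschitz continuous, an explicit s-stage Runge–Kutta scheme with nonnegative a_{ij}, b_j and nodes c_i = Σ_j a_{ij}, and a state y^n ∈ ℝ^N with positive entries. Suppose that for every h in some interval (0,h₀] there are positive denominators ρ_{iν}(h) and stage vectors y^{(i)}(h) with positive entries satisfying the MPRK stage equations, and that y^{(i)}_ν(h)/ρ_{iν}(h) = 1 + O(h²) as h → 0⁺ for all i = 2,…,s and ν = 1,…,N. Then y^{(i)}_ν(h) = y^n_ν + h c_i F_ν(y^n) + h² (Σ_{k} a_{ik} c_k) (DF(y^n) F(y^n))_ν + O(h³)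 as h → 0⁺, for all i and ν, where F_m(y) = Σ_ν (p_{mν}(y) − d_{mν}(y)) and DF denotes the Jacobian of F. (This is Lemma 5.7 of the paper with the corrected coefficient Σ_k a_{ik} c_k in the h²-term, consistent with the Taylor expansion of the stages.) -/
open Topology Asymptotics Filter Finset

private lemma hpowO (k l : ℕ) (hkl : l ≤ k) :
    (fun h : ℝ => h ^ k) =O[𝓝[>] (0 : ℝ)] fun h => h ^ l := by
  apply IsBigO.of_bound 1
  filter_upwards [Ioc_mem_nhdsGT (by norm_num : (0:ℝ) < 1)] with h hh
  rw [one_mul, Real.norm_eq_abs, Real.norm_eq_abs,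
    abs_of_nonneg (pow_nonneg hh.1.le _), abs_of_nonneg (pow_nonneg hh.1.le _)]
  exact pow_le_pow_of_le_one hh.1.le hh.2 hkl

private lemma hmulO (A : ℝ) (k : ℕ) :
    (fun h : ℝ => h ^ k * A) =O[𝓝[>] (0 : ℝ)] fun h => h ^ k := by
  simpa using (isBigO_refl (fun h : ℝ => h ^ k) (𝓝[>] (0:ℝ))).mul
    (isBigO_const_const A (one_ne_zero (α := ℝ)) _)

private lemma htendsto0 : Tendsto (fun h : ℝ => h) (𝓝[>] (0:ℝ)) (𝓝 0) :=
  tendsto_id.mono_left nhdsWithin_le_nhds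

private lemma lipO {E : Type*} [NormedAddCommGroup E] {g : E → ℝ} {K : NNReal}
    (hg : LipschitzWith K g) (a : E) {u : ℝ → E}
    (hu : (fun h => u h - a) =O[𝓝[>] (0:ℝ)] fun h => h) :
    (fun h => g (u h) - g a) =O[𝓝[>] (0:ℝ)] fun h => h := by
  refine (IsBigO.of_bound K ?_).trans hu.norm_left
  filter_upwards with h
  have := hg.dist_le_mul (u h) a
  rw [dist_eq_norm, dist_eq_norm] at this
  simpa [abs_of_nonneg (norm_nonneg (u h - a))] using this

/-- Second-order Taylor remainder along a curve `u h = a + O(h)`. -/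
private lemma taylorO2 {E : Type*} [NormedAddCommGroup E] [NormedSpace ℝ E]
    {g : E → ℝ} (hg : ContDiff ℝ 3 g) (a : E) {u : ℝ → E}
    (hu : (fun h => u h - a) =O[𝓝[>] (0:ℝ)] fun h => h) :
    (fun h => g (u h) - g a - fderiv ℝ g a (u h - a)) =O[𝓝[>] (0:ℝ)] fun h => h ^ 2 := by
  have hdiffg : Differentiable ℝ g := hg.differentiable (by norm_num)
  have hd : DifferentiableAt ℝ (fderiv ℝ g) a :=
    ((hg.fderiv_right (m := 1) (by norm_num)).differentiable one_ne_zero).differentiableAt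
  obtain ⟨C, hC⟩ := hd.isBigO_sub.bound
  obtain ⟨δ, hδpos, hball⟩ := Metric.eventually_nhds_iff_ball.1 hC
  set C' := max C 0 with hC'
  have hC'0 : 0 ≤ C' := le_max_right _ _
  have hb : ∀ y ∈ Metric.ball a δ, ‖fderiv ℝ g y - fderiv ℝ g a‖ ≤ C' * ‖y - a‖ := by
    intro y hy
    exact (hball y hy).trans (mul_le_mul_of_nonneg_right (le_max_left _ _) (norm_nonneg _))
  have key : ∀ x : E, dist x a < δ →
      ‖g x - g a - fderiv ℝ g a (x - a)‖ ≤ C' * ‖x - a‖ * ‖x - a‖ := by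
    intro x hx
    set φ : E → ℝ := fun y => g y - fderiv ℝ g a (y - a) with hφ
    set s : Set E := Metric.closedBall a ‖x - a‖ with hs
    have hsub : s ⊆ Metric.ball a δ := by
      intro y hy
      have hle : dist y a ≤ dist x a := by
        simpa [dist_eq_norm] using Metric.mem_closedBall.1 hy
      exact Metric.mem_ball.2 (lt_of_le_of_lt hle hx)
    have hder : ∀ y ∈ s, HasFDerivWithinAt φ (fderiv ℝ g y - fderiv ℝ g a) s y := by
      intro y _
      have h1 : HasFDerivAt g (fderiv ℝ g y) y := (hdiffg y).hasFDerivAt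
      have h2 : HasFDerivAt (fun y => (fderiv ℝ g a) (y - a)) (fderiv ℝ g a) y := by
        simpa [map_sub] using ((fderiv ℝ g a).hasFDerivAt (x := y)).sub_const
          ((fderiv ℝ g a) a)
      exact (h1.sub h2).hasFDerivWithinAt
    have hbound : ∀ y ∈ s, ‖fderiv ℝ g y - fderiv ℝ g a‖ ≤ C' * ‖x - a‖ := by
      intro y hy
      refine (hb y (hsub hy)).trans ?_
      have : ‖y - a‖ ≤ ‖x - a‖ := by
        have := Metric.mem_closedBall.1 hy; rwa [dist_eq_norm] at this
      exact mul_le_mul_of_nonneg_left this hC'0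
    have hxs : x ∈ s := by simp [hs, Metric.mem_closedBall, dist_eq_norm]
    have has : a ∈ s := Metric.mem_closedBall_self (norm_nonneg _)
    have := (convex_closedBall a ‖x - a‖).norm_image_sub_le_of_norm_hasFDerivWithin_le
      hder hbound has hxs
    have hφa : φ a = g a := by simp [hφ]
    calc ‖g x - g a - fderiv ℝ g a (x - a)‖ = ‖φ x - φ a‖ := by
          rw [hφa]; congr 1; simp [hφ]; ring
      _ ≤ C' * ‖x - a‖ * ‖x - a‖ := this
  have htend : Tendsto (fun h => u h - a) (𝓝[>] (0:ℝ)) (𝓝 0) := by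
    have := hu.trans_tendsto htendsto0
    simpa using this
  have hev : ∀ᶠ h in 𝓝[>] (0:ℝ), dist (u h) a < δ := by
    have := Metric.tendsto_nhds.1 htend δ hδpos
    filter_upwards [this] with h hh
    rwa [dist_zero_right, ← dist_eq_norm] at hh
  have h1 : (fun h => g (u h) - g a - fderiv ℝ g a (u h - a)) =O[𝓝[>] (0:ℝ)]
      fun h => ‖u h - a‖ * ‖u h - a‖ := by
    refine IsBigO.of_bound C' ?_
    filter_upwards [hev] with h hh
    have := key (u h) hh
    calc ‖g (u h) - g a - fderiv ℝ g a (u h - a)‖ ≤ C' * ‖u h - a‖ * ‖u h - a‖ := this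
      _ = C' * ‖‖u h - a‖ * ‖u h - a‖‖ := by
          rw [Real.norm_of_nonneg (mul_nonneg (norm_nonneg _) (norm_nonneg _))]; ring
  have h2 : (fun h : ℝ => ‖u h - a‖ * ‖u h - a‖) =O[𝓝[>] (0:ℝ)] fun h => h ^ 2 := by
    simpa [pow_two] using hu.norm_left.mul hu.norm_left
  exact h1.trans h2

/-- Lemma 5.7 (Izgin–Ketcheson–Meister), with the corrected h²-coefficient
Σ_k a_{ik} c_k: Taylor expansion of the MPRK stages to second order, assuming
the Patankar weights satisfy y⁽ⁱ⁾_ν/ρ_{iν} = 1 + O(h²). -/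
theorem stmt11 (N s : ℕ)
    (p d : Fin N → Fin N → (Fin N → ℝ) → ℝ)
    (hp0 : ∀ m ν y, 0 ≤ p m ν y) (hd0 : ∀ m ν y, 0 ≤ d m ν y)
    (hpC : ∀ m ν, ContDiff ℝ 3 (p m ν)) (hdC : ∀ m ν, ContDiff ℝ 3 (d m ν))
    (hpL : ∀ m ν, ∃ K, LipschitzWith K (p m ν))
    (hdL : ∀ m ν, ∃ K, LipschitzWith K (d m ν))
    (hcons : ∀ m ν, p m ν = d ν m)
    (hdiagp : ∀ m, p m m = 0) (hdiagd : ∀ m, d m m = 0)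
    (a : Fin s → Fin s → ℝ) (b c : Fin s → ℝ)
    (hexp : ∀ i j : Fin s, i ≤ j → a i j = 0)
    (ha : ∀ i j, 0 ≤ a i j) (hb : ∀ j, 0 ≤ b j)
    (hc : ∀ i, c i = ∑ j, a i j)
    (yn : Fin N → ℝ) (hyn : ∀ m, 0 < yn m)
    (F : (Fin N → ℝ) → (Fin N → ℝ))
    (hF : ∀ y m, F y m = ∑ ν, (p m ν y - d m ν y))
    (ρ : ℝ → Fin s → Fin N → ℝ) (Y : ℝ → Fin s → Fin N → ℝ)
    (hstage : ∃ h₀ > (0 : ℝ), ∀ h ∈ Set.Ioc (0 : ℝ) h₀,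
      (∀ (i : Fin s) ν, (i : ℕ) ≠ 0 → 0 < ρ h i ν) ∧
      (∀ i m, 0 < Y h i m) ∧
      (∀ i m, Y h i m = yn m +
        h * ∑ j ∈ Finset.univ.filter (fun j => j < i), a i j *
          ∑ ν, (p m ν (Y h j) * Y h i ν / ρ h i ν - d m ν (Y h j) * Y h i m / ρ h i m)))
    (hratio : ∀ i : Fin s, (i : ℕ) ≠ 0 → ∀ ν,
      (fun h => Y h i ν / ρ h i ν - 1) =O[𝓝[>] (0 : ℝ)] fun h => h ^ 2) :
    ∀ i ν, (fun h => Y h i ν -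
        (yn ν + h * c i * F yn ν +
          h ^ 2 * (∑ k, a i k * c k) * fderiv ℝ F yn (F yn) ν))
      =O[𝓝[>] (0 : ℝ)] fun h => h ^ 3 := by
  obtain ⟨h₀, hh₀, hS⟩ := hstage
  have hEv : ∀ᶠ h in 𝓝[>] (0:ℝ), h ∈ Set.Ioc (0:ℝ) h₀ := Ioc_mem_nhdsGT hh₀
  set L := 𝓝[>] (0:ℝ) with hLdef
  set Fm : Fin N → (Fin N → ℝ) → ℝ := fun m y => ∑ ν, (p m ν y - d m ν y) with hFmdef
  have hFmC : ∀ m, ContDiff ℝ 3 (Fm m) := fun m =>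
    ContDiff.sum fun ν _ => (hpC m ν).sub (hdC m ν)
  have hFe : F = fun y m => Fm m y := by funext y m; exact hF y m
  have hDF : ∀ m, fderiv ℝ F yn (F yn) m = fderiv ℝ (Fm m) yn (F yn) := by
    intro m
    conv_lhs => rw [hFe]
    rw [fderiv_pi (fun m' => ((hFmC m').differentiable (by norm_num)).differentiableAt)]
    simp [ContinuousLinearMap.pi_apply, hFe]
  set D : Fin N → ℝ := fderiv ℝ F yn (F yn) with hDdef
  suffices H : ∀ n : ℕ, ∀ i : Fin s, (i : ℕ) = n → ∀ m, (fun h => Y h i m -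
      (yn m + h * c i * F yn m + h ^ 2 * (∑ k, a i k * c k) * D m))
      =O[L] fun h => h ^ 3 by
    intro i ν; exact H i i rfl ν
  intro n
  induction n using Nat.strong_induction_on with
  | _ n IH =>
    intro i hi m
    have IH' : ∀ j : Fin s, j < i → ∀ m', (fun h => Y h j m' -
        (yn m' + h * c j * F yn m' + h ^ 2 * (∑ k, a j k * c k) * D m'))
        =O[L] fun h => h ^ 3 := by
      intro j hj m'
      have hjn : (j : ℕ) < n := hi ▸ (Fin.lt_def.mp hj)
      exact IH j hjn j rfl m'
    have o2 : ∀ j : Fin s, j < i →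
        (fun h => Y h j - yn - (h * c j) • F yn) =O[L] fun h => h ^ 2 := by
      intro j hj
      rw [isBigO_pi]
      intro ν
      have h1 := IH' j hj ν
      have e : (fun h : ℝ => (Y h j - yn - (h * c j) • F yn) ν)
          = fun h => (Y h j ν - (yn ν + h * c j * F yn ν
              + h ^ 2 * (∑ k, a j k * c k) * D ν))
            + h ^ 2 * ((∑ k, a j k * c k) * D ν) := by
        funext h
        simp only [Pi.sub_apply, Pi.smul_apply, smul_eq_mul]
        ring
      rw [e]
      exact (h1.trans (hpowO 3 2 (by norm_num))).add (hmulO _ 2)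
    have o1 : ∀ j : Fin s, j < i →
        (fun h => Y h j - yn) =O[L] fun h => h := by
      intro j hj
      have h2 := o2 j hj
      have e : (fun h : ℝ => Y h j - yn)
          = fun h => (Y h j - yn - (h * c j) • F yn) + (h * c j) • F yn := by
        funext h; abel
      rw [e]
      refine IsBigO.add (h2.trans (by simpa using hpowO 2 1 (by norm_num))) ?_
      rw [isBigO_pi]
      intro ν
      simpa [pow_one, mul_assoc] using hmulO (c j * F yn ν) 1
    have pO : ∀ j : Fin s, j < i → ∀ ν,
        (fun h => p m ν (Y h j)) =O[L] fun _ => (1:ℝ) := by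
      intro j hj ν
      obtain ⟨K, hK⟩ := hpL m ν
      have h1 : (fun h => p m ν (Y h j) - p m ν yn) =O[L] fun h => h :=
        lipO hK yn (o1 j hj)
      have h2 : (fun h : ℝ => h) =O[L] fun _ => (1:ℝ) := htendsto0.isBigO_one (F := ℝ)
      have h3 : (fun _ : ℝ => p m ν yn) =O[L] fun _ => (1:ℝ) :=
        isBigO_const_const _ one_ne_zero _
      simpa using (h1.trans h2).add h3
    have dO : ∀ j : Fin s, j < i → ∀ ν,
        (fun h => d m ν (Y h j)) =O[L] fun _ => (1:ℝ) := by
      intro j hj ν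
      obtain ⟨K, hK⟩ := hdL m ν
      have h1 : (fun h => d m ν (Y h j) - d m ν yn) =O[L] fun h => h :=
        lipO hK yn (o1 j hj)
      have h2 : (fun h : ℝ => h) =O[L] fun _ => (1:ℝ) := htendsto0.isBigO_one (F := ℝ)
      have h3 : (fun _ : ℝ => d m ν yn) =O[L] fun _ => (1:ℝ) :=
        isBigO_const_const _ one_ne_zero _
      simpa using (h1.trans h2).add h3
    have key : ∀ j : Fin s, j < i →
        (fun h => (∑ ν, (p m ν (Y h j) * Y h i ν / ρ h i ν
            - d m ν (Y h j) * Y h i m / ρ h i m))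
          - F yn m - h * c j * D m) =O[L] fun h => h ^ 2 := by
      intro j hj
      have i0 : (i : ℕ) ≠ 0 := by
        have := Fin.lt_def.mp hj; omega
      set Dg := fderiv ℝ (Fm m) yn with hDg
      have tA : (fun h => ∑ ν, (p m ν (Y h j) * (Y h i ν / ρ h i ν - 1)
          - d m ν (Y h j) * (Y h i m / ρ h i m - 1))) =O[L] fun h => h ^ 2 := by
        refine IsBigO.fun_sum fun ν _ => IsBigO.sub ?_ ?_
        · simpa using (pO j hj ν).mul (hratio i i0 ν)
        · simpa using (dO j hj ν).mul (hratio i i0 m)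
      have tB : (fun h => Fm m (Y h j) - Fm m yn - Dg (Y h j - yn)) =O[L] fun h => h ^ 2 :=
        taylorO2 (hFmC m) yn (o1 j hj)
      have tC : (fun h => Dg (Y h j - yn - (h * c j) • F yn)) =O[L] fun h => h ^ 2 :=
        (Dg.isBigO_comp _ _).trans (o2 j hj)
      have hiden : (fun h => (∑ ν, (p m ν (Y h j) * Y h i ν / ρ h i ν
            - d m ν (Y h j) * Y h i m / ρ h i m)) - F yn m - h * c j * D m)
          = fun h => (∑ ν, (p m ν (Y h j) * (Y h i ν / ρ h i ν - 1)
              - d m ν (Y h j) * (Y h i m / ρ h i m - 1)))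
            + (Fm m (Y h j) - Fm m yn - Dg (Y h j - yn))
            + Dg (Y h j - yn - (h * c j) • F yn) := by
        funext h
        have e1 : (∑ ν, (p m ν (Y h j) * Y h i ν / ρ h i ν
              - d m ν (Y h j) * Y h i m / ρ h i m))
            = (∑ ν, (p m ν (Y h j) * (Y h i ν / ρ h i ν - 1)
                - d m ν (Y h j) * (Y h i m / ρ h i m - 1))) + Fm m (Y h j) := by
          simp only [hFmdef]
          rw [← Finset.sum_add_distrib]
          exact Finset.sum_congr rfl fun ν _ => by ring
        have e2 : Dg (Y h j - yn - (h * c j) • F yn)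
            = Dg (Y h j - yn) - h * c j * Dg (F yn) := by
          rw [map_sub, map_smul, smul_eq_mul]
        have e3 : F yn m = Fm m yn := hF yn m
        have e4 : D m = Dg (F yn) := hDF m
        rw [e1, e2, e3, e4]; ring
      rw [hiden]
      exact (tA.add tB).add tC
    have hcfil : c i = ∑ j ∈ univ.filter (fun j => j < i), a i j := by
      rw [hc i]
      refine (Finset.sum_filter_of_ne fun j _ hne => ?_).symm
      by_contra hcon
      exact hne (hexp i j (not_lt.mp hcon))
    have hacfil : (∑ k, a i k * c k) = ∑ k ∈ univ.filter (fun j => j < i), a i k * c k := by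
      refine (Finset.sum_filter_of_ne fun k _ hne => ?_).symm
      by_contra hcon
      exact hne (by rw [hexp i k (not_lt.mp hcon), zero_mul])
    have heq : (fun h => Y h i m - (yn m + h * c i * F yn m
          + h ^ 2 * (∑ k, a i k * c k) * D m))
        =ᶠ[L] (fun h => h * ∑ j ∈ univ.filter (fun j => j < i), a i j *
            ((∑ ν, (p m ν (Y h j) * Y h i ν / ρ h i ν
              - d m ν (Y h j) * Y h i m / ρ h i m))
              - F yn m - h * c j * D m)) := by
      filter_upwards [hEv] with h hh
      have hst := (hS h hh).2.2 i m
      set T : Fin s → ℝ := fun j => ∑ ν, (p m ν (Y h j) * Y h i ν / ρ h i ν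
        - d m ν (Y h j) * Y h i m / ρ h i m) with hT
      have expand : (∑ j ∈ univ.filter (fun j => j < i),
            a i j * (T j - F yn m - h * c j * D m))
          = (∑ j ∈ univ.filter (fun j => j < i), a i j * T j)
            - (∑ j ∈ univ.filter (fun j => j < i), a i j) * F yn m
            - h * D m * (∑ j ∈ univ.filter (fun j => j < i), a i j * c j) := by
        rw [Finset.sum_mul, Finset.mul_sum, ← Finset.sum_sub_distrib,
          ← Finset.sum_sub_distrib]
        exact Finset.sum_congr rfl fun j _ => by ring
      conv_lhs => rw [hst, hcfil, hacfil]
      rw [expand]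
      ring
    have hsum : (fun h => ∑ j ∈ univ.filter (fun j => j < i), a i j *
        ((∑ ν, (p m ν (Y h j) * Y h i ν / ρ h i ν
          - d m ν (Y h j) * Y h i m / ρ h i m))
          - F yn m - h * c j * D m)) =O[L] fun h => h ^ 2 := by
      refine IsBigO.fun_sum fun j hj => ?_
      exact (key j (Finset.mem_filter.mp hj).2).const_mul_left _
    have hbig := (isBigO_refl (fun h : ℝ => h) L).mul hsum
    have hbig' : (fun h : ℝ => h * ∑ j ∈ univ.filter (fun j => j < i), a i j *
        ((∑ ν, (p m ν (Y h j) * Y h i ν / ρ h i ν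
          - d m ν (Y h j) * Y h i m / ρ h i m))
          - F yn m - h * c j * D m)) =O[L] fun h => h ^ 3 :=
      hbig.congr (fun _ => rfl) (fun x => by ring)
    exact hbig'.congr' heq.symm (EventuallyEq.refl _ _)
end

section
/- Consider an absolutely conservative production–destruction system on ℝ^N whose functions p_{mν}, d_{mν} are nonnegative, twice continuously differentiable and Lipschitz continuous, an explicit s-stage Runge–Kutta scheme with nonnegative a_{ij}, b_j satisfying Σ_j b_j = 1, and a state y^n ∈ ℝ^N with positive entries. Suppose that for every h in some interval (0,h₀] there are positive denominators ρ_{iν}(h), σ_ν(h), stage vectors y^{(i)}(h) and an update y^{n+1}(h), all with positive entries, satisfying the MPRK stage and update equations; suppose moreover that y^{(i)}(h), y^{n+1}(h) and the ratios y^{(i)}_ν(h)/ρ_{iν}(h) remain bounded as h → 0⁺. If σ_μ(h) = y^n_μ + O(h) as h → 0⁺ for all μ = 1,…,N, then y^{n+1}(h) = y^n + h F(y^n) + O(h²) as h → 0⁺, i.e. the MPRK scheme is of order at least 1, where F_m(y) = Σ_ν (p_{mν}(y) − d_{mν}(y)). -/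
open Topology Asymptotics Filter Finset

/-- First-order sufficiency for MPRK schemes (cf. Theorem 5.5 of
Izgin–Ketcheson–Meister): if σ_μ = yⁿ_μ + O(h), then the MPRK scheme is of
order at least one. -/
theorem stmt12 (N s : ℕ)
    (p d : Fin N → Fin N → (Fin N → ℝ) → ℝ)
    (hp0 : ∀ m ν y, 0 ≤ p m ν y) (hd0 : ∀ m ν y, 0 ≤ d m ν y)
    (hpC : ∀ m ν, ContDiff ℝ 2 (p m ν)) (hdC : ∀ m ν, ContDiff ℝ 2 (d m ν))
    (hpL : ∀ m ν, ∃ K, LipschitzWith K (p m ν))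
    (hdL : ∀ m ν, ∃ K, LipschitzWith K (d m ν))
    (hcons : ∀ m ν, p m ν = d ν m)
    (hdiagp : ∀ m, p m m = 0) (hdiagd : ∀ m, d m m = 0)
    (a : Fin s → Fin s → ℝ) (b : Fin s → ℝ)
    (hexp : ∀ i j : Fin s, i ≤ j → a i j = 0)
    (ha : ∀ i j, 0 ≤ a i j) (hb : ∀ j, 0 ≤ b j)
    (hbsum : ∑ j, b j = 1)
    (yn : Fin N → ℝ) (hyn : ∀ m, 0 < yn m)
    (F : (Fin N → ℝ) → (Fin N → ℝ))
    (hF : ∀ y m, F y m = ∑ ν, (p m ν y - d m ν y))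
    (ρ : ℝ → Fin s → Fin N → ℝ) (σ : ℝ → Fin N → ℝ)
    (Y : ℝ → Fin s → Fin N → ℝ) (ynext : ℝ → Fin N → ℝ)
    (hscheme : ∃ h₀ > (0 : ℝ), ∀ h ∈ Set.Ioc (0 : ℝ) h₀,
      (∀ (i : Fin s) ν, (i : ℕ) ≠ 0 → 0 < ρ h i ν) ∧
      (∀ ν, 0 < σ h ν) ∧
      (∀ i m, 0 < Y h i m) ∧ (∀ m, 0 < ynext h m) ∧
      (∀ i m, Y h i m = yn m +
        h * ∑ j ∈ Finset.univ.filter (fun j => j < i), a i j *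
          ∑ ν, (p m ν (Y h j) * Y h i ν / ρ h i ν -
                d m ν (Y h j) * Y h i m / ρ h i m)) ∧
      (∀ m, ynext h m = yn m +
        h * ∑ j, b j *
          ∑ ν, (p m ν (Y h j) * ynext h ν / σ h ν -
                d m ν (Y h j) * ynext h m / σ h m)))
    (hYbdd : ∀ i ν, (fun h => Y h i ν) =O[𝓝[>] (0 : ℝ)] fun _ => (1 : ℝ))
    (hynextbdd : ∀ m, (fun h => ynext h m) =O[𝓝[>] (0 : ℝ)] fun _ => (1 : ℝ))
    (hratiobdd : ∀ i : Fin s, (i : ℕ) ≠ 0 → ∀ ν,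
      (fun h => Y h i ν / ρ h i ν) =O[𝓝[>] (0 : ℝ)] fun _ => (1 : ℝ))
    (hσ : ∀ μ, (fun h => σ h μ - yn μ) =O[𝓝[>] (0 : ℝ)] fun h => h) :
    (fun h => ynext h - (yn + h • F yn)) =O[𝓝[>] (0 : ℝ)] fun h => h ^ 2 := by
  obtain ⟨h₀, hh₀, hsch⟩ := hscheme
  set L : Filter ℝ := 𝓝[>] (0 : ℝ) with hLdef
  have hev : ∀ᶠ h in L, h ∈ Set.Ioc (0 : ℝ) h₀ :=
    eventually_of_mem (Ioc_mem_nhdsGT_of_mem ⟨le_refl 0, hh₀⟩) fun x hx => hx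
  -- elementary big-O helpers
  have c1 : ∀ c : ℝ, (fun _ : ℝ => c) =O[L] (fun _ => (1 : ℝ)) := fun c =>
    isBigO_const_const c one_ne_zero L
  have hO1mul : ∀ {f g : ℝ → ℝ}, f =O[L] (fun _ => (1 : ℝ)) →
      g =O[L] (fun _ => (1 : ℝ)) →
      (fun x => f x * g x) =O[L] (fun _ => (1 : ℝ)) := by
    intro f g hf hg; simpa using hf.mul hg
  have hO1mulh : ∀ {f g : ℝ → ℝ}, f =O[L] (fun _ => (1 : ℝ)) →
      g =O[L] (fun h : ℝ => h) →
      (fun x => f x * g x) =O[L] (fun h : ℝ => h) := by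
    intro f g hf hg; simpa using hf.mul hg
  -- boundedness of stage vectors
  have hYdiff1 : ∀ j : Fin s, (fun h => Y h j - yn) =O[L] (fun _ => (1 : ℝ)) :=
    fun j => isBigO_pi.2 fun ν => (hYbdd j ν).sub (c1 (yn ν))
  have hpdiff : ∀ (m ν : Fin N) (j : Fin s),
      (fun h => p m ν (Y h j) - p m ν yn) =O[L] (fun h => ‖Y h j - yn‖) := by
    intro m ν j
    obtain ⟨K, hK⟩ := hpL m ν
    refine IsBigO.of_bound K (Filter.Eventually.of_forall fun h => ?_)
    have := hK.dist_le_mul (Y h j) yn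
    simpa [dist_eq_norm] using this
  have hpO1 : ∀ (m ν : Fin N) (j : Fin s),
      (fun h => p m ν (Y h j)) =O[L] (fun _ => (1 : ℝ)) := by
    intro m ν j
    have h1 := (hpdiff m ν j).trans (hYdiff1 j).norm_left
    have h2 := h1.add (c1 (p m ν yn))
    simpa using h2
  have hdO1 : ∀ (m ν : Fin N) (j : Fin s),
      (fun h => d m ν (Y h j)) =O[L] (fun _ => (1 : ℝ)) := by
    intro m ν j; rw [← hcons ν m]; exact hpO1 ν m j
  -- first order accuracy of the stages
  have hstage : ∀ i : Fin s, (fun h => Y h i - yn) =O[L] (fun h : ℝ => h) := by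
    intro i
    rw [isBigO_pi]
    intro m
    by_cases hi : (i : ℕ) = 0
    · have hz : (fun h => Y h i m - yn m) =ᶠ[L] (fun _ => (0 : ℝ)) := by
        filter_upwards [hev] with h hh
        obtain ⟨-, -, -, -, hstg, -⟩ := hsch h hh
        have hfe : Finset.univ.filter (fun j : Fin s => j < i) = ∅ := by
          refine Finset.filter_false_of_mem fun j _ => ?_
          simp [Fin.lt_def, hi]
        rw [hstg i m, hfe]
        simp
      exact (isBigO_zero _ L).congr' hz.symm EventuallyEq.rfl
    · set G : ℝ → ℝ := fun h =>
        ∑ j ∈ Finset.univ.filter (fun j => j < i), a i j *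
          ∑ ν, (p m ν (Y h j) * Y h i ν / ρ h i ν -
                d m ν (Y h j) * Y h i m / ρ h i m) with hG
      have hGO : G =O[L] (fun _ => (1 : ℝ)) := by
        refine IsBigO.fun_sum fun j _ => hO1mul (c1 (a i j)) ?_
        refine IsBigO.fun_sum fun ν _ => IsBigO.sub ?_ ?_
        · simpa [mul_div_assoc] using hO1mul (hpO1 m ν j) (hratiobdd i hi ν)
        · simpa [mul_div_assoc] using hO1mul (hdO1 m ν j) (hratiobdd i hi m)
      have hevG : (fun h => Y h i m - yn m) =ᶠ[L] fun h => h * G h := by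
        filter_upwards [hev] with h hh
        obtain ⟨-, -, -, -, hstg, -⟩ := hsch h hh
        rw [hstg i m, hG]
        ring
      have hmul : (fun h : ℝ => h * G h) =O[L] (fun h : ℝ => h) := by
        simpa using (isBigO_refl (fun h : ℝ => h) L).mul hGO
      exact hmul.congr' hevG.symm EventuallyEq.rfl
  -- σ tends to yn, hence σ⁻¹ is bounded
  have hσ0 : ∀ ν, Tendsto (fun h => σ h ν) L (𝓝 (yn ν)) := by
    intro ν
    have hh : Tendsto (fun h : ℝ => h) L (𝓝 0) :=
      tendsto_id.mono_left nhdsWithin_le_nhds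
    have h1 := (hσ ν).trans_tendsto hh
    have h2 := h1.add_const (yn ν)
    simpa using h2
  have hσinv : ∀ ν, (fun h => (σ h ν)⁻¹) =O[L] (fun _ => (1 : ℝ)) := fun ν =>
    ((hσ0 ν).inv₀ (hyn ν).ne').isBigO_one ℝ
  have hσpos : ∀ᶠ h in L, ∀ ν, 0 < σ h ν := by
    filter_upwards [hev] with h hh
    exact (hsch h hh).2.1
  -- first order accuracy of the update
  have hynextO : ∀ m, (fun h => ynext h m - yn m) =O[L] (fun h : ℝ => h) := by
    intro m
    set H : ℝ → ℝ := fun h => ∑ j, b j *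
      ∑ ν, (p m ν (Y h j) * ynext h ν / σ h ν -
            d m ν (Y h j) * ynext h m / σ h m) with hH
    have hHO : H =O[L] (fun _ => (1 : ℝ)) := by
      refine IsBigO.fun_sum fun j _ => hO1mul (c1 (b j)) ?_
      refine IsBigO.fun_sum fun ν _ => IsBigO.sub ?_ ?_
      · simpa [div_eq_mul_inv, mul_assoc] using
          hO1mul (hpO1 m ν j) (hO1mul (hynextbdd ν) (hσinv ν))
      · simpa [div_eq_mul_inv, mul_assoc] using
          hO1mul (hdO1 m ν j) (hO1mul (hynextbdd m) (hσinv m))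
    have hevH : (fun h => ynext h m - yn m) =ᶠ[L] fun h => h * H h := by
      filter_upwards [hev] with h hh
      rw [(hsch h hh).2.2.2.2.2 m, hH]
      ring
    have hmul : (fun h : ℝ => h * H h) =O[L] (fun h : ℝ => h) := by
      simpa using (isBigO_refl (fun h : ℝ => h) L).mul hHO
    exact hmul.congr' hevH.symm EventuallyEq.rfl
  -- the ratio ynext/σ is 1 + O(h)
  have hratio1 : ∀ ν, (fun h => ynext h ν / σ h ν - 1) =O[L] (fun h : ℝ => h) := by
    intro ν
    have hdiff : (fun h => ynext h ν - σ h ν) =O[L] (fun h : ℝ => h) := by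
      have h1 := (hynextO ν).sub (hσ ν)
      simpa [sub_sub_sub_cancel_right] using h1
    have hmul : (fun h => (ynext h ν - σ h ν) * (σ h ν)⁻¹) =O[L] (fun h : ℝ => h) := by
      simpa using hdiff.mul (hσinv ν)
    refine hmul.congr' ?_ EventuallyEq.rfl
    filter_upwards [hσpos] with h hσp
    field_simp [(hσp ν).ne']
  -- O(h) estimates for the production/destruction terms along the stages
  have hpOh : ∀ (m ν : Fin N) (j : Fin s),
      (fun h => p m ν (Y h j) - p m ν yn) =O[L] (fun h : ℝ => h) :=
    fun m ν j => (hpdiff m ν j).trans (hstage j).norm_left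
  have hdOh : ∀ (m ν : Fin N) (j : Fin s),
      (fun h => d m ν (Y h j) - d m ν yn) =O[L] (fun h : ℝ => h) := by
    intro m ν j; rw [← hcons ν m]; exact hpOh ν m j
  -- final assembly
  rw [isBigO_pi]
  intro m
  have hgoal : (fun h => (ynext h - (yn + h • F yn)) m) =
      fun h => ynext h m - (yn m + h * F yn m) := by
    funext h
    simp [Pi.sub_apply, Pi.add_apply, Pi.smul_apply, smul_eq_mul]
  rw [hgoal]
  set T : ℝ → ℝ := fun h => ∑ j, b j *
    ∑ ν, ((p m ν (Y h j) * ynext h ν / σ h ν -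
           d m ν (Y h j) * ynext h m / σ h m) - (p m ν yn - d m ν yn)) with hT
  have hTO : T =O[L] (fun h : ℝ => h) := by
    refine IsBigO.fun_sum fun j _ => hO1mulh (c1 (b j)) ?_
    refine IsBigO.fun_sum fun ν _ => ?_
    have t1 : (fun h => p m ν (Y h j) * (ynext h ν / σ h ν - 1) +
        (p m ν (Y h j) - p m ν yn)) =O[L] (fun h : ℝ => h) :=
      (hO1mulh (hpO1 m ν j) (hratio1 ν)).add (hpOh m ν j)
    have t2 : (fun h => d m ν (Y h j) * (ynext h m / σ h m - 1) +
        (d m ν (Y h j) - d m ν yn)) =O[L] (fun h : ℝ => h) :=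
      (hO1mulh (hdO1 m ν j) (hratio1 m)).add (hdOh m ν j)
    exact (t1.sub t2).congr_left fun h => by ring
  have hevT : (fun h => ynext h m - (yn m + h * F yn m)) =ᶠ[L] fun h => h * T h := by
    filter_upwards [hev] with h hh
    rw [(hsch h hh).2.2.2.2.2 m, hF, hT]
    have key : ∀ (A : Fin s → ℝ) (C : ℝ),
        yn m + h * ∑ j, b j * A j - (yn m + h * C) =
          h * ∑ j, b j * (A j - C) := by
      intro A C
      have h1 : ∑ j, b j * (A j - C) = (∑ j, b j * A j) - (∑ j, b j) * C := by
        simp only [mul_sub]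
        rw [Finset.sum_sub_distrib, Finset.sum_mul]
      rw [h1, hbsum]
      ring
    simp only [Finset.sum_sub_distrib]
    exact key (fun j => (∑ ν, p m ν (Y h j) * ynext h ν / σ h ν) -
      ∑ ν, d m ν (Y h j) * ynext h m / σ h m)
      ((∑ ν, p m ν yn) - ∑ ν, d m ν yn)
  have hfin : (fun h : ℝ => h * T h) =O[L] (fun h : ℝ => h ^ 2) := by
    simpa [pow_two] using (isBigO_refl (fun h : ℝ => h) L).mul hTO
  exact hfin.congr' hevT.symm EventuallyEq.rfl
end

section
/- Consider an absolutely conservative production–destruction system on ℝ^N whose functions p_{mν}, d_{mν} are nonnegative, three times continuously differentiable and Lipschitz continuous, an explicit 2-stage Runge–Kutta scheme of order 2 with nonnegative coefficients (b₁ + b₂ = 1, b₂c₂ = 1/2, c₂ = a₂₁), and a state y^n ∈ ℝ^N with positive entries. Suppose that for every h in some interval (0,h₀] there are positive denominators ρ_{2ν}(h), σ_ν(h), a stage y^{(2)}(h) and an update y^{n+1}(h), all with positive entries, satisfying the MPRK stage and update equations; suppose moreover that y^{(2)}(h), y^{n+1}(h) and the ratios y^{(2)}_ν(h)/ρ_{2ν}(h)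 remain bounded as h → 0⁺. If ρ_{2ν}(h) = y^n_ν + O(h) for all ν and σ_μ(h) = y^n_μ + h F_μ(y^n) + O(h²) for all μ, then y^{n+1}(h) = y^n + h F(y^n) + (h²/2) DF(y^n) F(y^n) + O(h³) as h → 0⁺, i.e. the MPRK scheme is of order at least 2; here F_m(y) = Σ_ν (p_{mν}(y) − d_{mν}(y)) and DF is the Jacobian of F. -/
open Topology Asymptotics Filter Finset

private lemma helper_ratio {α : Type*} {l : Filter α} {u v g : α → ℝ} {A : ℝ} (hA : A ≠ 0)
    (hv : Tendsto v l (𝓝 A)) (huv : (fun h => u h - v h) =O[l] g) :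
    (fun h => u h / v h - 1) =O[l] g := by
  have hv0 : ∀ᶠ h in l, v h ≠ 0 := hv.eventually_ne hA
  have hinv : (fun h => (v h)⁻¹) =O[l] (fun _ => (1 : ℝ)) := (hv.inv₀ hA).isBigO_one ℝ
  refine (huv.mul hinv).congr' ?_ ?_
  · filter_upwards [hv0] with h hv0
    field_simp
  · filter_upwards with h using mul_one _

private lemma helper_lip {α E : Type*} [NormedAddCommGroup E] {l : Filter α}
    {g : E → ℝ} {K : NNReal} (hg : LipschitzWith K g) (x : E) {u : α → E} {φ : α → ℝ}
    (hu : (fun h => u h - x) =O[l] φ) :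
    (fun h => g (u h) - g x) =O[l] φ := by
  refine IsBigO.trans ?_ hu
  refine IsBigO.of_bound K ?_
  filter_upwards with h
  have := hg.dist_le_mul (u h) x
  simpa [Real.dist_eq, dist_eq_norm, Real.norm_eq_abs] using this

private lemma helper_taylor2 {α : Type*} {l : Filter α} {E : Type*} [NormedAddCommGroup E]
    [NormedSpace ℝ E] {g : E → ℝ} (hg : ContDiff ℝ 2 g) (x : E) {u : α → E}
    (hu : Tendsto u l (𝓝 x)) :
    (fun h => g (u h) - g x - fderiv ℝ g x (u h - x)) =O[l]
      fun h => ‖u h - x‖ * ‖u h - x‖ := by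
  have hdiff : Differentiable ℝ g := hg.differentiable (by norm_num)
  have hC1 : ContDiffAt ℝ 1 (fderiv ℝ g) x :=
    (hg.fderiv_right (m := 1) (by norm_num)).contDiffAt
  obtain ⟨K, t, ht, hlip⟩ := hC1.exists_lipschitzOnWith
  obtain ⟨r, hr, hball⟩ := Metric.mem_nhds_iff.1 ht
  have hxt : x ∈ t := mem_of_mem_nhds ht
  have htend : Tendsto (fun h => ‖u h - x‖) l (𝓝 0) := by
    have h1 : Tendsto (fun h => u h - x) l (𝓝 0) := by
      simpa using hu.sub_const x
    simpa using h1.norm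
  have hev : ∀ᶠ h in l, ‖u h - x‖ < r / 2 := htend.eventually_lt_const (by linarith)
  refine IsBigO.of_bound K ?_
  filter_upwards [hev] with h hh
  have hsub : Metric.closedBall x ‖u h - x‖ ⊆ t := by
    refine subset_trans ?_ hball
    intro z hz
    have : dist z x ≤ ‖u h - x‖ := Metric.mem_closedBall.1 hz
    exact Metric.mem_ball.2 (by linarith)
  have bound : ∀ z ∈ Metric.closedBall x ‖u h - x‖,
      ‖fderiv ℝ g z - fderiv ℝ g x‖ ≤ (K : ℝ) * ‖u h - x‖ := by
    intro z hz
    have h1 := hlip.dist_le_mul z (hsub hz) x hxt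
    rw [dist_eq_norm, dist_eq_norm] at h1
    have h2 : ‖z - x‖ ≤ ‖u h - x‖ := by
      have := Metric.mem_closedBall.1 hz
      rwa [dist_eq_norm] at this
    calc ‖fderiv ℝ g z - fderiv ℝ g x‖ ≤ (K : ℝ) * ‖z - x‖ := h1
      _ ≤ (K : ℝ) * ‖u h - x‖ := by
          exact mul_le_mul_of_nonneg_left h2 K.coe_nonneg
  have key := Convex.norm_image_sub_le_of_norm_hasFDerivWithin_le'
      (f := g) (f' := fun z => fderiv ℝ g z) (φ := fderiv ℝ g x)
      (fun z _ => (hdiff z).hasFDerivAt.hasFDerivWithinAt)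
      bound (convex_closedBall x ‖u h - x‖)
      (Metric.mem_closedBall_self (norm_nonneg _))
      (Metric.mem_closedBall.2 (by rw [dist_eq_norm]))
  calc ‖g (u h) - g x - (fderiv ℝ g x) (u h - x)‖ ≤ (K : ℝ) * ‖u h - x‖ * ‖u h - x‖ := key
    _ = K * ‖‖u h - x‖ * ‖u h - x‖‖ := by
        rw [Real.norm_eq_abs, abs_of_nonneg (by positivity)]; ring

/-- Second-order sufficiency for 2-stage MPRK schemes (cf. Theorem 5.6 of
Izgin–Ketcheson–Meister): if ρ_{2ν} = yⁿ_ν + O(h) and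
σ_μ = yⁿ_μ + h F_μ(yⁿ) + O(h²), then the MPRK scheme is of order at least two.
Stage indices are 0-based: index 1 is the second stage. -/
theorem stmt13 (N : ℕ)
    (p d : Fin N → Fin N → (Fin N → ℝ) → ℝ)
    (hp0 : ∀ m ν y, 0 ≤ p m ν y) (hd0 : ∀ m ν y, 0 ≤ d m ν y)
    (hpC : ∀ m ν, ContDiff ℝ 3 (p m ν)) (hdC : ∀ m ν, ContDiff ℝ 3 (d m ν))
    (hpL : ∀ m ν, ∃ K, LipschitzWith K (p m ν))
    (hdL : ∀ m ν, ∃ K, LipschitzWith K (d m ν))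
    (hcons : ∀ m ν, p m ν = d ν m)
    (hdiagp : ∀ m, p m m = 0) (hdiagd : ∀ m, d m m = 0)
    (a : Fin 2 → Fin 2 → ℝ) (b c : Fin 2 → ℝ)
    (hexp : ∀ i j : Fin 2, i ≤ j → a i j = 0)
    (ha : ∀ i j, 0 ≤ a i j) (hb : ∀ j, 0 ≤ b j)
    (hc : ∀ i, c i = ∑ j, a i j)
    (hord1 : b 0 + b 1 = 1) (hord2 : b 1 * c 1 = 1 / 2)
    (yn : Fin N → ℝ) (hyn : ∀ m, 0 < yn m)
    (F : (Fin N → ℝ) → (Fin N → ℝ))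
    (hF : ∀ y m, F y m = ∑ ν, (p m ν y - d m ν y))
    (ρ : ℝ → Fin 2 → Fin N → ℝ) (σ : ℝ → Fin N → ℝ)
    (Y : ℝ → Fin 2 → Fin N → ℝ) (ynext : ℝ → Fin N → ℝ)
    (hscheme : ∃ h₀ > (0 : ℝ), ∀ h ∈ Set.Ioc (0 : ℝ) h₀,
      (∀ (i : Fin 2) ν, i ≠ 0 → 0 < ρ h i ν) ∧
      (∀ ν, 0 < σ h ν) ∧
      (∀ i m, 0 < Y h i m) ∧ (∀ m, 0 < ynext h m) ∧
      (∀ i m, Y h i m = yn m +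
        h * ∑ j ∈ Finset.univ.filter (fun j => j < i), a i j *
          ∑ ν, (p m ν (Y h j) * Y h i ν / ρ h i ν -
                d m ν (Y h j) * Y h i m / ρ h i m)) ∧
      (∀ m, ynext h m = yn m +
        h * ∑ j, b j *
          ∑ ν, (p m ν (Y h j) * ynext h ν / σ h ν -
                d m ν (Y h j) * ynext h m / σ h m)))
    (hYbdd : ∀ ν, (fun h => Y h 1 ν) =O[𝓝[>] (0 : ℝ)] fun _ => (1 : ℝ))
    (hynextbdd : ∀ m, (fun h => ynext h m) =O[𝓝[>] (0 : ℝ)] fun _ => (1 : ℝ))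
    (hratiobdd : ∀ ν,
      (fun h => Y h 1 ν / ρ h 1 ν) =O[𝓝[>] (0 : ℝ)] fun _ => (1 : ℝ))
    (hρ : ∀ ν, (fun h => ρ h 1 ν - yn ν) =O[𝓝[>] (0 : ℝ)] fun h => h)
    (hσ : ∀ μ, (fun h => σ h μ - (yn μ + h * F yn μ))
      =O[𝓝[>] (0 : ℝ)] fun h => h ^ 2) :
    (fun h => ynext h - (yn + h • F yn + (h ^ 2 / 2) • fderiv ℝ F yn (F yn)))
      =O[𝓝[>] (0 : ℝ)] fun h => h ^ 3 := by
  set l := 𝓝[>] (0 : ℝ) with hldef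
  obtain ⟨h₀, hh₀, hs⟩ := hscheme
  have hmem : Set.Ioc (0 : ℝ) h₀ ∈ l := Ioc_mem_nhdsGT_of_mem ⟨le_refl 0, hh₀⟩
  have hev := Filter.eventually_of_mem hmem hs
  -- basic asymptotic facts about h
  have ht0 : Tendsto (fun h : ℝ => h) l (𝓝 0) := tendsto_id.mono_left nhdsWithin_le_nhds
  have hh1 : (fun h : ℝ => h) =O[l] (fun _ => (1 : ℝ)) := ht0.isBigO_one ℝ
  have hh2 : (fun h : ℝ => h ^ 2) =O[l] (fun h => h) := by
    have := (isBigO_refl (fun h : ℝ => h) l).mul hh1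
    refine this.congr (fun h => by ring) (fun h => mul_one h)
  have ht20 : Tendsto (fun h : ℝ => h ^ 2) l (𝓝 0) := hh2.trans_tendsto ht0
  -- filter identities on Fin 2
  have hfilter0 : Finset.univ.filter (fun j : Fin 2 => j < 0) = ∅ := by decide
  have hfilter1 : Finset.univ.filter (fun j : Fin 2 => j < 1) = {0} := by decide
  have ha11 : a 1 1 = 0 := hexp 1 1 le_rfl
  have hc1 : c 1 = a 1 0 := by rw [hc]; simp [Fin.sum_univ_two, ha11]
  -- stage 0 is yn
  have hY0 : ∀ᶠ h in l, Y h 0 = yn := by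
    filter_upwards [hev] with h hh
    funext m
    have := hh.2.2.2.2.1 0 m
    rw [hfilter0] at this
    simpa using this
  -- ρ tends to yn
  have hρt : ∀ ν, Tendsto (fun h => ρ h 1 ν) l (𝓝 (yn ν)) := by
    intro ν
    have h0 : Tendsto (fun h => ρ h 1 ν - yn ν) l (𝓝 0) := (hρ ν).trans_tendsto ht0
    simpa using h0.add_const (yn ν)
  -- the stage-2 equation in subtracted form
  have hYeq1 : ∀ᶠ h in l, ∀ m, Y h 1 m - yn m =
      h * (a 1 0 * ∑ ν, (p m ν yn * Y h 1 ν / ρ h 1 ν - d m ν yn * Y h 1 m / ρ h 1 m)) := by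
    filter_upwards [hev, hY0] with h hh h0
    intro m
    have := hh.2.2.2.2.1 1 m
    rw [hfilter1, Finset.sum_singleton, h0] at this
    linarith
  -- the stage sum is O(1)
  have hS1 : ∀ m, (fun h => a 1 0 * ∑ ν, (p m ν yn * Y h 1 ν / ρ h 1 ν
      - d m ν yn * Y h 1 m / ρ h 1 m)) =O[l] (fun _ => (1 : ℝ)) := by
    intro m
    refine IsBigO.const_mul_left ?_ _
    refine IsBigO.fun_sum (fun ν _ => ?_)
    have t1 : (fun h => p m ν yn * Y h 1 ν / ρ h 1 ν) =O[l] (fun _ => (1 : ℝ)) := by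
      have := (hratiobdd ν).const_mul_left (p m ν yn)
      refine this.congr_left (fun h => by rw [mul_div_assoc])
    have t2 : (fun h => d m ν yn * Y h 1 m / ρ h 1 m) =O[l] (fun _ => (1 : ℝ)) := by
      have := (hratiobdd m).const_mul_left (d m ν yn)
      refine this.congr_left (fun h => by rw [mul_div_assoc])
    simpa using t1.sub t2
  -- first order stage estimate
  have hY1O : ∀ m, (fun h => Y h 1 m - yn m) =O[l] (fun h => h) := by
    intro m
    have h1 : (fun h => h * (a 1 0 * ∑ ν, (p m ν yn * Y h 1 ν / ρ h 1 ν
        - d m ν yn * Y h 1 m / ρ h 1 m))) =O[l] (fun h => h) :=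
      ((isBigO_refl (fun h : ℝ => h) l).mul (hS1 m)).congr_right (fun h => mul_one h)
    refine h1.congr' ?_ EventuallyEq.rfl
    filter_upwards [hYeq1] with h hh using (hh m).symm
  have hY1pi : (fun h => Y h 1 - yn) =O[l] (fun h => h) :=
    isBigO_pi.2 (fun m => by simpa using hY1O m)
  have hY1t : Tendsto (fun h => Y h 1) l (𝓝 yn) := by
    have h0 : Tendsto (fun h => Y h 1 - yn) l (𝓝 0) := hY1pi.trans_tendsto ht0
    simpa using h0.add_const yn
  -- stage ratio minus 1 is O(h)
  have hsν : ∀ ν, (fun h => Y h 1 ν / ρ h 1 ν - 1) =O[l] (fun h => h) := by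
    intro ν
    refine helper_ratio (ne_of_gt (hyn ν)) (hρt ν) ?_
    have : (fun h => Y h 1 ν - ρ h 1 ν)
        = fun h => (Y h 1 ν - yn ν) - (ρ h 1 ν - yn ν) := funext fun h => by ring
    rw [this]; exact (hY1O ν).sub (hρ ν)
  -- second order stage estimate
  have hY1O2 : ∀ m, (fun h => Y h 1 m - yn m - h * (c 1 * F yn m)) =O[l] (fun h => h ^ 2) := by
    intro m
    have heq : ∀ᶠ h in l, Y h 1 m - yn m - h * (c 1 * F yn m) =
        h * (a 1 0 * ∑ ν, (p m ν yn * (Y h 1 ν / ρ h 1 ν - 1)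
          - d m ν yn * (Y h 1 m / ρ h 1 m - 1))) := by
      filter_upwards [hYeq1] with h hh
      rw [hh m, hc1, hF yn m, ← mul_sub, ← mul_sub, ← Finset.sum_sub_distrib]
      exact congrArg _ (congrArg _ (Finset.sum_congr rfl fun ν _ => by ring))
    have hS2 : (fun h => a 1 0 * ∑ ν, (p m ν yn * (Y h 1 ν / ρ h 1 ν - 1)
        - d m ν yn * (Y h 1 m / ρ h 1 m - 1))) =O[l] (fun h => h) := by
      refine IsBigO.const_mul_left ?_ _
      refine IsBigO.fun_sum (fun ν _ => ?_)
      exact ((hsν ν).const_mul_left (p m ν yn)).sub ((hsν m).const_mul_left (d m ν yn))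
    have h1 : (fun h => h * (a 1 0 * ∑ ν, (p m ν yn * (Y h 1 ν / ρ h 1 ν - 1)
        - d m ν yn * (Y h 1 m / ρ h 1 m - 1)))) =O[l] (fun h => h ^ 2) :=
      ((isBigO_refl (fun h : ℝ => h) l).mul hS2).congr_right (fun h => by ring)
    refine h1.congr' ?_ EventuallyEq.rfl
    filter_upwards [heq] with h hh using hh.symm
  have hY1pi2 : (fun h => Y h 1 - yn - (h * c 1) • F yn) =O[l] (fun h => h ^ 2) := by
    refine isBigO_pi.2 (fun m => ?_)
    have := hY1O2 m
    refine this.congr_left (fun h => ?_)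
    simp [mul_assoc]
  -- σ facts
  have hσt : ∀ ν, Tendsto (fun h => σ h ν) l (𝓝 (yn ν)) := by
    intro ν
    have h0 : Tendsto (fun h => σ h ν - (yn ν + h * F yn ν)) l (𝓝 0) :=
      (hσ ν).trans_tendsto ht20
    have h1 : Tendsto (fun h => h * F yn ν) l (𝓝 0) := by
      simpa using ht0.mul_const (F yn ν)
    have h2 := (h0.add h1).add_const (yn ν)
    rw [zero_add, zero_add] at h2
    exact h2.congr (fun h => by ring)
  have hσO1 : ∀ ν, (fun h => σ h ν - yn ν) =O[l] (fun h => h) := by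
    intro ν
    have : (fun h => σ h ν - yn ν)
        = fun h => (σ h ν - (yn ν + h * F yn ν)) + h * F yn ν := funext fun h => by ring
    rw [this]
    refine IsBigO.add ((hσ ν).trans hh2) ?_
    exact ((isBigO_refl (fun h : ℝ => h) l).const_mul_left (F yn ν)).congr_left
      (fun h => by ring)
  -- update ratios are O(1)
  have hr1 : ∀ ν, (fun h => ynext h ν / σ h ν) =O[l] (fun _ => (1 : ℝ)) := by
    intro ν
    have hinv : (fun h => (σ h ν)⁻¹) =O[l] (fun _ => (1 : ℝ)) :=
      ((hσt ν).inv₀ (ne_of_gt (hyn ν))).isBigO_one ℝ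
    have := (hynextbdd ν).mul hinv
    refine this.congr (fun h => (div_eq_mul_inv _ _).symm) (fun h => mul_one _)
  -- the update equation in subtracted form
  have hupdeq : ∀ᶠ h in l, ∀ m, ynext h m - yn m =
      h * (b 0 * ∑ ν, (p m ν yn * ynext h ν / σ h ν - d m ν yn * ynext h m / σ h m)
         + b 1 * ∑ ν, (p m ν (Y h 1) * ynext h ν / σ h ν
              - d m ν (Y h 1) * ynext h m / σ h m)) := by
    filter_upwards [hev, hY0] with h hh h0
    intro m
    have := hh.2.2.2.2.2 m
    rw [Fin.sum_univ_two, h0] at this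
    linarith
  -- Lipschitz estimates for p, d along the second stage
  have hpY : ∀ m ν, (fun h => p m ν (Y h 1) - p m ν yn) =O[l] fun h => h := by
    intro m ν; obtain ⟨K, hK⟩ := hpL m ν; exact helper_lip hK yn hY1pi
  have hdY : ∀ m ν, (fun h => d m ν (Y h 1) - d m ν yn) =O[l] fun h => h := by
    intro m ν; obtain ⟨K, hK⟩ := hdL m ν; exact helper_lip hK yn hY1pi
  have hpYO1 : ∀ m ν, (fun h => p m ν (Y h 1)) =O[l] (fun _ => (1 : ℝ)) := by
    intro m ν
    have h1 : (fun h => p m ν (Y h 1))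
        = fun h => (p m ν (Y h 1) - p m ν yn) + p m ν yn := funext fun h => by ring
    rw [h1]
    refine IsBigO.add ((hpY m ν).trans hh1) ?_
    exact (isBigO_const_one ℝ (p m ν yn) l)
  have hdYO1 : ∀ m ν, (fun h => d m ν (Y h 1)) =O[l] (fun _ => (1 : ℝ)) := by
    intro m ν
    have h1 : (fun h => d m ν (Y h 1))
        = fun h => (d m ν (Y h 1) - d m ν yn) + d m ν yn := funext fun h => by ring
    rw [h1]
    refine IsBigO.add ((hdY m ν).trans hh1) ?_
    exact (isBigO_const_one ℝ (d m ν yn) l)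
  -- first order estimate for the update
  have hynO1 : ∀ m, (fun h => ynext h m - yn m) =O[l] (fun h => h) := by
    intro m
    have hT : (fun h => b 0 * ∑ ν, (p m ν yn * ynext h ν / σ h ν
          - d m ν yn * ynext h m / σ h m)
        + b 1 * ∑ ν, (p m ν (Y h 1) * ynext h ν / σ h ν
          - d m ν (Y h 1) * ynext h m / σ h m)) =O[l] (fun _ => (1 : ℝ)) := by
      refine IsBigO.add (IsBigO.const_mul_left ?_ _) (IsBigO.const_mul_left ?_ _)
      · refine IsBigO.fun_sum (fun ν _ => ?_)
        have t1 : (fun h => p m ν yn * ynext h ν / σ h ν) =O[l] (fun _ => (1 : ℝ)) :=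
          ((hr1 ν).const_mul_left (p m ν yn)).congr_left
            (fun h => (mul_div_assoc _ _ _).symm)
        have t2 : (fun h => d m ν yn * ynext h m / σ h m) =O[l] (fun _ => (1 : ℝ)) :=
          ((hr1 m).const_mul_left (d m ν yn)).congr_left
            (fun h => (mul_div_assoc _ _ _).symm)
        simpa using t1.sub t2
      · refine IsBigO.fun_sum (fun ν _ => ?_)
        have t1 : (fun h => p m ν (Y h 1) * ynext h ν / σ h ν) =O[l] (fun _ => (1 : ℝ)) := by
          have := (hpYO1 m ν).mul (hr1 ν)
          simpa [mul_div_assoc] using this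
        have t2 : (fun h => d m ν (Y h 1) * ynext h m / σ h m) =O[l] (fun _ => (1 : ℝ)) := by
          have := (hdYO1 m ν).mul (hr1 m)
          simpa [mul_div_assoc] using this
        simpa using t1.sub t2
    have h1 := ((isBigO_refl (fun h : ℝ => h) l).mul hT).congr_right (fun h => mul_one h)
    refine h1.congr' ?_ EventuallyEq.rfl
    filter_upwards [hupdeq] with h hh using (hh m).symm
  -- update ratio minus 1 is O(h)
  have hrO : ∀ ν, (fun h => ynext h ν / σ h ν - 1) =O[l] (fun h => h) := by
    intro ν
    refine helper_ratio (ne_of_gt (hyn ν)) (hσt ν) ?_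
    have : (fun h => ynext h ν - σ h ν)
        = fun h => (ynext h ν - yn ν) - (σ h ν - yn ν) := funext fun h => by ring
    rw [this]; exact (hynO1 ν).sub (hσO1 ν)
  -- second order estimate for the update
  have hynO2 : ∀ m, (fun h => ynext h m - yn m - h * F yn m) =O[l] (fun h => h ^ 2) := by
    intro m
    have heq2 : ∀ᶠ h in l, ynext h m - yn m - h * F yn m =
        h * (b 0 * ∑ ν, (p m ν yn * (ynext h ν / σ h ν - 1)
              - d m ν yn * (ynext h m / σ h m - 1))
           + b 1 * ∑ ν, ((p m ν (Y h 1) * (ynext h ν / σ h ν) - p m ν yn)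
              - (d m ν (Y h 1) * (ynext h m / σ h m) - d m ν yn))) := by
      filter_upwards [hupdeq] with h hh
      have e1 : ∑ ν, (p m ν yn * ynext h ν / σ h ν - d m ν yn * ynext h m / σ h m)
          = (∑ ν, (p m ν yn * (ynext h ν / σ h ν - 1)
              - d m ν yn * (ynext h m / σ h m - 1))) + F yn m := by
        rw [hF yn m, ← Finset.sum_add_distrib]
        exact Finset.sum_congr rfl fun ν _ => by ring
      have e2 : ∑ ν, (p m ν (Y h 1) * ynext h ν / σ h ν - d m ν (Y h 1) * ynext h m / σ h m)
          = (∑ ν, ((p m ν (Y h 1) * (ynext h ν / σ h ν) - p m ν yn)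
              - (d m ν (Y h 1) * (ynext h m / σ h m) - d m ν yn))) + F yn m := by
        rw [hF yn m, ← Finset.sum_add_distrib]
        refine Finset.sum_congr rfl fun ν _ => by ring
      have hh2 := hh m
      rw [e1, e2] at hh2
      linear_combination hh2 + h * F yn m * hord1
    have hT : (fun h => b 0 * ∑ ν, (p m ν yn * (ynext h ν / σ h ν - 1)
          - d m ν yn * (ynext h m / σ h m - 1))
        + b 1 * ∑ ν, ((p m ν (Y h 1) * (ynext h ν / σ h ν) - p m ν yn)
          - (d m ν (Y h 1) * (ynext h m / σ h m) - d m ν yn))) =O[l] (fun h => h) := by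
      refine IsBigO.add (IsBigO.const_mul_left ?_ _) (IsBigO.const_mul_left ?_ _)
      · refine IsBigO.fun_sum (fun ν _ => ?_)
        exact ((hrO ν).const_mul_left (p m ν yn)).sub ((hrO m).const_mul_left (d m ν yn))
      · refine IsBigO.fun_sum (fun ν _ => ?_)
        have t1 : (fun h => p m ν (Y h 1) * (ynext h ν / σ h ν) - p m ν yn) =O[l]
            (fun h => h) := by
          have u1 : (fun h => p m ν (Y h 1) * (ynext h ν / σ h ν - 1)) =O[l] (fun h => h) :=
            (((hpYO1 m ν).mul (hrO ν)).congr_right (fun h => one_mul h))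
          refine (u1.add (hpY m ν)).congr_left (fun h => by ring)
        have t2 : (fun h => d m ν (Y h 1) * (ynext h m / σ h m) - d m ν yn) =O[l]
            (fun h => h) := by
          have u1 : (fun h => d m ν (Y h 1) * (ynext h m / σ h m - 1)) =O[l] (fun h => h) :=
            (((hdYO1 m ν).mul (hrO m)).congr_right (fun h => one_mul h))
          refine (u1.add (hdY m ν)).congr_left (fun h => by ring)
        exact t1.sub t2
    have h1 := ((isBigO_refl (fun h : ℝ => h) l).mul hT).congr_right
      (fun h => by ring : ∀ h : ℝ, h * h = h ^ 2)
    refine (h1.congr' EventuallyEq.rfl EventuallyEq.rfl).congr' ?_ EventuallyEq.rfl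
    filter_upwards [heq2] with h hh using hh.symm
  -- update ratio minus 1 is O(h²)
  have hrO2 : ∀ ν, (fun h => ynext h ν / σ h ν - 1) =O[l] (fun h => h ^ 2) := by
    intro ν
    refine helper_ratio (ne_of_gt (hyn ν)) (hσt ν) ?_
    have : (fun h => ynext h ν - σ h ν)
        = fun h => (ynext h ν - yn ν - h * F yn ν) - (σ h ν - (yn ν + h * F yn ν)) :=
      funext fun h => by ring
    rw [this]; exact (hynO2 ν).sub (hσ ν)
  -- regularity of F
  have hFmc : ∀ m, ContDiff ℝ 2 (fun y => F y m) := by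
    intro m
    have : (fun y => F y m) = fun y => ∑ ν, (p m ν y - d m ν y) := funext fun y => hF y m
    rw [this]
    exact ContDiff.sum fun ν _ => ((hpC m ν).sub (hdC m ν)).of_le (by norm_num)
  have hFdiffAt : ∀ m, DifferentiableAt ℝ (fun y => F y m) yn := fun m =>
    ((hFmc m).differentiable (by norm_num)).differentiableAt
  -- Taylor expansion of F at the second stage
  have hnn : (fun h => ‖Y h 1 - yn‖ * ‖Y h 1 - yn‖) =O[l] (fun h => h ^ 2) :=
    (hY1pi.norm_left.mul hY1pi.norm_left).congr_right (fun h => (pow_two h).symm)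
  have htay2 : ∀ m, (fun h => F (Y h 1) m - F yn m
      - fderiv ℝ (fun y => F y m) yn (Y h 1 - yn)) =O[l] (fun h => h ^ 2) := fun m =>
    (helper_taylor2 (hFmc m) yn hY1t).trans hnn
  have hlin : ∀ m, (fun h => fderiv ℝ (fun y => F y m) yn (Y h 1 - yn)
      - h * (c 1 * fderiv ℝ (fun y => F y m) yn (F yn))) =O[l] (fun h => h ^ 2) := by
    intro m
    have h1 := ((fderiv ℝ (fun y => F y m) yn).isBigO_comp
      (fun h => Y h 1 - yn - (h * c 1) • F yn) l).trans hY1pi2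
    refine h1.congr_left (fun h => ?_)
    rw [map_sub, map_smul, smul_eq_mul]; ring
  have hFY1 : ∀ m, (fun h => F (Y h 1) m - F yn m
      - h * (c 1 * fderiv ℝ (fun y => F y m) yn (F yn))) =O[l] (fun h => h ^ 2) := fun m =>
    ((htay2 m).add (hlin m)).congr_left (fun h => by ring)
  -- componentwise Jacobian
  have hDFpi : fderiv ℝ F yn = ContinuousLinearMap.pi
      (fun m => fderiv ℝ (fun y => F y m) yn) := fderiv_pi hFdiffAt
  have hDFm : ∀ m, fderiv ℝ F yn (F yn) m = fderiv ℝ (fun y => F y m) yn (F yn) := by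
    intro m; rw [hDFpi]; rfl
  -- final assembly
  refine isBigO_pi.2 (fun m => ?_)
  have heqfin : ∀ᶠ h in l, ynext h m
      - (yn m + h * F yn m + h ^ 2 / 2 * fderiv ℝ F yn (F yn) m) =
      h * (b 0 * ∑ ν, (p m ν yn * (ynext h ν / σ h ν - 1)
            - d m ν yn * (ynext h m / σ h m - 1))
         + b 1 * ∑ ν, (p m ν (Y h 1) * (ynext h ν / σ h ν - 1)
            - d m ν (Y h 1) * (ynext h m / σ h m - 1)))
      + (h * b 1) * (F (Y h 1) m - F yn m
            - h * (c 1 * fderiv ℝ (fun y => F y m) yn (F yn))) := by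
    filter_upwards [hupdeq] with h hh
    rw [hDFm m]
    have e1 : ∑ ν, (p m ν yn * ynext h ν / σ h ν - d m ν yn * ynext h m / σ h m)
        = (∑ ν, (p m ν yn * (ynext h ν / σ h ν - 1)
            - d m ν yn * (ynext h m / σ h m - 1))) + F yn m := by
      rw [hF yn m, ← Finset.sum_add_distrib]
      exact Finset.sum_congr rfl fun ν _ => by ring
    have e2 : ∑ ν, (p m ν (Y h 1) * ynext h ν / σ h ν - d m ν (Y h 1) * ynext h m / σ h m)
        = (∑ ν, (p m ν (Y h 1) * (ynext h ν / σ h ν - 1)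
            - d m ν (Y h 1) * (ynext h m / σ h m - 1))) + F (Y h 1) m := by
      rw [hF (Y h 1) m, ← Finset.sum_add_distrib]
      exact Finset.sum_congr rfl fun ν _ => by ring
    have hh2 := hh m
    rw [e1, e2] at hh2
    linear_combination hh2 + h * F yn m * hord1
      + h ^ 2 * fderiv ℝ (fun y => F y m) yn (F yn) * hord2
  have hE0 : (fun h => ∑ ν, (p m ν yn * (ynext h ν / σ h ν - 1)
      - d m ν yn * (ynext h m / σ h m - 1))) =O[l] (fun h => h ^ 2) := by
    refine IsBigO.fun_sum (fun ν _ => ?_)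
    exact ((hrO2 ν).const_mul_left (p m ν yn)).sub ((hrO2 m).const_mul_left (d m ν yn))
  have hE1 : (fun h => ∑ ν, (p m ν (Y h 1) * (ynext h ν / σ h ν - 1)
      - d m ν (Y h 1) * (ynext h m / σ h m - 1))) =O[l] (fun h => h ^ 2) := by
    refine IsBigO.fun_sum (fun ν _ => ?_)
    have t1 := ((hpYO1 m ν).mul (hrO2 ν)).congr_right (fun h => one_mul _)
    have t2 := ((hdYO1 m ν).mul (hrO2 m)).congr_right (fun h => one_mul _)
    exact t1.sub t2
  have term1 : (fun h => h * (b 0 * ∑ ν, (p m ν yn * (ynext h ν / σ h ν - 1)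
        - d m ν yn * (ynext h m / σ h m - 1))
      + b 1 * ∑ ν, (p m ν (Y h 1) * (ynext h ν / σ h ν - 1)
        - d m ν (Y h 1) * (ynext h m / σ h m - 1)))) =O[l] (fun h => h ^ 3) :=
    ((isBigO_refl (fun h : ℝ => h) l).mul
      ((hE0.const_mul_left (b 0)).add (hE1.const_mul_left (b 1)))).congr_right
      (fun h => by ring)
  have term2 : (fun h => (h * b 1) * (F (Y h 1) m - F yn m
      - h * (c 1 * fderiv ℝ (fun y => F y m) yn (F yn)))) =O[l] (fun h => h ^ 3) := by
    have h1 := ((isBigO_refl (fun h : ℝ => h) l).mul (hFY1 m)).congr_right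
      (fun h => by ring : ∀ h : ℝ, h * h ^ 2 = h ^ 3)
    exact (h1.const_mul_left (b 1)).congr_left (fun h => by ring)
  have final := term1.add term2
  refine final.congr' ?_ EventuallyEq.rfl
  filter_upwards [heqfin] with h hh
  have : (ynext h - (yn + h • F yn + (h ^ 2 / 2) • fderiv ℝ F yn (F yn))) m
      = ynext h m - (yn m + h * F yn m + h ^ 2 / 2 * fderiv ℝ F yn (F yn) m) := by
    simp [Pi.sub_apply, Pi.add_apply, Pi.smul_apply, smul_eq_mul]
  rw [this, hh]
end

section
/- Let F^{[1]},…,F^{[N]} : ℝ^D → ℝ^D be Lipschitz continuous maps of class C³, fix y^n ∈ ℝ^D, and consider an s-stage NSARK step with coefficient functions a_{ij}^{[ν]}(h), b_j^{[ν]}(h) satisfying a_{ij}^{[ν]}(h) = O(1) and b_j^{[ν]}(h) = O(1) as h → 0⁺. Suppose that for each h in some interval (0,h₀] the stage equations possess a solution Y^{(1)}(h),…,Y^{(s)}(h). Then, as h → 0⁺: Y^{(i)}(h) = y^n + h Σ_ν ( Σ_j a_{ij}^{[ν]}(h) ) F^{[ν]}(y^n) + h² Σ_{μ,ν} ( Σ_{j,k}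 a_{ij}^{[μ]}(h) a_{jk}^{[ν]}(h) ) DF^{[μ]}(y^n) F^{[ν]}(y^n) + O(h³) for each i, and y^{n+1}(h) = y^n + h Σ_ν ( Σ_j b_j^{[ν]}(h) ) F^{[ν]}(y^n) + h² Σ_{μ,ν} ( Σ_{i,j} b_i^{[μ]}(h) a_{ij}^{[ν]}(h) ) DF^{[μ]}(y^n) F^{[ν]}(y^n) + O(h³), where DF^{[μ]} denotes the Jacobian of F^{[μ]}. -/
open Topology Asymptotics Filter Finset

private lemma taylor2 {E F' : Type*} [NormedAddCommGroup E] [NormedSpace ℝ E]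
    [NormedAddCommGroup F'] [NormedSpace ℝ F'] {f : E → F'} (hf : ContDiff ℝ 3 f) (x : E) :
    ∃ ε > (0:ℝ), ∃ C : ℝ, ∀ y : E, ‖y - x‖ ≤ ε →
      ‖f y - f x - fderiv ℝ f x (y - x)‖ ≤ C * ‖y - x‖ ^ 2 := by
  have h2 : ContDiffAt ℝ 2 f x := (hf.of_le (by norm_num)).contDiffAt
  have h1 : ContDiffAt ℝ 1 (fderiv ℝ f) x := h2.fderiv_right (by norm_num)
  obtain ⟨K, t, ht, hK⟩ := h1.exists_lipschitzOnWith
  obtain ⟨ε, εpos, hball⟩ := Metric.mem_nhds_iff.1 ht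
  refine ⟨ε/2, by positivity, K, fun y hy => ?_⟩
  set S : Set E := Metric.closedBall x ‖y - x‖ with hS
  have hsub : S ⊆ t := by
    intro z hz
    apply hball
    have : dist z x ≤ ‖y - x‖ := hz
    exact Metric.mem_ball.2 (lt_of_le_of_lt (this.trans hy) (by linarith))
  have hxS : x ∈ S := Metric.mem_closedBall_self (norm_nonneg _)
  have hyS : y ∈ S := by simp [hS, Metric.mem_closedBall, dist_eq_norm]
  have hder : ∀ z ∈ S, HasFDerivWithinAt f (fderiv ℝ f z) S z := fun z _ =>
    ((hf.differentiable (by norm_num)).differentiableAt.hasFDerivAt).hasFDerivWithinAt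
  have hbound : ∀ z ∈ S, ‖fderiv ℝ f z - fderiv ℝ f x‖ ≤ K * ‖y - x‖ := by
    intro z hz
    have h := hK.dist_le_mul z (hsub hz) x (hsub hxS)
    rw [dist_eq_norm] at h
    refine h.trans ?_
    have : dist z x ≤ ‖y - x‖ := hz
    exact mul_le_mul_of_nonneg_left this K.coe_nonneg
  have := (convex_closedBall x ‖y - x‖).norm_image_sub_le_of_norm_hasFDerivWithin_le'
    hder hbound hxS hyS
  calc ‖f y - f x - (fderiv ℝ f x) (y - x)‖ ≤ K * ‖y - x‖ * ‖y - x‖ := this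
    _ = K * ‖y - x‖ ^ 2 := by ring

private lemma quad_comm {s N : ℕ} {M : Type*} [AddCommMonoid M]
    (f : Fin s → Fin N → Fin s → Fin N → M) :
    ∑ j, ∑ ν, ∑ k, ∑ ρ, f j ν k ρ = ∑ ν, ∑ ρ, ∑ j, ∑ k, f j ν k ρ := by
  rw [Finset.sum_comm]
  refine Finset.sum_congr rfl fun ν _ => ?_
  calc ∑ j, ∑ k, ∑ ρ, f j ν k ρ = ∑ j, ∑ ρ, ∑ k, f j ν k ρ :=
        Finset.sum_congr rfl fun j _ => Finset.sum_comm
    _ = ∑ ρ, ∑ j, ∑ k, f j ν k ρ := Finset.sum_comm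

private lemma aux_main {D N s : ℕ} (F : Fin N → (Fin D → ℝ) → (Fin D → ℝ))
    (yn : Fin D → ℝ) (A : ℝ → Fin s → Fin s → Fin N → ℝ)
    (r : ℝ → Fin s → Fin N → ℝ)
    (Y : ℝ → Fin s → (Fin D → ℝ)) (z : ℝ → (Fin D → ℝ))
    (hA : ∀ i j ν, (fun h => A h i j ν) =O[𝓝[>] (0:ℝ)] fun _ => (1:ℝ))
    (hr : ∀ j ν, (fun h => r h j ν) =O[𝓝[>] (0:ℝ)] fun _ => (1:ℝ))
    (hE1 : ∀ j, (fun h => Y h j - yn - h • ∑ k, ∑ ρ, A h j k ρ • F ρ yn)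
        =O[𝓝[>] (0:ℝ)] fun h => h ^ 2)
    (hR : ∀ ν j, (fun h => F ν (Y h j) - F ν yn - fderiv ℝ (F ν) yn (Y h j - yn))
        =O[𝓝[>] (0:ℝ)] fun h => h ^ 2)
    (heq : ∀ᶠ h in 𝓝[>] (0:ℝ), z h = yn + h • ∑ j, ∑ ν, r h j ν • F ν (Y h j)) :
    (fun h => z h - (yn + h • ∑ ν, (∑ j, r h j ν) • F ν yn +
      (h ^ 2) • ∑ μ, ∑ ν, (∑ j, ∑ k, r h j μ * A h j k ν) • fderiv ℝ (F μ) yn (F ν yn)))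
      =O[𝓝[>] (0:ℝ)] fun h => h ^ 3 := by
  set l := 𝓝[>] (0:ℝ)
  set Dm : Fin N → ((Fin D → ℝ) →L[ℝ] (Fin D → ℝ)) := fun ν => fderiv ℝ (F ν) yn with hDm
  -- the T1 term
  set T1 : ℝ → (Fin D → ℝ) := fun h => h • ∑ j, ∑ ν, r h j ν •
      (Dm ν (Y h j - yn - h • ∑ k, ∑ ρ, A h j k ρ • F ρ yn) +
        (F ν (Y h j) - F ν yn - Dm ν (Y h j - yn))) with hT1def
  have hDE : ∀ j ν, (fun h => Dm ν (Y h j - yn - h • ∑ k, ∑ ρ, A h j k ρ • F ρ yn))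
      =O[l] fun h => h ^ 2 := fun j ν =>
    (((Dm ν).isBoundedLinearMap).isBigO_comp l).trans (hE1 j)
  have hinner : ∀ j ν, (fun h => r h j ν •
      (Dm ν (Y h j - yn - h • ∑ k, ∑ ρ, A h j k ρ • F ρ yn) +
        (F ν (Y h j) - F ν yn - Dm ν (Y h j - yn)))) =O[l] fun h => h ^ 2 := by
    intro j ν
    have := (hr j ν).smul ((hDE j ν).add (hR ν j))
    simpa only [one_smul] using this
  have hT1O : T1 =O[l] fun h => h ^ 3 := by
    have hsum : (fun h => ∑ j, ∑ ν, r h j ν •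
        (Dm ν (Y h j - yn - h • ∑ k, ∑ ρ, A h j k ρ • F ρ yn) +
          (F ν (Y h j) - F ν yn - Dm ν (Y h j - yn)))) =O[l] fun h => h ^ 2 :=
      IsBigO.fun_sum fun j _ => IsBigO.fun_sum fun ν _ => hinner j ν
    have := (isBigO_refl (fun h : ℝ => h) l).smul hsum
    refine this.congr (fun h => rfl) fun h => ?_
    simp [smul_eq_mul]; ring
  have hT0O : (fun h => z h - yn - h • ∑ j, ∑ ν, r h j ν • F ν (Y h j)) =O[l] fun h => h ^ 3 := by
    have h0 : (fun h => z h - yn - h • ∑ j, ∑ ν, r h j ν • F ν (Y h j)) =ᶠ[l] (fun _ => 0) :=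
      heq.mono fun h hh => by simp only [hh]; abel
    exact h0.trans_isBigO (isBigO_zero _ _)
  have hid : ∀ h : ℝ, z h - (yn + h • ∑ ν, (∑ j, r h j ν) • F ν yn +
      (h ^ 2) • ∑ μ, ∑ ν, (∑ j, ∑ k, r h j μ * A h j k ν) • Dm μ (F ν yn))
      = (z h - yn - h • ∑ j, ∑ ν, r h j ν • F ν (Y h j)) + T1 h := by
    intro h
    have inner_eq : ∀ j ν, (Dm ν (Y h j - yn - h • ∑ k, ∑ ρ, A h j k ρ • F ρ yn) +
        (F ν (Y h j) - F ν yn - Dm ν (Y h j - yn)))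
        = F ν (Y h j) - F ν yn - h • ∑ k, ∑ ρ, A h j k ρ • Dm ν (F ρ yn) := by
      intro j ν
      simp only [map_sub, map_smul, map_sum, ContinuousLinearMap.map_smul]
      abel
    have e1 : (∑ ν, (∑ j, r h j ν) • F ν yn) = ∑ j, ∑ ν, r h j ν • F ν yn := by
      calc ∑ ν, (∑ j, r h j ν) • F ν yn = ∑ ν, ∑ j, r h j ν • F ν yn :=
            Finset.sum_congr rfl fun ν _ => Finset.sum_smul
        _ = ∑ j, ∑ ν, r h j ν • F ν yn := Finset.sum_comm
    have e2 : (∑ μ, ∑ ν, (∑ j, ∑ k, r h j μ * A h j k ν) • Dm μ (F ν yn))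
        = ∑ j, ∑ ν, r h j ν • ∑ k, ∑ ρ, A h j k ρ • Dm ν (F ρ yn) := by
      calc ∑ μ, ∑ ν, (∑ j, ∑ k, r h j μ * A h j k ν) • Dm μ (F ν yn)
          = ∑ μ, ∑ ν, ∑ j, ∑ k, (r h j μ * A h j k ν) • Dm μ (F ν yn) := by
            refine Finset.sum_congr rfl fun μ _ => Finset.sum_congr rfl fun ν _ => ?_
            rw [Finset.sum_smul]
            exact Finset.sum_congr rfl fun j _ => Finset.sum_smul
        _ = ∑ j, ∑ ν, ∑ k, ∑ ρ, (r h j ν * A h j k ρ) • Dm ν (F ρ yn) :=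
            (quad_comm fun j ν k ρ => (r h j ν * A h j k ρ) • Dm ν (F ρ yn)).symm
        _ = ∑ j, ∑ ν, r h j ν • ∑ k, ∑ ρ, A h j k ρ • Dm ν (F ρ yn) := by
            refine Finset.sum_congr rfl fun j _ => Finset.sum_congr rfl fun ν _ => ?_
            rw [Finset.smul_sum]
            refine Finset.sum_congr rfl fun k _ => ?_
            rw [Finset.smul_sum]
            exact Finset.sum_congr rfl fun ρ _ => (mul_smul _ _ _)
    rw [hT1def]
    simp only [inner_eq, e1, e2]
    have e3 : (∑ j, ∑ ν, r h j ν •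
        (F ν (Y h j) - F ν yn - h • ∑ k, ∑ ρ, A h j k ρ • Dm ν (F ρ yn)))
        = (∑ j, ∑ ν, r h j ν • F ν (Y h j)) - (∑ j, ∑ ν, r h j ν • F ν yn)
          - h • ∑ j, ∑ ν, r h j ν • ∑ k, ∑ ρ, A h j k ρ • Dm ν (F ρ yn) := by
      simp only [smul_sub, Finset.sum_sub_distrib, Finset.smul_sum]
      congr 1
      refine Finset.sum_congr rfl fun j _ => Finset.sum_congr rfl fun ν _ => ?_
      exact Finset.sum_congr rfl fun k _ => Finset.sum_congr rfl fun ρ _ => smul_comm _ _ _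
    rw [e3]
    rw [pow_two, mul_smul]
    simp only [smul_sub]
    abel
  exact (hT0O.add hT1O).congr (fun h => (hid h).symm) (fun h => rfl)


/-- Second-order Taylor expansion of the stages and update of an NSARK method
(Theorem 2.1 of Izgin–Ketcheson–Meister with k = 2). -/
theorem stmt17 (D N s : ℕ)
    (F : Fin N → (Fin D → ℝ) → (Fin D → ℝ))
    (hFL : ∀ ν, ∃ K, LipschitzWith K (F ν))
    (hFC : ∀ ν, ContDiff ℝ 3 (F ν))
    (yn : Fin D → ℝ)
    (A : ℝ → Fin s → Fin s → Fin N → ℝ) (B : ℝ → Fin s → Fin N → ℝ)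
    (hA : ∀ i j ν, (fun h => A h i j ν) =O[𝓝[>] (0 : ℝ)] fun _ => (1 : ℝ))
    (hB : ∀ j ν, (fun h => B h j ν) =O[𝓝[>] (0 : ℝ)] fun _ => (1 : ℝ))
    (Y : ℝ → Fin s → (Fin D → ℝ)) (ynext : ℝ → (Fin D → ℝ))
    (hstep : ∃ h₀ > (0 : ℝ), ∀ h ∈ Set.Ioc (0 : ℝ) h₀,
      (∀ i, Y h i = yn + h • ∑ j, ∑ ν, A h i j ν • F ν (Y h j)) ∧
      ynext h = yn + h • ∑ j, ∑ ν, B h j ν • F ν (Y h j)) :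
    (∀ i, (fun h => Y h i - (yn + h • ∑ ν, (∑ j, A h i j ν) • F ν yn +
        (h ^ 2) • ∑ μ, ∑ ν, (∑ j, ∑ k, A h i j μ * A h j k ν) •
          fderiv ℝ (F μ) yn (F ν yn)))
      =O[𝓝[>] (0 : ℝ)] fun h => h ^ 3) ∧
    ((fun h => ynext h - (yn + h • ∑ ν, (∑ j, B h j ν) • F ν yn +
        (h ^ 2) • ∑ μ, ∑ ν, (∑ i, ∑ j, B h i μ * A h i j ν) •
          fderiv ℝ (F μ) yn (F ν yn)))
      =O[𝓝[>] (0 : ℝ)] fun h => h ^ 3) := by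
  obtain ⟨h₀, h₀pos, hstep'⟩ := hstep
  have hmem : ∀ᶠ h in 𝓝[>] (0:ℝ), h ∈ Set.Ioc (0:ℝ) h₀ :=
    Ioc_mem_nhdsGT_of_mem ⟨le_refl 0, h₀pos⟩
  have hstage : ∀ᶠ h in 𝓝[>] (0:ℝ), ∀ i, Y h i = yn + h • ∑ j, ∑ ν, A h i j ν • F ν (Y h j) :=
    hmem.mono fun h hh => (hstep' h hh).1
  have hupd : ∀ᶠ h in 𝓝[>] (0:ℝ), ynext h = yn + h • ∑ j, ∑ ν, B h j ν • F ν (Y h j) :=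
    hmem.mono fun h hh => (hstep' h hh).2
  -- uniform coefficient bound
  have hA' : ∀ i j ν, ∃ c : ℝ, ∀ᶠ h in 𝓝[>] (0:ℝ), |A h i j ν| ≤ c := by
    intro i j ν
    obtain ⟨c, hc⟩ := (hA i j ν).bound
    exact ⟨c, hc.mono fun h hh => by simpa using hh⟩
  choose cA hcA using hA'
  set CA : ℝ := ∑ i : Fin s, ∑ j : Fin s, ∑ ν : Fin N, max (cA i j ν) 0 with hCAdef
  have hCA0 : 0 ≤ CA := Finset.sum_nonneg fun i _ => Finset.sum_nonneg fun j _ =>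
    Finset.sum_nonneg fun ν _ => le_max_right _ _
  have hcle : ∀ i j ν, cA i j ν ≤ CA := by
    intro i j ν
    calc cA i j ν ≤ max (cA i j ν) 0 := le_max_left _ _
      _ ≤ ∑ ν' : Fin N, max (cA i j ν') 0 :=
          Finset.single_le_sum (f := fun ν' => max (cA i j ν') 0)
            (fun _ _ => le_max_right _ _) (Finset.mem_univ ν)
      _ ≤ ∑ j' : Fin s, ∑ ν' : Fin N, max (cA i j' ν') 0 :=
          Finset.single_le_sum (f := fun j' => ∑ ν' : Fin N, max (cA i j' ν') 0)
            (fun _ _ => Finset.sum_nonneg fun _ _ => le_max_right _ _) (Finset.mem_univ j)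
      _ ≤ CA := Finset.single_le_sum
            (f := fun i' => ∑ j' : Fin s, ∑ ν' : Fin N, max (cA i' j' ν') 0)
            (fun _ _ => Finset.sum_nonneg fun _ _ => Finset.sum_nonneg fun _ _ => le_max_right _ _)
            (Finset.mem_univ i)
  have hAbd : ∀ᶠ h in 𝓝[>] (0:ℝ), ∀ i j ν, |A h i j ν| ≤ CA :=
    eventually_all.2 fun i => eventually_all.2 fun j => eventually_all.2 fun ν =>
      (hcA i j ν).mono fun h hh => hh.trans (hcle i j ν)
  -- Lipschitz
  choose K hK using hFL
  set KC : ℝ := ∑ ν : Fin N, (K ν : ℝ) with hKCdef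
  have hKC0 : 0 ≤ KC := Finset.sum_nonneg fun ν _ => (K ν).coe_nonneg
  have hLip : ∀ ν a b, ‖F ν a - F ν b‖ ≤ KC * ‖a - b‖ := by
    intro ν a b
    have h1 := (hK ν).dist_le_mul a b
    rw [dist_eq_norm, dist_eq_norm] at h1
    exact h1.trans (mul_le_mul_of_nonneg_right
      (Finset.single_le_sum (fun ν' _ => (K ν').coe_nonneg) (Finset.mem_univ ν)) (norm_nonneg _))
  set FS : ℝ := ∑ ν : Fin N, ‖F ν yn‖ with hFSdef
  have hFS0 : 0 ≤ FS := Finset.sum_nonneg fun _ _ => norm_nonneg _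
  have hFb : ∀ ν (v : Fin D → ℝ), ‖F ν v‖ ≤ FS + KC * ‖v - yn‖ := by
    intro ν v
    have e : F ν v = F ν yn + (F ν v - F ν yn) := by abel
    calc ‖F ν v‖ = ‖F ν yn + (F ν v - F ν yn)‖ := by rw [← e]
      _ ≤ ‖F ν yn‖ + ‖F ν v - F ν yn‖ := norm_add_le _ _
      _ ≤ FS + KC * ‖v - yn‖ := add_le_add
          (Finset.single_le_sum (f := fun ν' => ‖F ν' yn‖)
            (fun _ _ => norm_nonneg _) (Finset.mem_univ ν)) (hLip ν v yn)
  -- bootstrap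
  set m : ℝ → ℝ := fun h => ∑ j : Fin s, ‖Y h j - yn‖ with hmdef
  have hm0 : ∀ h, 0 ≤ m h := fun h => Finset.sum_nonneg fun _ _ => norm_nonneg _
  set P : ℝ := (s:ℝ) * ((s*N)*(CA*FS)) with hPdef
  set Q : ℝ := (s:ℝ) * ((N:ℝ)*CA*KC) with hQdef
  have hQ0 : 0 ≤ Q := by
    rw [hQdef]
    exact mul_nonneg (Nat.cast_nonneg _)
      (mul_nonneg (mul_nonneg (Nat.cast_nonneg _) hCA0) hKC0)
  have hP0 : 0 ≤ P := by
    rw [hPdef]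
    exact mul_nonneg (Nat.cast_nonneg _)
      (mul_nonneg (mul_nonneg (Nat.cast_nonneg _) (Nat.cast_nonneg _)) (mul_nonneg hCA0 hFS0))
  have hrec : ∀ᶠ h in 𝓝[>] (0:ℝ), m h ≤ h * P + (h * Q) * m h := by
    filter_upwards [hmem, hstage, hAbd] with h hh hst hab
    have hsum : ∑ j : Fin s, ∑ ν : Fin N, CA * (FS + KC * ‖Y h j - yn‖)
        = (s*N)*(CA*FS) + ((N:ℝ)*CA*KC) * m h := by
      have e : ∀ j : Fin s, ∑ ν : Fin N, CA * (FS + KC * ‖Y h j - yn‖)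
          = (N:ℝ)*(CA*FS) + ((N:ℝ)*CA*KC) * ‖Y h j - yn‖ := by
        intro j
        rw [Finset.sum_const, Finset.card_univ, Fintype.card_fin, nsmul_eq_mul]
        ring
      rw [Finset.sum_congr rfl fun j _ => e j, Finset.sum_add_distrib, Finset.sum_const,
        Finset.card_univ, Fintype.card_fin, nsmul_eq_mul, ← Finset.mul_sum]
      simp only [hmdef]
      ring
    have hstagebd : ∀ i : Fin s, ‖Y h i - yn‖ ≤ h * ((s*N)*(CA*FS) + ((N:ℝ)*CA*KC) * m h) := by
      intro i
      have e : Y h i - yn = h • ∑ j, ∑ ν, A h i j ν • F ν (Y h j) := by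
        rw [hst i, add_sub_cancel_left]
      rw [e, norm_smul, Real.norm_eq_abs, abs_of_pos hh.1]
      refine mul_le_mul_of_nonneg_left ?_ hh.1.le
      refine le_trans ?_ (le_of_eq hsum)
      refine (norm_sum_le _ _).trans ?_
      refine Finset.sum_le_sum fun j _ => ?_
      refine (norm_sum_le _ _).trans ?_
      refine Finset.sum_le_sum fun ν _ => ?_
      rw [norm_smul, Real.norm_eq_abs]
      exact mul_le_mul (hab i j ν) (hFb ν (Y h j)) (norm_nonneg _) hCA0
    calc m h ≤ ∑ _i : Fin s, h * ((s*N)*(CA*FS) + ((N:ℝ)*CA*KC) * m h) :=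
          Finset.sum_le_sum fun i _ => hstagebd i
      _ = (s:ℝ) * (h * ((s*N)*(CA*FS) + ((N:ℝ)*CA*KC) * m h)) := by
          rw [Finset.sum_const, Finset.card_univ, Fintype.card_fin, nsmul_eq_mul]
      _ = h * P + (h * Q) * m h := by rw [hPdef, hQdef]; ring
  have hsm : ∀ᶠ h in 𝓝[>] (0:ℝ), h * Q ≤ 1/2 := by
    have hmem2 : ∀ᶠ h in 𝓝[>] (0:ℝ), h ∈ Set.Ioc (0:ℝ) (1/(2*(Q+1))) :=
      Ioc_mem_nhdsGT_of_mem ⟨le_refl 0, by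
        apply div_pos one_pos
        nlinarith [hQ0]⟩
    filter_upwards [hmem2] with h hh
    have h1 : h ≤ 1/(2*(Q+1)) := hh.2
    have h4 : (0:ℝ) < Q + 1 := by linarith
    have h2 : h * (Q+1) ≤ (1/(2*(Q+1))) * (Q+1) := mul_le_mul_of_nonneg_right h1 (by linarith)
    have h3 : (1/(2*(Q+1))) * (Q+1) = 1/2 := by field_simp
    nlinarith [hh.1]
  have hmO : m =O[𝓝[>] (0:ℝ)] fun h => h := by
    rw [isBigO_iff]
    refine ⟨2*P, ?_⟩
    filter_upwards [hrec, hsm, hmem] with h h1 h2 h3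
    rw [Real.norm_eq_abs, Real.norm_eq_abs, abs_of_nonneg (hm0 h), abs_of_pos h3.1]
    nlinarith [hm0 h, h3.1, mul_le_mul_of_nonneg_right h2 (hm0 h)]
  have hY1 : ∀ j, (fun h => Y h j - yn) =O[𝓝[>] (0:ℝ)] fun h => h := by
    intro j
    refine (IsBigO.of_bound 1 (Filter.Eventually.of_forall fun h => ?_)).trans hmO
    rw [one_mul, Real.norm_eq_abs, abs_of_nonneg (hm0 h)]
    exact Finset.single_le_sum (fun (k : Fin s) _ => norm_nonneg (Y h k - yn)) (Finset.mem_univ j)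
  have hFdiff : ∀ ν k, (fun h => F ν (Y h k) - F ν yn) =O[𝓝[>] (0:ℝ)] fun h => h := by
    intro ν k
    refine (IsBigO.of_bound KC (Filter.Eventually.of_forall fun h => ?_)).trans (hY1 k)
    exact hLip ν (Y h k) yn
  have hE1 : ∀ j, (fun h => Y h j - yn - h • ∑ k, ∑ ρ, A h j k ρ • F ρ yn)
      =O[𝓝[>] (0:ℝ)] fun h => h ^ 2 := by
    intro j
    have hid : (fun h => Y h j - yn - h • ∑ k, ∑ ρ, A h j k ρ • F ρ yn) =ᶠ[𝓝[>] (0:ℝ)]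
        (fun h => h • ∑ k, ∑ ρ, A h j k ρ • (F ρ (Y h k) - F ρ yn)) := by
      filter_upwards [hstage] with h hst
      rw [hst j]
      simp only [smul_sub, Finset.sum_sub_distrib]
      abel
    have hrhs : (fun h => h • ∑ k, ∑ ρ, A h j k ρ • (F ρ (Y h k) - F ρ yn))
        =O[𝓝[>] (0:ℝ)] fun h => h ^ 2 := by
      have hsum : (fun h => ∑ k, ∑ ρ, A h j k ρ • (F ρ (Y h k) - F ρ yn))
          =O[𝓝[>] (0:ℝ)] fun h => h :=
        IsBigO.fun_sum fun k _ => IsBigO.fun_sum fun ρ _ => by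
          simpa only [one_smul] using (hA j k ρ).smul (hFdiff ρ k)
      have := (isBigO_refl (fun h : ℝ => h) (𝓝[>] (0:ℝ))).smul hsum
      refine this.congr (fun h => rfl) fun h => ?_
      simp [smul_eq_mul]; ring
    exact hrhs.congr' hid.symm EventuallyEq.rfl
  have hR : ∀ ν j, (fun h => F ν (Y h j) - F ν yn - fderiv ℝ (F ν) yn (Y h j - yn))
      =O[𝓝[>] (0:ℝ)] fun h => h ^ 2 := by
    intro ν j
    obtain ⟨ε, εpos, C, hC⟩ := taylor2 (hFC ν) yn
    have htend : Tendsto (fun h => Y h j - yn) (𝓝[>] (0:ℝ)) (𝓝 0) :=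
      (hY1 j).trans_tendsto (tendsto_id.mono_right nhdsWithin_le_nhds)
    have hev : ∀ᶠ h in 𝓝[>] (0:ℝ), ‖Y h j - yn‖ ≤ ε := by
      have hball : Metric.closedBall (0 : Fin D → ℝ) ε ∈ 𝓝 (0 : Fin D → ℝ) :=
        Metric.closedBall_mem_nhds _ εpos
      filter_upwards [htend.eventually_mem hball] with h hh
      simpa [Metric.mem_closedBall, dist_zero_right] using hh
    have h1 : (fun h => F ν (Y h j) - F ν yn - fderiv ℝ (F ν) yn (Y h j - yn))
        =O[𝓝[>] (0:ℝ)] fun h => ‖Y h j - yn‖ ^ 2 := by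
      rw [isBigO_iff]
      refine ⟨C, ?_⟩
      filter_upwards [hev] with h hh
      calc ‖F ν (Y h j) - F ν yn - fderiv ℝ (F ν) yn (Y h j - yn)‖
          ≤ C * ‖Y h j - yn‖ ^ 2 := hC (Y h j) hh
        _ = C * ‖‖Y h j - yn‖ ^ 2‖ := by rw [Real.norm_of_nonneg (by positivity)]
    have h2 : (fun h => ‖Y h j - yn‖ ^ 2) =O[𝓝[>] (0:ℝ)] fun h => h ^ 2 :=
      (hY1 j).norm_left.pow 2
    exact h1.trans h2
  refine ⟨fun i => ?_, ?_⟩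
  · exact aux_main F yn A (fun h j ν => A h i j ν) Y (fun h => Y h i) hA
      (fun j ν => hA i j ν) hE1 hR (hstage.mono fun h hh => hh i)
  · exact aux_main F yn A B Y ynext hA hB hE1 hR hupd
end

section
/- Let F^{[1]},…,F^{[N]} : ℝ^D → ℝ^D be Lipschitz continuous maps of class C², fix y^n ∈ ℝ^D, and consider an s-stage NSARK step with coefficient functions a_{ij}^{[ν]}(h), b_j^{[ν]}(h) satisfying a_{ij}^{[ν]}(h) = O(1) and b_j^{[ν]}(h) = O(1) as h → 0⁺, such that for each h in some interval (0,h₀] the stage equations possess a solution. If Σ_{j=1}^s b_j^{[ν]}(h) = 1 + O(h) as h → 0⁺ for every ν = 1,…,N, then for every function u : ℝ → ℝ^D with u(0) = y^n and u'(t) = Σ_{ν=1}^N F^{[ν]}(u(t)) for all t, one has ‖y^{n+1}(h) − u(h)‖ = O(h²) as h → 0⁺; that is, the NSARK method is of order at least 1. -/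
open Topology Asymptotics Filter Finset

/-- First-order sufficiency for NSARK methods (Corollary 2.2 of
Izgin–Ketcheson–Meister, p = 1, sufficiency direction): if
Σ_j b_j^{[ν]}(h) = 1 + O(h) for all ν, the NSARK method is of order at
least 1. -/
theorem stmt18 (D N s : ℕ)
    (F : Fin N → (Fin D → ℝ) → (Fin D → ℝ))
    (hFL : ∀ ν, ∃ K, LipschitzWith K (F ν))
    (hFC : ∀ ν, ContDiff ℝ 2 (F ν))
    (yn : Fin D → ℝ)
    (A : ℝ → Fin s → Fin s → Fin N → ℝ) (B : ℝ → Fin s → Fin N → ℝ)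
    (hA : ∀ i j ν, (fun h => A h i j ν) =O[𝓝[>] (0 : ℝ)] fun _ => (1 : ℝ))
    (hB : ∀ j ν, (fun h => B h j ν) =O[𝓝[>] (0 : ℝ)] fun _ => (1 : ℝ))
    (Y : ℝ → Fin s → (Fin D → ℝ)) (ynext : ℝ → (Fin D → ℝ))
    (hstep : ∃ h₀ > (0 : ℝ), ∀ h ∈ Set.Ioc (0 : ℝ) h₀,
      (∀ i, Y h i = yn + h • ∑ j, ∑ ν, A h i j ν • F ν (Y h j)) ∧
      ynext h = yn + h • ∑ j, ∑ ν, B h j ν • F ν (Y h j))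
    (hcond : ∀ ν, (fun h => (∑ j, B h j ν) - 1) =O[𝓝[>] (0 : ℝ)] fun h => h) :
    ∀ u : ℝ → (Fin D → ℝ), u 0 = yn →
      (∀ t, HasDerivAt u (∑ ν, F ν (u t)) t) →
      (fun h => ynext h - u h) =O[𝓝[>] (0 : ℝ)] fun h => h ^ 2 := by
  intro u hu0 hu'
  classical
  obtain ⟨h₀, h₀pos, hstep⟩ := hstep
  -- Lipschitz constant
  set KG : ℝ := ∑ ν, ((hFL ν).choose : ℝ) with hKGdef
  have hKG0 : 0 ≤ KG := Finset.sum_nonneg fun ν _ => (hFL ν).choose.coe_nonneg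
  have hLip1 : ∀ ν x y, ‖F ν x - F ν y‖ ≤ ((hFL ν).choose : ℝ) * ‖x - y‖ := by
    intro ν x y
    have h1 := ((hFL ν).choose_spec).dist_le_mul x y
    rwa [dist_eq_norm, dist_eq_norm] at h1
  have hLip : ∀ ν x y, ‖F ν x - F ν y‖ ≤ KG * ‖x - y‖ := by
    intro ν x y
    refine (hLip1 ν x y).trans (mul_le_mul_of_nonneg_right ?_ (norm_nonneg _))
    exact Finset.single_le_sum (fun ν _ => (hFL ν).choose.coe_nonneg) (Finset.mem_univ ν)
  have hGlip : ∀ x y, ‖(∑ ν, F ν x) - ∑ ν, F ν y‖ ≤ KG * ‖x - y‖ := by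
    intro x y
    rw [← Finset.sum_sub_distrib]
    calc ‖∑ ν, (F ν x - F ν y)‖ ≤ ∑ ν, ‖F ν x - F ν y‖ := norm_sum_le _ _
      _ ≤ ∑ ν, ((hFL ν).choose : ℝ) * ‖x - y‖ := Finset.sum_le_sum fun ν _ => hLip1 ν x y
      _ = KG * ‖x - y‖ := by rw [← Finset.sum_mul]
  -- continuity and boundedness of u on [0,1]
  have hucont : Continuous u := continuous_iff_continuousAt.mpr fun t => (hu' t).continuousAt
  obtain ⟨M, hM⟩ := (isCompact_Icc (a := (0:ℝ)) (b := 1)).exists_bound_of_continuousOn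
    ((hucont.sub continuous_const).continuousOn (f := fun t => u t - u 0))
  set M' : ℝ := ‖∑ ν, F ν yn‖ + KG * M with hM'def
  have hM0 : 0 ≤ M := le_trans (by simp) (hM 0 ⟨le_refl _, zero_le_one⟩)
  have hM'0 : 0 ≤ M' := add_nonneg (norm_nonneg _) (mul_nonneg hKG0 hM0)
  have hderb : ∀ t ∈ Set.Icc (0:ℝ) 1, ‖∑ ν, F ν (u t)‖ ≤ M' := by
    intro t ht
    calc ‖∑ ν, F ν (u t)‖ = ‖(∑ ν, F ν yn) + ((∑ ν, F ν (u t)) - ∑ ν, F ν yn)‖ := by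
          congr 1; abel
      _ ≤ ‖∑ ν, F ν yn‖ + ‖(∑ ν, F ν (u t)) - ∑ ν, F ν yn‖ := norm_add_le _ _
      _ ≤ ‖∑ ν, F ν yn‖ + KG * ‖u t - yn‖ := by gcongr; exact hGlip _ _
      _ ≤ ‖∑ ν, F ν yn‖ + KG * M := by gcongr; rw [← hu0]; exact hM t ht
  have hudisp : ∀ t ∈ Set.Icc (0:ℝ) 1, ‖u t - u 0‖ ≤ M' * t := by
    intro t ht
    have := Convex.norm_image_sub_le_of_norm_hasDerivWithin_le
      (f := u) (f' := fun t => ∑ ν, F ν (u t)) (s := Set.Icc (0:ℝ) 1)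
      (fun x _ => (hu' x).hasDerivWithinAt) hderb (convex_Icc _ _)
      (Set.left_mem_Icc.mpr zero_le_one) ht
    simpa [Real.norm_eq_abs, abs_of_nonneg ht.1] using this
  -- Taylor bound for u
  have hTaylor : ∀ h ∈ Set.Ioc (0:ℝ) 1,
      ‖u h - u 0 - h • (∑ ν, F ν yn)‖ ≤ (KG * M') * h ^ 2 := by
    intro h hh
    have hw : ∀ x ∈ Set.Icc (0:ℝ) h,
        HasDerivWithinAt (fun t => u t - u 0 - t • (∑ ν, F ν yn))
          ((∑ ν, F ν (u x)) - ∑ ν, F ν yn) (Set.Icc 0 h) x := by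
      intro x _
      have h1 : HasDerivAt (fun t : ℝ => t • (∑ ν, F ν yn)) (∑ ν, F ν yn) x := by
        simpa using (hasDerivAt_id x).smul_const (∑ ν, F ν yn)
      exact (((hu' x).sub_const (u 0)).sub h1).hasDerivWithinAt
    have hbound : ∀ x ∈ Set.Icc (0:ℝ) h,
        ‖(∑ ν, F ν (u x)) - ∑ ν, F ν yn‖ ≤ KG * (M' * h) := by
      intro x hx
      have hx1 : x ∈ Set.Icc (0:ℝ) 1 := ⟨hx.1, hx.2.trans hh.2⟩
      calc ‖(∑ ν, F ν (u x)) - ∑ ν, F ν yn‖ ≤ KG * ‖u x - yn‖ := hGlip _ _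
        _ ≤ KG * (M' * x) := by rw [← hu0]; exact mul_le_mul_of_nonneg_left (hudisp x hx1) hKG0
        _ ≤ KG * (M' * h) := by gcongr; exact hx.2
    have key := Convex.norm_image_sub_le_of_norm_hasDerivWithin_le hw hbound (convex_Icc _ _)
      (Set.left_mem_Icc.mpr hh.1.le) (Set.right_mem_Icc.mpr hh.1.le)
    have e0 : (u 0 - u 0 - (0:ℝ) • (∑ ν, F ν yn)) = 0 := by simp
    rw [e0, sub_zero] at key
    calc ‖u h - u 0 - h • (∑ ν, F ν yn)‖ ≤ KG * (M' * h) * ‖h - 0‖ := key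
      _ = (KG * M') * h ^ 2 := by
          rw [sub_zero, Real.norm_eq_abs, abs_of_nonneg hh.1.le]; ring
  -- coefficient bounds
  choose cA hcA using fun i j ν => (hA i j ν).bound
  choose cB hcB using fun j ν => (hB j ν).bound
  choose cb hcb using fun ν => (hcond ν).bound
  set cA' : Fin s → Fin s → Fin N → ℝ := fun i j ν => max (cA i j ν) 0 with hcA'def
  set cB' : Fin s → Fin N → ℝ := fun j ν => max (cB j ν) 0 with hcB'def
  set cb' : Fin N → ℝ := fun ν => max (cb ν) 0 with hcb'def
  set CA : ℝ := ∑ i, ∑ j, ∑ ν, cA' i j ν with hCAdef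
  set CB : ℝ := ∑ ν, ∑ j, cB' j ν with hCBdef
  have hcA'0 : ∀ i j ν, 0 ≤ cA' i j ν := fun i j ν => le_max_right _ _
  have hcB'0 : ∀ j ν, 0 ≤ cB' j ν := fun j ν => le_max_right _ _
  have hcb'0 : ∀ ν, 0 ≤ cb' ν := fun ν => le_max_right _ _
  have hCA0 : 0 ≤ CA := Finset.sum_nonneg fun i _ => Finset.sum_nonneg fun j _ =>
    Finset.sum_nonneg fun ν _ => hcA'0 i j ν
  have hCAi : ∀ i, (∑ j, ∑ ν, cA' i j ν) ≤ CA :=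
    fun i => Finset.single_le_sum (f := fun i => ∑ j, ∑ ν, cA' i j ν)
      (fun i _ => Finset.sum_nonneg fun j _ => Finset.sum_nonneg fun ν _ => hcA'0 i j ν)
      (Finset.mem_univ i)
  have hAev : ∀ᶠ h in 𝓝[>](0:ℝ), ∀ i j ν, |A h i j ν| ≤ cA' i j ν := by
    rw [Filter.eventually_all]; intro i
    rw [Filter.eventually_all]; intro j
    rw [Filter.eventually_all]; intro ν
    filter_upwards [hcA i j ν] with h hh
    calc |A h i j ν| = ‖A h i j ν‖ := rfl
      _ ≤ cA i j ν * ‖(1:ℝ)‖ := hh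
      _ ≤ cA' i j ν := by simp [hcA'def]
  have hBev : ∀ᶠ h in 𝓝[>](0:ℝ), ∀ j ν, |B h j ν| ≤ cB' j ν := by
    rw [Filter.eventually_all]; intro j
    rw [Filter.eventually_all]; intro ν
    filter_upwards [hcB j ν] with h hh
    calc |B h j ν| = ‖B h j ν‖ := rfl
      _ ≤ cB j ν * ‖(1:ℝ)‖ := hh
      _ ≤ cB' j ν := by simp [hcB'def]
  have hbev : ∀ᶠ h in 𝓝[>](0:ℝ), ∀ ν, |(∑ j, B h j ν) - 1| ≤ cb' ν * |h| := by
    rw [Filter.eventually_all]; intro ν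
    filter_upwards [hcb ν] with h hh
    calc |(∑ j, B h j ν) - 1| ≤ cb ν * ‖h‖ := hh
      _ ≤ cb' ν * |h| := by
          rw [Real.norm_eq_abs]
          exact mul_le_mul_of_nonneg_right (le_max_left _ _) (abs_nonneg _)
  -- small h window
  set Fm : ℝ := ∑ ν, ‖F ν yn‖ with hFmdef
  have hFm0 : 0 ≤ Fm := Finset.sum_nonneg fun ν _ => norm_nonneg _
  set X : ℝ := (s : ℝ) * CA * KG + 1 with hXdef
  have hX1 : (1:ℝ) ≤ X := le_add_of_nonneg_left
    (mul_nonneg (mul_nonneg (Nat.cast_nonneg s) hCA0) hKG0)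
  have hXpos : (0:ℝ) < X := lt_of_lt_of_le one_pos hX1
  set hmin : ℝ := min h₀ (min 1 (1 / (2 * X))) with hmindef
  have hminpos : 0 < hmin := by
    refine lt_min h₀pos (lt_min one_pos ?_)
    positivity
  have hIoc : ∀ᶠ h in 𝓝[>](0:ℝ), h ∈ Set.Ioc (0:ℝ) hmin :=
    Ioc_mem_nhdsGT_of_mem ⟨le_refl _, hminpos⟩
  -- stage bound constant
  set CY : ℝ := 2 * (s : ℝ) * CA * Fm with hCYdef
  -- final constant
  set C3 : ℝ := KG * CY * CB + ∑ ν, cb' ν * ‖F ν yn‖ with hC3def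
  rw [isBigO_iff]
  refine ⟨C3 + KG * M', ?_⟩
  filter_upwards [hAev, hBev, hbev, hIoc] with h hAh hBh hbh hh
  have hpos : 0 < h := hh.1
  have hh₀ : h ≤ h₀ := hh.2.trans (min_le_left _ _)
  have hh1 : h ≤ 1 := hh.2.trans ((min_le_right _ _).trans (min_le_left _ _))
  have hhX : h ≤ 1 / (2 * X) := hh.2.trans ((min_le_right _ _).trans (min_le_right _ _))
  obtain ⟨hYeq, hyeq⟩ := hstep h ⟨hpos, hh₀⟩
  -- stage bound
  set T : ℝ := ∑ i, ‖Y h i - yn‖ with hTdef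
  have hT0 : 0 ≤ T := Finset.sum_nonneg fun i _ => norm_nonneg _
  have hFb : ∀ ν j, ‖F ν (Y h j)‖ ≤ Fm + KG * T := by
    intro ν j
    calc ‖F ν (Y h j)‖ = ‖F ν yn + (F ν (Y h j) - F ν yn)‖ := by congr 1; abel
      _ ≤ ‖F ν yn‖ + ‖F ν (Y h j) - F ν yn‖ := norm_add_le _ _
      _ ≤ Fm + KG * ‖Y h j - yn‖ := by
          gcongr
          · exact Finset.single_le_sum (f := fun ν => ‖F ν yn‖)
              (fun ν _ => norm_nonneg _) (Finset.mem_univ ν)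
          · exact hLip _ _ _
      _ ≤ Fm + KG * T := by
          gcongr
          exact Finset.single_le_sum (f := fun j => ‖Y h j - yn‖)
            (fun j _ => norm_nonneg _) (Finset.mem_univ j)
  have hstage : ∀ i, ‖Y h i - yn‖ ≤ h * CA * (Fm + KG * T) := by
    intro i
    have e : Y h i - yn = h • ∑ j, ∑ ν, A h i j ν • F ν (Y h j) := by
      rw [hYeq i]; abel
    have hFK0 : 0 ≤ Fm + KG * T := add_nonneg hFm0 (mul_nonneg hKG0 hT0)
    calc ‖Y h i - yn‖ = |h| * ‖∑ j, ∑ ν, A h i j ν • F ν (Y h j)‖ := by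
          rw [e, norm_smul, Real.norm_eq_abs]
      _ ≤ h * (∑ j, ∑ ν, cA' i j ν * (Fm + KG * T)) := by
          rw [abs_of_nonneg hpos.le]
          refine mul_le_mul_of_nonneg_left ?_ hpos.le
          refine (norm_sum_le _ _).trans (Finset.sum_le_sum fun j _ => ?_)
          refine (norm_sum_le _ _).trans (Finset.sum_le_sum fun ν _ => ?_)
          rw [norm_smul, Real.norm_eq_abs]
          exact mul_le_mul (hAh i j ν) (hFb ν j) (norm_nonneg _) (hcA'0 i j ν)
      _ = h * ((∑ j, ∑ ν, cA' i j ν) * (Fm + KG * T)) := by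
          simp only [Finset.sum_mul]
      _ ≤ h * (CA * (Fm + KG * T)) := by
          refine mul_le_mul_of_nonneg_left (mul_le_mul_of_nonneg_right (hCAi i) hFK0) hpos.le
      _ = h * CA * (Fm + KG * T) := by ring
  have hTb : T ≤ (s : ℝ) * (h * CA * (Fm + KG * T)) := by
    calc T ≤ ∑ _i : Fin s, h * CA * (Fm + KG * T) :=
          Finset.sum_le_sum fun i _ => hstage i
      _ = (s : ℝ) * (h * CA * (Fm + KG * T)) := by
          rw [Finset.sum_const, Finset.card_univ, Fintype.card_fin, nsmul_eq_mul]
  have hsX : (s:ℝ) * CA * KG ≤ X := by rw [hXdef]; linarith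
  have hhalf : h * ((s:ℝ) * CA * KG) ≤ 1 / 2 := by
    calc h * ((s:ℝ) * CA * KG) ≤ h * X := mul_le_mul_of_nonneg_left hsX hpos.le
      _ ≤ (1 / (2 * X)) * X := mul_le_mul_of_nonneg_right hhX hXpos.le
      _ = 1 / 2 := by field_simp
  have hTY : T ≤ CY * h := by
    have expand : (s : ℝ) * (h * CA * (Fm + KG * T))
        = (s:ℝ) * h * CA * Fm + (h * ((s:ℝ) * CA * KG)) * T := by ring
    have h1 : T ≤ (s:ℝ) * h * CA * Fm + (h * ((s:ℝ) * CA * KG)) * T := by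
      rw [← expand]; exact hTb
    have h2 : (h * ((s:ℝ) * CA * KG)) * T ≤ (1/2) * T :=
      mul_le_mul_of_nonneg_right hhalf hT0
    have h3 : T ≤ (s:ℝ) * h * CA * Fm + (1/2) * T := by linarith
    have e2 : CY * h = 2 * ((s:ℝ) * h * CA * Fm) := by rw [hCYdef]; ring
    rw [e2]; linarith
  have hYb : ∀ j, ‖Y h j - yn‖ ≤ CY * h := fun j =>
    (Finset.single_le_sum (f := fun j => ‖Y h j - yn‖)
      (fun j _ => norm_nonneg _) (Finset.mem_univ j)).trans hTY
  -- bound on the update defect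
  set S : Fin D → ℝ := ∑ j, ∑ ν, B h j ν • F ν (Y h j) with hSdef
  have hSb : ‖S - ∑ ν, F ν yn‖ ≤ C3 * h := by
    have e : S - ∑ ν, F ν yn
        = ∑ ν, ((∑ j, B h j ν • (F ν (Y h j) - F ν yn)) + ((∑ j, B h j ν) - 1) • F ν yn) := by
      rw [hSdef, Finset.sum_comm]
      rw [← Finset.sum_sub_distrib]
      refine Finset.sum_congr rfl fun ν _ => ?_
      rw [sub_smul, one_smul, Finset.sum_smul]
      simp only [smul_sub, Finset.sum_sub_distrib]
      abel
    rw [e]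
    calc ‖∑ ν, ((∑ j, B h j ν • (F ν (Y h j) - F ν yn)) + ((∑ j, B h j ν) - 1) • F ν yn)‖
        ≤ ∑ ν, ((∑ j, cB' j ν * (KG * (CY * h))) + cb' ν * h * ‖F ν yn‖) := by
          refine (norm_sum_le _ _).trans (Finset.sum_le_sum fun ν _ => ?_)
          refine (norm_add_le _ _).trans ?_
          gcongr
          · refine (norm_sum_le _ _).trans (Finset.sum_le_sum fun j _ => ?_)
            rw [norm_smul, Real.norm_eq_abs]
            refine mul_le_mul (hBh j ν) ?_ (norm_nonneg _) (hcB'0 j ν)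
            exact (hLip ν _ _).trans (mul_le_mul_of_nonneg_left (hYb j) hKG0)
          · rw [norm_smul, Real.norm_eq_abs]
            refine mul_le_mul_of_nonneg_right ?_ (norm_nonneg _)
            calc |(∑ j, B h j ν) - 1| ≤ cb' ν * |h| := hbh ν
              _ = cb' ν * h := by rw [abs_of_nonneg hpos.le]
      _ = ∑ ν, (((∑ j, cB' j ν) * (KG * CY) + cb' ν * ‖F ν yn‖) * h) := by
          refine Finset.sum_congr rfl fun ν _ => ?_
          rw [← Finset.sum_mul]
          ring
      _ = (∑ ν, ((∑ j, cB' j ν) * (KG * CY) + cb' ν * ‖F ν yn‖)) * h :=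
          (Finset.sum_mul _ _ _).symm
      _ = (KG * CY * (∑ ν, ∑ j, cB' j ν) + ∑ ν, cb' ν * ‖F ν yn‖) * h := by
          rw [Finset.sum_add_distrib, ← Finset.sum_mul]
          ring
      _ = C3 * h := by rw [hC3def, hCBdef]
  -- put everything together
  have hfinal : ‖ynext h - u h‖ ≤ (C3 + KG * M') * h ^ 2 := by
    have e : ynext h - u h = h • (S - ∑ ν, F ν yn) - (u h - u 0 - h • (∑ ν, F ν yn)) := by
      rw [hyeq, hu0, smul_sub]
      abel
    rw [e]
    calc ‖h • (S - ∑ ν, F ν yn) - (u h - u 0 - h • (∑ ν, F ν yn))‖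
        ≤ ‖h • (S - ∑ ν, F ν yn)‖ + ‖u h - u 0 - h • (∑ ν, F ν yn)‖ := norm_sub_le _ _
      _ ≤ h * (C3 * h) + (KG * M') * h ^ 2 := by
          gcongr
          · rw [norm_smul, Real.norm_eq_abs, abs_of_nonneg hpos.le]
            exact mul_le_mul_of_nonneg_left hSb hpos.le
          · exact hTaylor h ⟨hpos, hh1⟩
      _ = (C3 + KG * M') * h ^ 2 := by ring
  calc ‖ynext h - u h‖ ≤ (C3 + KG * M') * h ^ 2 := hfinal
    _ = (C3 + KG * M') * ‖h ^ 2‖ := by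
        rw [Real.norm_eq_abs, abs_of_nonneg (sq_nonneg h)]
end
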